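/- arXiv:1902.04372 — 11 statements merged into one kernel-verified Lean document; each statement's English description precedes it below -/
import Mathlib

section
/- Let q be a prime power, λ a positive divisor of q-1, m = 2h with h ≥ 2, and n = (q^m-1)/λ. If λ is odd, then for an integer i with 1 ≤ i ≤ (q^{h+1}-1)/λ, the congruence i·q^h ≡ i (mod n) holds if and only if (q^h + 1) divides i. -/
/-- For λ odd, i·q^h ≡ i (mod n) iff (q^h + 1) ∣ i. -/
theorem stmt_2 (q lam h n i : ℕ) (hq : ∃ p k : ℕ, p.Prime ∧ 0 < k ∧ q = p ^ k)
    (hodd : Odd lam) (hlam : 0 < lam) (hdvd : lam ∣ q - 1) (hh : 2 ≤ h)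
    (hn : n = (q ^ (2 * h) - 1) / lam)
    (hi1 : 1 ≤ i) (hi2 : i ≤ (q ^ (h + 1) - 1) / lam) :
    i * q ^ h ≡ i [MOD n] ↔ (q ^ h + 1) ∣ i := by
  have hq2 : 2 ≤ q := by
    obtain ⟨p, k, hp, hk, rfl⟩ := hq
    calc 2 ≤ p := hp.two_le
    _ ≤ p ^ k := Nat.le_self_pow hk.ne' p
  set a := q ^ h with ha
  have ha2 : 2 ≤ a := le_trans hq2 (Nat.le_self_pow (by omega) q)
  have hdvd' : lam ∣ a - 1 := hdvd.trans (by simpa using Nat.sub_dvd_pow_sub_pow q 1 h)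
  obtain ⟨d, hd⟩ := hdvd'
  have hd0 : 0 < d := by
    rcases Nat.eq_zero_or_pos d with h0 | h0
    · subst h0; omega
    · exact h0
  -- n = d * (a + 1)
  have hpow : q ^ (2 * h) = a ^ 2 := by rw [ha, ← pow_mul, mul_comm]
  have hsq : a ^ 2 - 1 = (a - 1) * (a + 1) := by
    have h1 : a ^ 2 = (a - 1) * (a + 1) + 1 := by
      obtain ⟨b, hb⟩ : ∃ b, a = b + 1 := ⟨a - 1, by omega⟩
      rw [hb]
      simp only [Nat.add_sub_cancel]
      ring
    omega
  have hn' : n = d * (a + 1) := by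
    rw [hn, hpow, hsq, hd, mul_assoc, Nat.mul_div_cancel_left _ hlam]
  -- rewrite the congruence as a divisibility
  have hle : i ≤ i * a := Nat.le_mul_of_pos_right i (by omega)
  have hmod : (i * a ≡ i [MOD n]) ↔ n ∣ i * a - i :=
    ⟨fun hc => (Nat.modEq_iff_dvd' hle).mp hc.symm,
     fun hc => ((Nat.modEq_iff_dvd' hle).mpr hc).symm⟩
  have hsub : i * a - i = d * (i * lam) := by
    have ha' : a = lam * d + 1 := by omega
    rw [ha', Nat.mul_add, Nat.mul_one, Nat.add_sub_cancel]
    ring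
  -- coprimality of a+1 and lam
  have cop : Nat.Coprime (a + 1) lam := by
    set g := Nat.gcd (a + 1) lam with hg
    have hg1 : g ∣ a + 1 := Nat.gcd_dvd_left _ _
    have hg2 : g ∣ lam := Nat.gcd_dvd_right _ _
    have hga : g ∣ a - 1 := hg2.trans ⟨d, hd⟩
    have hgd2 : g ∣ 2 := by
      have := Nat.dvd_sub hg1 hga
      have he : (a + 1) - (a - 1) = 2 := by omega
      rwa [he] at this
    rcases (Nat.dvd_prime Nat.prime_two).mp hgd2 with h1 | h2
    · exact h1
    · exfalso
      have : 2 ∣ lam := h2 ▸ hg2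
      rw [Nat.odd_iff] at hodd
      omega
  constructor
  · intro hc
    have hdd : n ∣ i * a - i := hmod.mp hc
    rw [hn', hsub] at hdd
    have h1 : (a + 1) ∣ i * lam := (Nat.mul_dvd_mul_iff_left hd0).mp hdd
    exact cop.dvd_of_dvd_mul_right h1
  · intro hc
    apply hmod.mpr
    rw [hn', hsub]
    exact Nat.mul_dvd_mul_left d (Dvd.dvd.mul_right hc lam)
end

section
/- Let q be a prime power, λ an even positive divisor of q-1 (so q is odd), m = 2h with h ≥ 2, and n = (q^m-1)/λ. For an integer i with 1 ≤ i ≤ (q^{h+1}-1)/λ, the congruence i·q^h ≡ i (mod n) holds if and only if (q^h+1)/2 divides i. -/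
/-- For λ even (so q odd), i·q^h ≡ i (mod n) iff (q^h + 1)/2 ∣ i. -/
theorem stmt_3 (q lam h n i : ℕ) (hq : ∃ p k : ℕ, p.Prime ∧ 0 < k ∧ q = p ^ k)
    (hqodd : Odd q) (heven : Even lam) (hlam : 0 < lam) (hdvd : lam ∣ q - 1) (hh : 2 ≤ h)
    (hn : n = (q ^ (2 * h) - 1) / lam)
    (hi1 : 1 ≤ i) (hi2 : i ≤ (q ^ (h + 1) - 1) / lam) :
    i * q ^ h ≡ i [MOD n] ↔ ((q ^ h + 1) / 2) ∣ i := by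
  obtain ⟨p, k, hp, hk, hqe⟩ := hq
  have hq2 : 2 ≤ q := by
    calc 2 ≤ p := hp.two_le
      _ ≤ p ^ k := Nat.le_self_pow (by omega) p
      _ = q := hqe.symm
  obtain ⟨t0, ht0⟩ := hqodd
  have hq3 : 3 ≤ q := by omega
  set Q := q ^ h with hQdef
  have hQ2 : 2 ≤ Q := Nat.one_lt_pow (by omega) (by omega)
  have hQodd : Odd Q := Odd.pow ⟨t0, ht0⟩
  obtain ⟨c, hc⟩ : ∃ c, Q + 1 = 2 * c := by
    obtain ⟨t, ht⟩ := hQodd; exact ⟨t + 1, by omega⟩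
  obtain ⟨l, hl⟩ := heven
  have hlam2 : lam = 2 * l := by omega
  have hdQ : q - 1 ∣ Q - 1 := by
    simpa using Nat.sub_dvd_pow_sub_pow q 1 h
  obtain ⟨s, hsv⟩ := hdvd.trans hdQ
  have key : q ^ (2 * h) - 1 = (Q - 1) * (Q + 1) := by
    have h1 : q ^ (2 * h) = Q * Q := by rw [two_mul, pow_add]
    have h2 : Q * Q = (Q - 1) * (Q + 1) + 1 := by
      obtain ⟨u, hu⟩ : ∃ u, Q = u + 1 := ⟨Q - 1, by omega⟩
      rw [hu]
      have : (u + 1 - 1) * (u + 1 + 1) = u * u + 2 * u := by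
        simp; ring
      rw [this]; ring
    omega
  have hnlam : n * lam = (Q - 1) * (Q + 1) := by
    rw [hn, key]
    exact Nat.div_mul_cancel ⟨s * (Q + 1), by rw [hsv]; ring⟩
  have hcop : Nat.Coprime c l := by
    have h1 : Nat.gcd c l ∣ c := Nat.gcd_dvd_left c l
    have h2 : Nat.gcd c l ∣ c - 1 := by
      have hq1 : Q - 1 = 2 * (l * s) := by rw [hsv, hlam2]; ring
      exact (Nat.gcd_dvd_right c l).trans ⟨s, by omega⟩
    have h3 : Nat.gcd c l ∣ 1 := by
      have h4 := Nat.dvd_sub h1 h2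
      have hc1 : c - (c - 1) = 1 := by omega
      rwa [hc1] at h4
    exact Nat.dvd_one.mp h3
  have hle : i ≤ i * Q := Nat.le_mul_of_pos_right i (by omega)
  have hsub : i * Q - i = i * (Q - 1) := by
    rw [Nat.mul_sub]; simp
  have hcQ : (Q + 1) / 2 = c := by omega
  rw [hcQ]
  constructor
  · intro hmod
    have hdvd1 : n ∣ i * (Q - 1) := by
      have := (Nat.modEq_iff_dvd' hle).mp hmod.symm
      rwa [hsub] at this
    have hdvd3 : (Q - 1) * (Q + 1) ∣ (Q - 1) * (i * lam) := by
      have h5 := mul_dvd_mul_right hdvd1 lam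
      rw [hnlam] at h5
      have : i * (Q - 1) * lam = (Q - 1) * (i * lam) := by ring
      rwa [this] at h5
    have hdvd4 : Q + 1 ∣ i * lam :=
      (Nat.mul_dvd_mul_iff_left (show 0 < Q - 1 by omega)).mp hdvd3
    have hdvd5 : c ∣ i * l := by
      have : 2 * c ∣ 2 * (i * l) := by
        rw [← hc]
        have : 2 * (i * l) = i * lam := by rw [hlam2]; ring
        rwa [this]
      exact (Nat.mul_dvd_mul_iff_left (by norm_num : (0:ℕ) < 2)).mp this
    exact hcop.dvd_of_dvd_mul_right hdvd5
  · rintro ⟨j, hj⟩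
    have hdvd1 : n ∣ i * (Q - 1) := by
      have h6 : n * lam ∣ i * (Q - 1) * lam := by
        rw [hnlam]
        exact ⟨j * l, by rw [hj, hlam2, hc]; ring⟩
      exact (Nat.mul_dvd_mul_iff_right hlam).mp h6
    have := (Nat.modEq_iff_dvd' hle).mpr (hsub ▸ hdvd1)
    exact this.symm
end

section
/- Let q be a prime power, λ a positive divisor of q-1, m = 2h ≥ 4, and n = (q^m-1)/λ. For every integer i with 1 ≤ i ≤ (q^{h+1}-1)/λ, the size of the q-cyclotomic coset of i modulo n (i.e., the least positive integer ℓ such that i·q^ℓ ≡ i (mod n)) is either h or m. -/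
private lemma stmt_4_aux (a b : ℕ) (ha : 2 ≤ a) (hb : 2 ≤ b) :
    (a - 1) * (b - 1) < a * b - 1 := by
  obtain ⟨a', rfl⟩ : ∃ a', a = a' + 1 := ⟨a - 1, by omega⟩
  obtain ⟨b', rfl⟩ : ∃ b', b = b' + 1 := ⟨b - 1, by omega⟩
  have h : (a' + 1) * (b' + 1) = a' * b' + a' + b' + 1 := by ring
  simpa [h] using by omega

/-- For m = 2h ≥ 4, the size of the q-cyclotomic coset of i modulo n, i.e., the
least positive ℓ with i·q^ℓ ≡ i (mod n), is either h or m = 2h. -/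
theorem stmt_4 (q lam h n : ℕ) (hq : ∃ p k : ℕ, p.Prime ∧ 0 < k ∧ q = p ^ k)
    (hlam : 0 < lam) (hdvd : lam ∣ q - 1) (hh : 2 ≤ h)
    (hn : n = (q ^ (2 * h) - 1) / lam) :
    ∀ i : ℕ, 1 ≤ i → i ≤ (q ^ (h + 1) - 1) / lam →
      ∃ ℓ : ℕ, (ℓ = h ∨ ℓ = 2 * h) ∧
        IsLeast {l : ℕ | 0 < l ∧ i * q ^ l ≡ i [MOD n]} ℓ := by
  have hq2 : 2 ≤ q := by
    obtain ⟨p, k, hp, hk, rfl⟩ := hq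
    exact Nat.one_lt_pow (by omega) hp.two_le
  clear hq
  intro i hi1 hi2
  -- basic facts about n
  have hlamN : lam ∣ q ^ (2 * h) - 1 := by
    refine hdvd.trans ?_
    simpa using Nat.sub_dvd_pow_sub_pow q 1 (2 * h)
  have hnlam : n * lam = q ^ (2 * h) - 1 := by
    rw [hn]; exact Nat.div_mul_cancel hlamN
  have hNpos : 0 < q ^ (2 * h) - 1 := by
    have h1 : q ≤ q ^ (2 * h) := Nat.le_self_pow (by omega) q
    omega
  have hnpos : 0 < n := by
    rcases Nat.eq_zero_or_pos n with h0 | h0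
    · rw [h0, zero_mul] at hnlam; omega
    · exact h0
  have hndvd : n ∣ q ^ (2 * h) - 1 := ⟨lam, hnlam.symm⟩
  -- 2h is in the set
  have hmem2h : i * q ^ (2 * h) ≡ i [MOD n] := by
    have h1 : (1 : ℕ) ≡ q ^ (2 * h) [MOD n] :=
      (Nat.modEq_iff_dvd' (Nat.one_le_pow _ _ (by omega))).mpr hndvd
    simpa using (h1.symm).mul_left i
  have hex : ∃ l, 0 < l ∧ i * q ^ l ≡ i [MOD n] := ⟨2 * h, by omega, hmem2h⟩
  refine ⟨Nat.find hex, ?_, Nat.find_spec hex, fun l hl => Nat.find_min' hex hl⟩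
  set L := Nat.find hex with hLdef
  obtain ⟨hLpos, hmemL⟩ : 0 < L ∧ i * q ^ L ≡ i [MOD n] := Nat.find_spec hex
  have hLle : ∀ l, 0 < l → i * q ^ l ≡ i [MOD n] → L ≤ l := fun l h1 h2 =>
    Nat.find_min' hex ⟨h1, h2⟩
  -- closure under subtraction
  have hsub : ∀ a b : ℕ, a ≤ b → i * q ^ a ≡ i [MOD n] → i * q ^ b ≡ i [MOD n] →
      i * q ^ (b - a) ≡ i [MOD n] := by
    intro a b hab ha hb
    have h1 : i * q ^ a * q ^ (b - a) ≡ i * q ^ (b - a) [MOD n] := ha.mul_right _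
    rw [mul_assoc, ← pow_add, Nat.add_sub_cancel' hab] at h1
    exact h1.symm.trans hb
  -- L divides 2h
  have hLdvd : L ∣ 2 * h := by
    have key : ∀ t : ℕ, t * L ≤ 2 * h → i * q ^ (2 * h - t * L) ≡ i [MOD n] := by
      intro t
      induction t with
      | zero => intro _; simpa using hmem2h
      | succ t ih =>
        intro ht
        have e : (t + 1) * L = t * L + L := by ring
        rw [e] at ht ⊢
        have ih' := ih (by omega)
        have h2 := hsub L (2 * h - t * L) (by omega) hmemL ih'
        have heq : 2 * h - t * L - L = 2 * h - (t * L + L) := by omega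
        rwa [heq] at h2
    have hmod := key (2 * h / L) (Nat.div_mul_le_self _ _)
    have hdm : 2 * h / L * L + 2 * h % L = 2 * h := by
      rw [mul_comm]; exact Nat.div_add_mod _ _
    have heq : 2 * h - 2 * h / L * L = 2 * h % L := by omega
    rw [heq] at hmod
    rcases Nat.eq_zero_or_pos (2 * h % L) with h0 | h0
    · exact Nat.dvd_of_mod_eq_zero h0
    · exfalso
      have hub := hLle _ h0 hmod
      have hlt := Nat.mod_lt (2 * h) hLpos
      omega
  -- now conclude
  by_contra hcon
  push_neg at hcon
  obtain ⟨hne1, hne2⟩ := hcon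
  -- L ≤ h - 1
  obtain ⟨c, hc⟩ := hLdvd
  have hc3 : 3 ≤ c := by
    by_contra hc3'
    push_neg at hc3'
    interval_cases c
    · simp only [mul_zero] at hc; omega
    · simp only [mul_one] at hc; omega
    · omega
  have hLlt : L ≤ h - 1 := by
    have h3 : L * 3 ≤ L * c := Nat.mul_le_mul_left L hc3
    omega
  -- divisibility consequence
  have hqLpos : 1 ≤ q ^ L := Nat.one_le_pow _ _ (by omega)
  have hdvdn : n ∣ i * (q ^ L - 1) := by
    have h1 : n ∣ i * q ^ L - i :=
      (Nat.modEq_iff_dvd' (Nat.le_mul_of_pos_right i hqLpos)).mp hmemL.symm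
    have heq : i * (q ^ L - 1) = i * q ^ L - i := by
      rw [Nat.mul_sub, mul_one]
    rwa [heq]
  set A := q ^ L - 1 with hAdef
  have hApos : 0 < A := by
    have h2 : q ^ 1 ≤ q ^ L := Nat.pow_le_pow_right (by omega) hLpos
    rw [pow_one] at h2
    omega
  set d := Nat.gcd n A with hddef
  have hdpos : 0 < d := Nat.gcd_pos_of_pos_left A hnpos
  have hdn : d ∣ n := Nat.gcd_dvd_left n A
  have hdA : d ∣ A := Nat.gcd_dvd_right n A
  have hco : Nat.Coprime (n / d) (A / d) := Nat.coprime_div_gcd_div_gcd hdpos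
  have hdvdi : n / d ∣ i := by
    have h1 : n / d * d ∣ i * (A / d) * d := by
      rw [Nat.div_mul_cancel hdn, mul_assoc, Nat.div_mul_cancel hdA]
      exact hdvdn
    have h2 : n / d ∣ i * (A / d) := (Nat.mul_dvd_mul_iff_right hdpos).mp h1
    exact hco.dvd_of_dvd_mul_right h2
  have hile : n / d ≤ i := Nat.le_of_dvd (by omega) hdvdi
  -- n ≤ i * A
  have hnA : n ≤ i * A := by
    calc n = n / d * d := (Nat.div_mul_cancel hdn).symm
    _ ≤ i * d := Nat.mul_le_mul_right d hile
    _ ≤ i * A := Nat.mul_le_mul_left i (Nat.le_of_dvd hApos hdA)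
  -- i * lam ≤ q^(h+1) - 1
  have hilam : i * lam ≤ q ^ (h + 1) - 1 :=
    (Nat.le_div_iff_mul_le hlam).mp hi2
  -- combine
  have hchain : q ^ (2 * h) - 1 ≤ (q ^ (h + 1) - 1) * A := by
    calc q ^ (2 * h) - 1 = n * lam := hnlam.symm
    _ ≤ i * A * lam := Nat.mul_le_mul_right lam hnA
    _ = i * lam * A := by ring
    _ ≤ (q ^ (h + 1) - 1) * A := Nat.mul_le_mul_right A hilam
  -- but (q^(h+1)-1)*(q^(h-1)-1) < q^(2h)-1
  have hAle : A ≤ q ^ (h - 1) - 1 := by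
    have h2 : q ^ L ≤ q ^ (h - 1) := Nat.pow_le_pow_right (by omega) hLlt
    omega
  have hab : q ^ (h + 1) * q ^ (h - 1) = q ^ (2 * h) := by
    rw [← pow_add]; congr 1; omega
  have ha2 : 2 ≤ q ^ (h + 1) := by
    have := Nat.pow_le_pow_right (show 1 ≤ q by omega) (show 1 ≤ h + 1 by omega)
    rw [pow_one] at this
    omega
  have hb2 : 2 ≤ q ^ (h - 1) := by
    have := Nat.pow_le_pow_right (show 1 ≤ q by omega) (show 1 ≤ h - 1 by omega)
    rw [pow_one] at this
    omega
  have hfinal : (q ^ (h + 1) - 1) * (q ^ (h - 1) - 1) < q ^ (2 * h) - 1 := by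
    have := stmt_4_aux _ _ ha2 hb2
    rwa [hab] at this
  have hmono : (q ^ (h + 1) - 1) * A ≤ (q ^ (h + 1) - 1) * (q ^ (h - 1) - 1) :=
    Nat.mul_le_mul_left _ hAle
  omega
end

section
/- Let q be a prime power, λ a positive divisor of q-1, m ≥ 2, and n = (q^m-1)/λ. Let 1 ≤ i ≤ n-1 have q-adic expansion i = Σ_{ℓ=0}^{m-1} i_ℓ q^ℓ with 0 ≤ i_ℓ ≤ q-1. If i is the smallest element of its q-cyclotomic coset modulo n (a coset leader), then i_{m-1} ≤ (q-1)/λ - 1 and i_ℓ ≥ i_{m-1} for all 0 ≤ ℓ ≤ m-2. -/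
set_option maxHeartbeats 1000000


/-- If i is a q-cyclotomic coset leader modulo n = (q^m-1)/λ with q-adic digits
i_ℓ = (i / q^ℓ) % q, then i_{m-1} ≤ (q-1)/λ - 1 and i_ℓ ≥ i_{m-1} for ℓ ≤ m-2. -/
theorem stmt_5 (q lam m n i : ℕ) (hq : ∃ p k : ℕ, p.Prime ∧ 0 < k ∧ q = p ^ k)
    (hlam : 0 < lam) (hdvd : lam ∣ q - 1) (hm : 2 ≤ m)
    (hn : n = (q ^ m - 1) / lam) (hi1 : 1 ≤ i) (hi2 : i ≤ n - 1)
    (hleader : ∀ j : ℕ, i ≤ i * q ^ j % n) :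
    (i / q ^ (m - 1)) % q ≤ (q - 1) / lam - 1 ∧
    ∀ ℓ : ℕ, ℓ ≤ m - 2 → (i / q ^ (m - 1)) % q ≤ (i / q ^ ℓ) % q := by
  have hq2 : 2 ≤ q := by
    obtain ⟨p, k, hp, hk, hqe⟩ := hq
    calc 2 ≤ p := hp.two_le
    _ ≤ p ^ k := Nat.le_self_pow hk.ne' p
    _ = q := hqe.symm
  clear hq
  -- basic facts
  have hdvd' : lam ∣ q ^ m - 1 := hdvd.trans (by simpa using Nat.sub_dvd_pow_sub_pow q 1 m)
  have hln : lam * n = q ^ m - 1 := by rw [hn, Nat.mul_div_cancel' hdvd']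
  have hqm : q ^ 2 ≤ q ^ m := Nat.pow_le_pow_right (by omega) hm
  have hq1m : 1 ≤ q ^ m := Nat.one_le_pow _ _ (by omega)
  have hlamle : lam ≤ q - 1 := Nat.le_of_dvd (by omega) hdvd
  have hq4 : 4 ≤ q ^ m := by
    calc (4:ℕ) = 2 * 2 := rfl
    _ ≤ q * q := Nat.mul_le_mul hq2 hq2
    _ = q ^ 2 := (sq q).symm
    _ ≤ q ^ m := hqm
  have hnpos : 0 < n := by
    rcases Nat.eq_zero_or_pos n with h | h
    · rw [h, Nat.mul_zero] at hln; omega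
    · exact h
  have hiltn : i < n := by omega
  have hiq : i < q ^ m := by
    have : n ≤ q ^ m - 1 := by
      calc n = 1 * n := (one_mul n).symm
      _ ≤ lam * n := Nat.mul_le_mul_right n hlam
      _ = q ^ m - 1 := hln
    omega
  -- key: i ≤ rotation
  have key : ∀ ℓ : ℕ, ℓ + 1 ≤ m →
      i ≤ (i % q ^ (ℓ + 1)) * q ^ (m - 1 - ℓ) + i / q ^ (ℓ + 1) := by
    intro ℓ hℓ
    set j := m - 1 - ℓ with hj
    set x := i / q ^ (ℓ + 1) with hx
    have hjm : ℓ + 1 + j = m := by omega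
    have hqmx : q ^ m = q ^ (ℓ + 1) * q ^ j := by rw [← pow_add, hjm]
    have hident : i * q ^ j = ((i % q ^ (ℓ + 1)) * q ^ j + x) + (q ^ m - 1) * x := by
      have h1 : (q ^ m - 1) * x + x = q ^ m * x := by
        have h1a := Nat.sub_mul (q ^ m) 1 x
        have h1b : 1 * x ≤ q ^ m * x := Nat.mul_le_mul_right x hq1m
        omega
      have h2 : ((i % q ^ (ℓ + 1)) * q ^ j + x) + (q ^ m - 1) * x
          = (i % q ^ (ℓ + 1)) * q ^ j + q ^ m * x := by omega
      rw [h2, hqmx]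
      have h3 : i % q ^ (ℓ + 1) + q ^ (ℓ + 1) * x = i := Nat.mod_add_div i (q ^ (ℓ + 1))
      calc i * q ^ j = (i % q ^ (ℓ + 1) + q ^ (ℓ + 1) * x) * q ^ j := by rw [h3]
      _ = i % q ^ (ℓ + 1) * q ^ j + q ^ (ℓ + 1) * q ^ j * x := by ring
    have hmod : i * q ^ j % n = ((i % q ^ (ℓ + 1)) * q ^ j + x) % n := by
      rw [hident, ← hln]
      rw [show lam * n * x = n * (lam * x) by ring, Nat.add_mul_mod_self_left]
    calc i ≤ i * q ^ j % n := hleader j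
    _ = ((i % q ^ (ℓ + 1)) * q ^ j + x) % n := hmod
    _ ≤ (i % q ^ (ℓ + 1)) * q ^ j + x := Nat.mod_le _ _
  -- top digit
  have htop : i / q ^ (m - 1) % q = i / q ^ (m - 1) := by
    apply Nat.mod_eq_of_lt
    apply Nat.div_lt_of_lt_mul
    calc i < q ^ m := hiq
    _ = q ^ (m - 1) * q := by rw [← pow_succ]; congr 1; omega
  set D := i / q ^ (m - 1) with hD
  -- part 2
  have part2 : ∀ ℓ : ℕ, ℓ ≤ m - 2 → D ≤ i / q ^ ℓ % q := by
    intro ℓ hℓ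
    by_contra hcon
    push_neg at hcon
    have hℓ1 : ℓ + 1 ≤ m := by omega
    have hk := key ℓ hℓ1
    set j := m - 1 - ℓ with hj
    set d := i / q ^ ℓ % q with hd
    -- i % q^(ℓ+1) = i % q^ℓ + q^ℓ * d < (d+1) * q^ℓ
    have hsplit : i % q ^ (ℓ + 1) = i % q ^ ℓ + q ^ ℓ * d := by
      rw [pow_succ, Nat.mod_mul]
    have hqlpos : 0 < q ^ ℓ := pow_pos (by omega) ℓ
    have hmlt : i % q ^ (ℓ + 1) < (d + 1) * q ^ ℓ := by
      have := Nat.mod_lt i hqlpos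
      rw [hsplit]; nlinarith
    have hdivlt : i / q ^ (ℓ + 1) < q ^ j := by
      apply Nat.div_lt_of_lt_mul
      calc i < q ^ m := hiq
      _ ≤ q ^ (ℓ + 1) * q ^ j := by rw [← pow_add]; apply Nat.pow_le_pow_right (by omega); omega
    have hqm1 : q ^ ℓ * q ^ j = q ^ (m - 1) := by rw [← pow_add]; congr 1; omega
    -- σ < (d+1) * q^(m-1) ≤ D * q^(m-1) ≤ i
    have hσ : (i % q ^ (ℓ + 1)) * q ^ j + i / q ^ (ℓ + 1) < (d + 1) * q ^ (m - 1) := by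
      have h1 : (i % q ^ (ℓ + 1)) * q ^ j ≤ ((d + 1) * q ^ ℓ - 1) * q ^ j :=
        Nat.mul_le_mul_right _ (by omega)
      have h2 : ((d + 1) * q ^ ℓ - 1) * q ^ j = (d + 1) * q ^ (m - 1) - q ^ j := by
        rw [Nat.sub_mul, one_mul, mul_assoc, hqm1]
      have hqjpos : 0 < q ^ j := pow_pos (by omega) j
      have h3 : q ^ j ≤ (d + 1) * q ^ (m - 1) := by
        calc q ^ j ≤ q ^ (m - 1) := Nat.pow_le_pow_right (by omega) (by omega)
        _ ≤ (d + 1) * q ^ (m - 1) := Nat.le_mul_of_pos_left (q ^ (m - 1)) (by omega)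
      omega
    have hDi : D * q ^ (m - 1) ≤ i := Nat.div_mul_le_self i (q ^ (m - 1))
    have : i < D * q ^ (m - 1) := by
      calc i ≤ _ := hk
      _ < (d + 1) * q ^ (m - 1) := hσ
      _ ≤ D * q ^ (m - 1) := Nat.mul_le_mul_right _ (by omega)
    omega
  refine ⟨?_, by rw [htop]; exact part2⟩
  -- part 1
  rw [htop]
  set c := (q - 1) / lam with hc
  have hlc : lam * c = q - 1 := Nat.mul_div_cancel' hdvd
  by_contra hcon
  push_neg at hcon
  have hcpos : 0 < c := by
    rcases Nat.eq_zero_or_pos c with h | h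
    · rw [h, Nat.mul_zero] at hlc; omega
    · exact h
  have hDc : c ≤ D := by omega
  -- every digit ≥ c
  have hdig : ∀ ℓ, ℓ < m → c ≤ i / q ^ ℓ % q := by
    intro ℓ hℓ
    rcases Nat.lt_or_ge ℓ (m - 1) with h | h
    · exact hDc.trans (part2 ℓ (by omega))
    · have : ℓ = m - 1 := by omega
      rw [this, htop]; exact hDc
  -- digit sum
  have hsum : ∀ M : ℕ, ∑ ℓ ∈ Finset.range M, (i / q ^ ℓ % q) * q ^ ℓ = i % q ^ M := by
    intro M
    induction M with
    | zero => simp [Nat.mod_one]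
    | succ M ih =>
      rw [Finset.sum_range_succ, ih, pow_succ, Nat.mod_mul]
      ring
  have hisum : i = ∑ ℓ ∈ Finset.range m, (i / q ^ ℓ % q) * q ^ ℓ := by
    rw [hsum m, Nat.mod_eq_of_lt hiq]
  have hgeom : i ≥ c * ∑ ℓ ∈ Finset.range m, q ^ ℓ := by
    rw [hisum, Finset.mul_sum]
    apply Finset.sum_le_sum
    intro ℓ hℓ
    exact Nat.mul_le_mul_right _ (hdig ℓ (Finset.mem_range.mp hℓ))
  have hgs : (q - 1) * ∑ ℓ ∈ Finset.range m, q ^ ℓ = q ^ m - 1 := by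
    rw [Nat.geomSum_eq hq2, Nat.mul_div_cancel']
    simpa using Nat.sub_dvd_pow_sub_pow q 1 m
  have hcn : c * ∑ ℓ ∈ Finset.range m, q ^ ℓ = n := by
    have : lam * (c * ∑ ℓ ∈ Finset.range m, q ^ ℓ) = lam * n := by
      rw [← mul_assoc, hlc, hgs, hln]
    exact Nat.eq_of_mul_eq_mul_left hlam this
  omega
end

section
/- Let q be an odd prime power, m ≥ 2 even, and n = (q^m-1)/2. Then δ₁ = (q^m - 1 - q^{m-1} - q^{m/2-1})/2 satisfies δ₁·q^{m/2} ≡ δ₁ (mod n), and m/2 is the least positive integer ℓ with δ₁·q^ℓ ≡ δ₁ (mod n); moreover δ₁ is the smallest element of its q-cyclotomic coset modulo n. -/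
/-- For q odd, m even, n = (q^m-1)/2 and δ₁ = (q^m-1-q^{m-1}-q^{m/2-1})/2:
m/2 is the least positive ℓ with δ₁·q^ℓ ≡ δ₁ (mod n), and δ₁ is the smallest
element of its q-cyclotomic coset modulo n. -/
theorem stmt_6 (q m n d : ℕ) (hq : ∃ p k : ℕ, p.Prime ∧ 0 < k ∧ q = p ^ k)
    (hqodd : Odd q) (hm : 2 ≤ m) (hme : Even m)
    (hn : n = (q ^ m - 1) / 2)
    (hd : d = (q ^ m - 1 - q ^ (m - 1) - q ^ (m / 2 - 1)) / 2) :
    IsLeast {l : ℕ | 0 < l ∧ d * q ^ l ≡ d [MOD n]} (m / 2) ∧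
    ∀ j : ℕ, d ≤ d * q ^ j % n := by
  have hq3 : 3 ≤ q := by
    obtain ⟨p, k, hp, hk, rfl⟩ := hq
    have hp2 := hp.two_le
    have hpne : p ≠ 2 := by
      rintro rfl
      exact (Nat.not_odd_iff_even.mpr (Nat.even_pow.mpr ⟨even_two, hk.ne'⟩)) hqodd
    calc 3 ≤ p := by omega
    _ ≤ p ^ k := Nat.le_self_pow hk.ne' p
  obtain ⟨t, rfl⟩ := hme
  obtain ⟨h', rfl⟩ : ∃ h', t = h' + 1 := ⟨t - 1, by omega⟩
  have e1 : h' + 1 + (h' + 1) = 2 * h' + 2 := by ring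
  rw [e1] at hn hd ⊢
  have e2 : (2 * h' + 2) / 2 = h' + 1 := by omega
  have e3 : 2 * h' + 2 - 1 = 2 * h' + 1 := by omega
  rw [e2]
  have e4 : h' + 1 - 1 = h' := by omega
  rw [e2, e3, e4] at hd
  -- basic power facts
  have hpow : ∀ a b : ℕ, a ≤ b → q ^ a ≤ q ^ b := fun a b hab =>
    Nat.pow_le_pow_right (by omega) hab
  have hodd : ∀ a : ℕ, ∃ r, q ^ a = 2 * r + 1 := by
    intro a
    obtain ⟨r, hr⟩ := hqodd.pow (n := a)
    exact ⟨r, hr⟩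
  have hgrow : ∀ a : ℕ, 3 * q ^ a ≤ q ^ (a + 1) := by
    intro a
    calc 3 * q ^ a ≤ q * q ^ a := Nat.mul_le_mul_right _ hq3
    _ = q ^ (a + 1) := by rw [pow_succ]; ring
  -- key arithmetic facts
  obtain ⟨rQ, hrQ⟩ := hodd (2 * h' + 2)
  obtain ⟨rA, hrA⟩ := hodd (2 * h' + 1)
  obtain ⟨rB, hrB⟩ := hodd h'
  have hBA : q ^ h' ≤ q ^ (2 * h' + 1) := hpow _ _ (by omega)
  have h3A := hgrow (2 * h' + 1)
  have e5 : 2 * h' + 1 + 1 = 2 * h' + 2 := by omega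
  rw [e5] at h3A
  have h2n : 2 * n = q ^ (2 * h' + 2) - 1 := by omega
  have h2d : 2 * d + q ^ (2 * h' + 1) + q ^ h' + 1 = q ^ (2 * h' + 2) := by omega
  have hdn : d < n := by omega
  have hn0 : 0 < n := by omega
  -- the key residue computation
  have hkey : ∀ j' ≤ h', d * q ^ (j' + 1) % n
      = (q ^ (2 * h' + 2) - 1 - q ^ j' - q ^ (h' + 1 + j')) / 2 := by
    intro j' hj'
    obtain ⟨ra, hra⟩ := hodd j'
    obtain ⟨rb, hrb⟩ := hodd (h' + 1 + j')
    have hau : q ^ j' ≤ q ^ h' := hpow _ _ hj'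
    have hbu : q ^ (h' + 1 + j') ≤ q ^ (2 * h' + 1) := hpow _ _ (by omega)
    set v := (q ^ (2 * h' + 2) - 1 - q ^ j' - q ^ (h' + 1 + j')) / 2 with hv
    have h2v : 2 * v + q ^ j' + q ^ (h' + 1 + j') + 1 = q ^ (2 * h' + 2) := by omega
    have hvn : v < n := by omega
    have hmod : d * q ^ (j' + 1) ≡ v [MOD n] := by
      rw [Nat.modEq_iff_dvd]
      refine ⟨1 + (q : ℤ) ^ j' - q ^ (j' + 1), ?_⟩
      push_cast
      have cd : (2 : ℤ) * d + q ^ (2 * h' + 1) + q ^ h' + 1 = q ^ (2 * h' + 2) := by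
        exact_mod_cast congrArg (Nat.cast : ℕ → ℤ) h2d
      have cv : (2 : ℤ) * v + q ^ j' + q ^ (h' + 1 + j') + 1 = q ^ (2 * h' + 2) := by
        exact_mod_cast congrArg (Nat.cast : ℕ → ℤ) h2v
      have cn : (2 : ℤ) * n + 1 = q ^ (2 * h' + 2) := by
        have : 2 * n + 1 = q ^ (2 * h' + 2) := by omega
        exact_mod_cast congrArg (Nat.cast : ℕ → ℤ) this
      have hdbl : 2 * ((v : ℤ) - (d : ℤ) * (q : ℤ) ^ (j' + 1))
          = 2 * ((n : ℤ) * (1 + (q : ℤ) ^ j' - (q : ℤ) ^ (j' + 1))) := by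
        linear_combination cv - (q : ℤ) ^ (j' + 1) * cd - (1 + (q : ℤ) ^ j' - (q : ℤ) ^ (j' + 1)) * cn
      exact mul_left_cancel₀ two_ne_zero hdbl
    have : d * q ^ (j' + 1) % n = v % n := hmod
    rw [this, Nat.mod_eq_of_lt hvn]
  -- the periodicity congruence
  have hper : d * q ^ (h' + 1) ≡ d [MOD n] := by
    have hk := hkey h' le_rfl
    obtain ⟨ra, hra⟩ := hodd (h' + 1 + h')
    have e6 : h' + 1 + h' = 2 * h' + 1 := by omega
    rw [e6] at hk
    have : (q ^ (2 * h' + 2) - 1 - q ^ h' - q ^ (2 * h' + 1)) / 2 = d := by omega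
    rw [this] at hk
    show d * q ^ (h' + 1) % n = d % n
    rw [hk, Nat.mod_eq_of_lt hdn]
  refine ⟨⟨⟨by omega, hper⟩, ?_⟩, ?_⟩
  · -- lower bound
    rintro l ⟨hl0, hlc⟩
    by_contra hcon
    push_neg at hcon
    obtain ⟨j', rfl⟩ : ∃ j', l = j' + 1 := ⟨l - 1, by omega⟩
    have hj' : j' < h' := by omega
    have hk := hkey j' (by omega)
    have hlc' : d * q ^ (j' + 1) % n = d := by
      have : d * q ^ (j' + 1) % n = d % n := hlc
      rw [this, Nat.mod_eq_of_lt hdn]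
    rw [hlc'] at hk
    obtain ⟨ra, hra⟩ := hodd j'
    obtain ⟨rb, hrb⟩ := hodd (h' + 1 + j')
    have hau : q ^ j' ≤ q ^ (2 * h') := hpow _ _ (by omega)
    have hbu : q ^ (h' + 1 + j') ≤ q ^ (2 * h') := hpow _ _ (by omega)
    have h3 := hgrow (2 * h')
    have e7 : 2 * h' + 1 = 2 * h' + 1 := rfl
    have hAl : q ^ (2 * h') ≤ q ^ (2 * h' + 1) := hpow _ _ (by omega)
    omega
  · -- minimality in the coset
    intro j
    induction j using Nat.strong_induction_on with
    | _ j ih =>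
      rcases Nat.lt_or_ge j (h' + 2) with hj | hj
      · rcases Nat.eq_zero_or_pos j with rfl | hj0
        · simp [Nat.mod_eq_of_lt hdn]
        · obtain ⟨j', rfl⟩ : ∃ j', j = j' + 1 := ⟨j - 1, by omega⟩
          have hk := hkey j' (by omega)
          rw [hk]
          obtain ⟨ra, hra⟩ := hodd j'
          obtain ⟨rb, hrb⟩ := hodd (h' + 1 + j')
          have hau : q ^ j' ≤ q ^ h' := hpow _ _ (by omega)
          have hbu : q ^ (h' + 1 + j') ≤ q ^ (2 * h' + 1) := hpow _ _ (by omega)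
          omega
      · -- j ≥ h' + 2 : reduce by h' + 1
        have hstep : d * q ^ j ≡ d * q ^ (j - (h' + 1)) [MOD n] := by
          have := hper.mul_right (q ^ (j - (h' + 1)))
          have he : d * q ^ (h' + 1) * q ^ (j - (h' + 1)) = d * q ^ j := by
            rw [mul_assoc, ← pow_add]
            congr 2
            omega
          rwa [he] at this
        have : d * q ^ j % n = d * q ^ (j - (h' + 1)) % n := hstep
        rw [this]
        exact ih _ (by omega)
end

section
/- Let q be an odd prime power, m ≥ 2, and n = (q^m-1)/2. The largest q-cyclotomic coset leader modulo n is δ₁ = (q^m - 1 - q^{m-1} - q^{⌊(m-1)/2⌋})/2; that is, δ₁ is a coset leader, and every integer s with δ₁ < s < n satisfies [s·q^j]_n < s for some j ≥ 1. -/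
private lemma pow_modeq_cycle (q m c : ℕ) (hm : 0 < m) (hq : 1 ≤ q) :
    q ^ c ≡ q ^ (c % m) [MOD q ^ m - 1] := by
  conv_lhs => rw [← Nat.div_add_mod c m, pow_add, pow_mul]
  have h1 : q ^ m ≡ 1 [MOD q ^ m - 1] := by
    have hge : 1 ≤ q ^ m := Nat.one_le_pow _ _ (by omega)
    exact ((Nat.modEq_iff_dvd' hge).mpr (by simp)).symm
  calc (q ^ m) ^ (c / m) * q ^ (c % m)
      ≡ 1 ^ (c / m) * q ^ (c % m) [MOD q ^ m - 1] := (h1.pow _).mul_right _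
    _ = q ^ (c % m) := by rw [one_pow, one_mul]

private lemma neg_mod_helper (N x y w z : ℕ) (h1 : x + y = N * z)
    (h2 : y ≡ w [MOD N]) (hw : 0 < w) (hwN : w < N) : x % N = N - w := by
  have h3 : x + w ≡ x + y [MOD N] := Nat.ModEq.add_left x h2.symm
  have h4 : x + y ≡ (N - w) + w [MOD N] := by
    rw [h1, show (N - w) + w = N from by omega]
    exact (Nat.modEq_zero_iff_dvd.mpr ⟨z, rfl⟩).trans (Nat.modEq_zero_iff_dvd.mpr dvd_rfl).symm
  have h5 : x ≡ N - w [MOD N] := Nat.ModEq.add_right_cancel' w (h3.trans h4)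
  have h6 := Nat.mod_eq_of_lt (show N - w < N from by omega)
  unfold Nat.ModEq at h5
  omega

private lemma pair_ineq (q m j : ℕ) (hq : 3 ≤ q) (hm : 2 ≤ m) :
    q ^ ((m - 1 + j) % m) + q ^ (((m - 1) / 2 + j) % m)
      ≤ q ^ (m - 1) + q ^ ((m - 1) / 2) := by
  have hm0 : 0 < m := by omega
  have hq1 : 1 ≤ q := by omega
  set t := (m - 1) / 2 with ht
  have htm : t < m := by omega
  have e1 : (m - 1 + j) % m = (m - 1 + j % m) % m := (Nat.add_mod_mod _ _ _).symm
  have e2 : (t + j) % m = (t + j % m) % m := (Nat.add_mod_mod _ _ _).symm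
  rw [e1, e2]
  set r := j % m with hr
  have hrm : r < m := Nat.mod_lt _ hm0
  rcases Nat.eq_zero_or_pos r with h0 | hpos
  · rw [h0, Nat.add_zero, Nat.add_zero, Nat.mod_eq_of_lt (by omega), Nat.mod_eq_of_lt htm]
  · have ea : (m - 1 + r) % m = r - 1 := by
      rw [Nat.mod_eq_sub_mod (by omega), show m - 1 + r - m = r - 1 from by omega]
      exact Nat.mod_eq_of_lt (by omega)
    rw [ea]
    by_cases hb : t + r < m
    · rw [Nat.mod_eq_of_lt hb]
      by_cases hb2 : t + r ≤ m - 2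
      · calc q ^ (r - 1) + q ^ (t + r)
            ≤ q ^ (t + r) + q ^ (t + r) :=
              Nat.add_le_add_right (Nat.pow_le_pow_right hq1 (by omega)) _
          _ = 2 * q ^ (t + r) := by ring
          _ ≤ q * q ^ (t + r) := Nat.mul_le_mul_right _ (by omega)
          _ = q ^ (t + r + 1) := by rw [pow_succ, mul_comm]
          _ ≤ q ^ (m - 1) := Nat.pow_le_pow_right hq1 (by omega)
          _ ≤ q ^ (m - 1) + q ^ t := Nat.le_add_right _ _
      · have hb3 : t + r = m - 1 := by omega
        have hr1 : r - 1 ≤ t := by omega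
        rw [hb3]
        have := Nat.pow_le_pow_right hq1 hr1
        omega
    · have eb : (t + r) % m = t + r - m := by
        rw [Nat.mod_eq_sub_mod (by omega)]
        exact Nat.mod_eq_of_lt (by omega)
      rw [eb]
      exact Nat.add_le_add (Nat.pow_le_pow_right hq1 (by omega))
        (Nat.pow_le_pow_right hq1 (by omega))

/-- The largest q-cyclotomic coset leader modulo n = (q^m-1)/2 is
δ₁ = (q^m - 1 - q^{m-1} - q^{⌊(m-1)/2⌋})/2: δ₁ is a coset leader and every
integer δ₁ < s < n satisfies [s·q^j]_n < s for some j ≥ 1. -/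
theorem stmt_7 (q m n d : ℕ) (hq : ∃ p k : ℕ, p.Prime ∧ 0 < k ∧ q = p ^ k)
    (hqodd : Odd q) (hm : 2 ≤ m)
    (hn : n = (q ^ m - 1) / 2)
    (hd : d = (q ^ m - 1 - q ^ (m - 1) - q ^ ((m - 1) / 2)) / 2) :
    (∀ j : ℕ, d ≤ d * q ^ j % n) ∧
    ∀ s : ℕ, d < s → s < n → ∃ j : ℕ, 1 ≤ j ∧ s * q ^ j % n < s := by
  obtain ⟨p, k, hp, hk, hqpk⟩ := hq
  have hq2 : 2 ≤ q := by
    calc 2 ≤ p := hp.two_le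
      _ ≤ p ^ k := Nat.le_self_pow (by omega) p
      _ = q := hqpk.symm
  obtain ⟨a1, ea1⟩ : Odd (q ^ m) := hqodd.pow
  obtain ⟨a2, ea2⟩ : Odd (q ^ (m - 1)) := hqodd.pow
  obtain ⟨a3, ea3⟩ : Odd (q ^ ((m - 1) / 2)) := hqodd.pow
  obtain ⟨cq, hcq⟩ := hqodd
  have hq3 : 3 ≤ q := by omega
  have hq1 : 1 ≤ q := by omega
  have hm0 : 0 < m := by omega
  have hCB : q ^ ((m - 1) / 2) ≤ q ^ (m - 1) := Nat.pow_le_pow_right hq1 (by omega)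
  have hB3 : 3 ≤ q ^ (m - 1) := le_trans hq3 (Nat.le_self_pow (by omega) q)
  have hqmB : q ^ m = q ^ (m - 1) * q := by
    conv_lhs => rw [show m = (m - 1) + 1 from by omega, pow_succ]
  have h3B : q ^ (m - 1) * 3 ≤ q ^ m := by
    have := Nat.mul_le_mul_left (q ^ (m - 1)) hq3
    omega
  have hbig : q ^ (m - 1) + q ^ ((m - 1) / 2) + 2 ≤ q ^ m := by omega
  have hn2 : 2 * n = q ^ m - 1 := by omega
  have e2d : 2 * d + q ^ (m - 1) + q ^ ((m - 1) / 2) = q ^ m - 1 := by omega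
  constructor
  · intro j
    have hS : q ^ ((m - 1 + j) % m) + q ^ (((m - 1) / 2 + j) % m)
        ≤ q ^ (m - 1) + q ^ ((m - 1) / 2) := pair_ineq q m j hq3 hm
    have hx : 2 * (d * q ^ j) + (q ^ (m - 1 + j) + q ^ ((m - 1) / 2 + j))
        = (2 * n) * q ^ j := by
      calc 2 * (d * q ^ j) + (q ^ (m - 1 + j) + q ^ ((m - 1) / 2 + j))
          = (2 * d + q ^ (m - 1) + q ^ ((m - 1) / 2)) * q ^ j := by
            rw [pow_add, pow_add]; ring
        _ = (2 * n) * q ^ j := by rw [e2d, hn2]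
    have hc1 : q ^ (m - 1 + j) ≡ q ^ ((m - 1 + j) % m) [MOD 2 * n] := by
      rw [hn2]; exact pow_modeq_cycle q m (m - 1 + j) hm0 hq1
    have hc2 : q ^ ((m - 1) / 2 + j) ≡ q ^ (((m - 1) / 2 + j) % m) [MOD 2 * n] := by
      rw [hn2]; exact pow_modeq_cycle q m ((m - 1) / 2 + j) hm0 hq1
    have hw0 : 0 < q ^ ((m - 1 + j) % m) + q ^ (((m - 1) / 2 + j) % m) := by positivity
    have hwN : q ^ ((m - 1 + j) % m) + q ^ (((m - 1) / 2 + j) % m) < 2 * n := by omega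
    have hmod : (2 * (d * q ^ j)) % (2 * n)
        = 2 * n - (q ^ ((m - 1 + j) % m) + q ^ (((m - 1) / 2 + j) % m)) :=
      neg_mod_helper (2 * n) _ _ _ (q ^ j) hx (hc1.add hc2) hw0 hwN
    have hdiv : 2 * (d * q ^ j % n) = 2 * (d * q ^ j) % (2 * n) :=
      (Nat.mul_mod_mul_left 2 (d * q ^ j) n).symm
    omega
  · intro s hds hsn
    have hf0 : 0 < 2 * (n - s) := by omega
    set f := 2 * (n - s) with hf
    have hfu : f < q ^ (m - 1) + q ^ ((m - 1) / 2) := by omega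
    by_cases hcase : f < q ^ (m - 1)
    · -- Case A : f < q^(m-1)
      set i := Nat.log q f with hi
      have hqi : q ^ i ≤ f := Nat.pow_log_le_self q (by omega)
      have hfi : f < q ^ (i + 1) := Nat.lt_pow_succ_log_self (by omega) f
      have him : i < m - 1 :=
        (Nat.pow_lt_pow_iff_right (by omega)).mp (lt_of_le_of_lt hqi hcase)
      refine ⟨m - 1 - i, by omega, ?_⟩
      set j := m - 1 - i with hj
      have hx : 2 * (s * q ^ j) + f * q ^ j = (2 * n) * q ^ j := by
        calc 2 * (s * q ^ j) + f * q ^ j = (2 * s + f) * q ^ j := by ring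
          _ = (2 * n) * q ^ j := by rw [show 2 * s + f = 2 * n from by omega]
      have hwge : q ^ (m - 1) ≤ f * q ^ j := by
        calc q ^ (m - 1) = q ^ i * q ^ j := by rw [← pow_add]; congr 1; omega
          _ ≤ f * q ^ j := Nat.mul_le_mul_right _ hqi
      have hwlt : f * q ^ j < 2 * n := by
        have h5 : (f + 1) * q ^ j ≤ q ^ (i + 1) * q ^ j := Nat.mul_le_mul_right _ hfi
        have h6 : q ^ (i + 1) * q ^ j = q ^ m := by rw [← pow_add]; congr 1; omega
        have h7 : 3 ≤ q ^ j := le_trans hq3 (Nat.le_self_pow (by omega) q)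
        have h8 : (f + 1) * q ^ j = f * q ^ j + q ^ j := by ring
        omega
      have hmod : (2 * (s * q ^ j)) % (2 * n) = 2 * n - f * q ^ j :=
        neg_mod_helper (2 * n) _ _ _ (q ^ j) hx (Nat.ModEq.refl _) (by omega) hwlt
      have hdiv : 2 * (s * q ^ j % n) = 2 * (s * q ^ j) % (2 * n) :=
        (Nat.mul_mod_mul_left 2 (s * q ^ j) n).symm
      omega
    · -- Case B : q^(m-1) ≤ f
      push_neg at hcase
      have hg0 : 0 < f - q ^ (m - 1) := by omega
      set g := f - q ^ (m - 1) with hg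
      have hgt : g < q ^ ((m - 1) / 2) := by omega
      have ht1 : 1 ≤ (m - 1) / 2 := by
        by_contra h
        rw [show (m - 1) / 2 = 0 from by omega] at hgt
        simp at hgt
        omega
      set i := Nat.log q g with hi
      have hqi : q ^ i ≤ g := Nat.pow_log_le_self q (by omega)
      have hgi : g < q ^ (i + 1) := Nat.lt_pow_succ_log_self (by omega) g
      have hit : i < (m - 1) / 2 :=
        (Nat.pow_lt_pow_iff_right (by omega)).mp (lt_of_le_of_lt hqi hgt)
      have him : i + 1 < m - 1 := by omega
      refine ⟨m - 1 - i, by omega, ?_⟩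
      set j := m - 1 - i with hj
      have hfg : f = q ^ (m - 1) + g := by omega
      have hcyc : q ^ (2 * m - 2 - i) ≡ q ^ (m - 2 - i) [MOD 2 * n] := by
        rw [hn2]
        have h1 := pow_modeq_cycle q m (2 * m - 2 - i) hm0 hq1
        have h2 : (2 * m - 2 - i) % m = m - 2 - i := by
          rw [Nat.mod_eq_sub_mod (by omega), show 2 * m - 2 - i - m = m - 2 - i from by omega]
          exact Nat.mod_eq_of_lt (by omega)
        rwa [h2] at h1
      have hfq : f * q ^ j = q ^ (2 * m - 2 - i) + g * q ^ j := by
        rw [hfg, add_mul, ← pow_add]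
        congr 3
        omega
      have h2 : f * q ^ j ≡ q ^ (m - 2 - i) + g * q ^ j [MOD 2 * n] := by
        rw [hfq]; exact hcyc.add_right _
      have hx : 2 * (s * q ^ j) + f * q ^ j = (2 * n) * q ^ j := by
        calc 2 * (s * q ^ j) + f * q ^ j = (2 * s + f) * q ^ j := by ring
          _ = (2 * n) * q ^ j := by rw [show 2 * s + f = 2 * n from by omega]
      have hwge : q ^ (m - 1) + q ^ ((m - 1) / 2) ≤ q ^ (m - 2 - i) + g * q ^ j := by
        have hA : q ^ ((m - 1) / 2) ≤ q ^ (m - 2 - i) := Nat.pow_le_pow_right hq1 (by omega)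
        have hB : q ^ (m - 1) ≤ g * q ^ j := by
          calc q ^ (m - 1) = q ^ i * q ^ j := by rw [← pow_add]; congr 1; omega
            _ ≤ g * q ^ j := Nat.mul_le_mul_right _ hqi
        omega
      have hwlt : q ^ (m - 2 - i) + g * q ^ j < 2 * n := by
        have h5 : (g + 1) * q ^ j ≤ q ^ (i + 1) * q ^ j := Nat.mul_le_mul_right _ hgi
        have h6 : q ^ (i + 1) * q ^ j = q ^ m := by rw [← pow_add]; congr 1; omega
        have h8 : (g + 1) * q ^ j = g * q ^ j + q ^ j := by ring
        have h9 : q ^ (m - 2 - i) * q ≤ q ^ j := by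
          rw [← pow_succ]; exact Nat.pow_le_pow_right hq1 (by omega)
        have h10 : q ^ (m - 2 - i) * 3 ≤ q ^ (m - 2 - i) * q :=
          Nat.mul_le_mul_left _ hq3
        have hu1 : 1 ≤ q ^ (m - 2 - i) := Nat.one_le_pow _ _ (by omega)
        omega
      have hmod : (2 * (s * q ^ j)) % (2 * n) = 2 * n - (q ^ (m - 2 - i) + g * q ^ j) :=
        neg_mod_helper (2 * n) _ _ _ (q ^ j) hx h2 (by omega) hwlt
      have hdiv : 2 * (s * q ^ j % n) = 2 * (s * q ^ j) % (2 * n) :=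
        (Nat.mul_mod_mul_left 2 (s * q ^ j) n).symm
      omega
end

section
/- Let q be an odd prime power, m ≥ 2, and n = (q^m-1)/2. The second largest q-cyclotomic coset leader modulo n is δ₂ = (q^m - 1 - q^{m-1} - q^{⌊(m+1)/2⌋})/2, and its q-cyclotomic coset has size m. -/
private lemma pow_mod_aux {q m N : ℕ} (hqm : q ^ m ≡ 1 [MOD N]) (hm : 0 < m) (i : ℕ) :
    q ^ i ≡ q ^ (i % m) [MOD N] := by
  conv_lhs => rw [← Nat.div_add_mod i m]
  rw [pow_add, pow_mul]
  calc (q ^ m) ^ (i / m) * q ^ (i % m)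
      ≡ 1 ^ (i / m) * q ^ (i % m) [MOD N] := (hqm.pow _).mul (Nat.ModEq.refl _)
    _ = q ^ (i % m) := by rw [one_pow, one_mul]

private lemma two_pow_mul_mod {q m : ℕ} (hq : 3 ≤ q) (hm : 2 ≤ m) {a b : ℕ}
    (ha : a < m) (hb : b < m) (j : ℕ) :
    (q ^ a + q ^ b) * q ^ j % (q ^ m - 1) = q ^ ((a + j) % m) + q ^ ((b + j) % m) := by
  have hm0 : 0 < m := by omega
  have h1 : (1:ℕ) ≤ q ^ m := Nat.one_le_pow _ _ (by omega)
  have hqm : q ^ m ≡ 1 [MOD q ^ m - 1] := by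
    show q ^ m % (q ^ m - 1) = 1 % (q ^ m - 1)
    set M := q ^ m - 1 with hM
    rw [show q ^ m = M + 1 by omega, Nat.add_mod_left]
  have hcong : (q ^ a + q ^ b) * q ^ j ≡ q ^ ((a+j) % m) + q ^ ((b+j) % m) [MOD q ^ m - 1] := by
    rw [add_mul, ← pow_add, ← pow_add]
    exact (pow_mod_aux hqm hm0 (a+j)).add (pow_mod_aux hqm hm0 (b+j))
  have l1 : (a+j) % m ≤ m - 1 := by have := Nat.mod_lt (a+j) hm0; omega
  have l2 : (b+j) % m ≤ m - 1 := by have := Nat.mod_lt (b+j) hm0; omega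
  have e1 : q ^ ((a+j)%m) ≤ q ^ (m-1) := Nat.pow_le_pow_right (by omega) l1
  have e2 : q ^ ((b+j)%m) ≤ q ^ (m-1) := Nat.pow_le_pow_right (by omega) l2
  have g3 : q ^ m = q ^ (m-1) * q := by rw [← pow_succ]; congr 1; omega
  have g4 : 3 ≤ q ^ (m-1) := by
    have : q ^ 1 ≤ q ^ (m-1) := Nat.pow_le_pow_right (by omega) (by omega)
    rw [pow_one] at this; omega
  have g5 : q ^ (m-1) * 3 ≤ q ^ (m-1) * q := Nat.mul_le_mul_left _ hq
  have hb1 : q ^ ((a+j)%m) + q ^ ((b+j)%m) < q ^ m - 1 := by omega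
  calc (q^a+q^b) * q^j % (q^m-1)
      = (q ^ ((a+j)%m) + q ^ ((b+j)%m)) % (q^m-1) := hcong
    _ = _ := Nat.mod_eq_of_lt hb1

private lemma sum_lt_aux {q m : ℕ} (hq : 3 ≤ q) (hm : 2 ≤ m) {j : ℕ}
    (hj0 : 0 < j) (hjm : j < m) :
    q ^ ((m - 1 + j) % m) + q ^ (((m+1)/2 + j) % m) < q ^ (m - 1) + q ^ ((m+1)/2) := by
  have htm : (m+1)/2 ≤ m - 1 := by omega
  have he1 : (m - 1 + j) % m = j - 1 := by
    rw [show m - 1 + j = m + (j - 1) by omega, Nat.add_mod_left, Nat.mod_eq_of_lt (by omega)]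
  rw [he1]
  have g3 : q ^ m = q ^ (m-1) * q := by rw [← pow_succ]; congr 1; omega
  have g4 : 3 ≤ q ^ (m-2+1) := by
    have : q ^ 1 ≤ q ^ (m-2+1) := Nat.pow_le_pow_right (by omega) (by omega)
    rw [pow_one] at this; omega
  have key2 : 2 * q ^ (m-2) < q ^ (m-1) := by
    have e : q ^ (m-1) = q ^ (m-2) * q := by rw [← pow_succ]; congr 1; omega
    have e2 : q ^ (m-2) * 3 ≤ q ^ (m-2) * q := Nat.mul_le_mul_left _ hq
    have e3 : 0 < q ^ (m-2) := pow_pos (by omega) _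
    omega
  have h5 : 0 < q ^ ((m+1)/2) := pow_pos (by omega) _
  rcases Nat.lt_or_ge ((m+1)/2 + j) m with hc | hc
  · rcases Nat.eq_or_lt_of_le (show (m+1)/2 + j ≤ m - 1 by omega) with he | he
    · rw [Nat.mod_eq_of_lt hc, he]
      have : q ^ (j-1) < q ^ ((m+1)/2) :=
        Nat.pow_lt_pow_right (by omega) (by omega)
      omega
    · rw [Nat.mod_eq_of_lt hc]
      have h1 : q ^ (j-1) ≤ q ^ (m-2) := Nat.pow_le_pow_right (by omega) (by omega)
      have h2 : q ^ ((m+1)/2+j) ≤ q ^ (m-2) := Nat.pow_le_pow_right (by omega) (by omega)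
      have h3 : q ^ (m-2) < q ^ (m-1) := Nat.pow_lt_pow_right (by omega) (by omega)
      omega
  · obtain ⟨r, hr⟩ : ∃ r, (m+1)/2 + j = m + r := ⟨(m+1)/2 + j - m, by omega⟩
    rw [hr, Nat.add_mod_left, Nat.mod_eq_of_lt (show r < m by omega)]
    have h1 : q ^ (j-1) ≤ q ^ (m-2) := Nat.pow_le_pow_right (by omega) (by omega)
    have h2 : q ^ r ≤ q ^ (m-2) := Nat.pow_le_pow_right (by omega) (by omega)
    omega

private lemma compl_mod {q m M x y : ℕ} (hqm : q ^ m = M + 1) (hx0 : 0 < x) (hxM : x < M)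
    (hxy : x + y = M) {j : ℕ} (hj : j ≤ m) :
    x * q ^ j % M + y * q ^ j % M = M := by
  have hM0 : 0 < M := by omega
  have hxne : x * q ^ j % M ≠ 0 := by
    intro h0
    have hdvd : M ∣ x * q ^ j := Nat.dvd_of_mod_eq_zero h0
    have hdvd2 : M ∣ x * q ^ m := by
      have he : x * q ^ m = x * q ^ j * q ^ (m - j) := by
        rw [mul_assoc, ← pow_add]; congr 2; omega
      rw [he]; exact hdvd.mul_right _
    rw [hqm, mul_add, mul_one] at hdvd2
    have hdx : M ∣ x := (Nat.dvd_add_right ⟨x, mul_comm x M⟩).mp hdvd2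
    have := Nat.le_of_dvd hx0 hdx
    omega
  have hsum : (x * q ^ j % M + y * q ^ j % M) % M = 0 := by
    rw [← Nat.add_mod, ← add_mul, hxy, Nat.mul_mod_right]
  have hdvd : M ∣ x * q ^ j % M + y * q ^ j % M := Nat.dvd_of_mod_eq_zero hsum
  have hb1 : x * q ^ j % M < M := Nat.mod_lt _ hM0
  have hb2 : y * q ^ j % M < M := Nat.mod_lt _ hM0
  obtain ⟨c, hc⟩ := hdvd
  have hc2 : c < 2 := by
    by_contra hcc
    have : M * 2 ≤ M * c := Nat.mul_le_mul_left _ (by omega)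
    omega
  interval_cases c <;> omega

private lemma rot_eq {q m : ℕ} (hq : 2 ≤ q) {y j : ℕ} (hy : y < q ^ m - 1) (hj : j ≤ m) :
    y * q ^ j % (q ^ m - 1) = y / q ^ (m - j) + y % q ^ (m - j) * q ^ j := by
  have hQ0 : 0 < q ^ (m - j) := pow_pos (by omega) _
  have hj0 : 0 < q ^ j := pow_pos (by omega) _
  have hQq : q ^ (m - j) * q ^ j = q ^ m := by rw [← pow_add]; congr 1; omega
  have hy' : q ^ (m - j) * (y / q ^ (m - j)) + y % q ^ (m - j) = y := Nat.div_add_mod y _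
  set Q := q ^ (m - j) with hQdef
  set a := y / Q with hadef
  set b := y % Q with hbdef
  have hbQ : b < Q := Nat.mod_lt _ hQ0
  have hqm1 : 1 ≤ q ^ m := Nat.one_le_pow _ _ (by omega)
  have haj : a < q ^ j := by
    rw [hadef, Nat.div_lt_iff_lt_mul hQ0]
    calc y < q ^ m := by omega
    _ = q ^ j * Q := by rw [mul_comm]; exact hQq.symm
  have hkey : y * q ^ j = (a + b * q ^ j) + (q ^ m - 1) * a := by
    have e0 : y * q ^ j = a * (Q * q ^ j) + b * q ^ j := by rw [← hy']; ring
    rw [hQq] at e0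
    have e1 : (q ^ m - 1) * a = q ^ m * a - a := by rw [Nat.sub_mul, one_mul]
    have e2 : a ≤ q ^ m * a := Nat.le_mul_of_pos_left a (by omega)
    have e3 : a * q ^ m = q ^ m * a := mul_comm _ _
    omega
  rw [hkey, Nat.add_mul_mod_self_left]
  have hXM : a + b * q ^ j < q ^ m - 1 := by
    by_contra hge
    push_neg at hge
    have e3 : (b+1) * q ^ j = b * q ^ j + q ^ j := by ring
    have e4 : (b+1) * q ^ j ≤ Q * q ^ j := Nat.mul_le_mul_right _ (by omega)
    have e6 : (Q-1) * q ^ j = Q * q ^ j - q ^ j := by rw [Nat.sub_mul, one_mul]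
    have e7 : b * q ^ j ≤ (Q-1) * q ^ j := Nat.mul_le_mul_right _ (by omega)
    have hb' : b * q ^ j = (Q-1) * q ^ j := by omega
    have hbb : b = Q - 1 := Nat.eq_of_mul_eq_mul_right hj0 hb'
    have haa : a + 1 = q ^ j := by omega
    have hy2 : Q * a + Q = Q * q ^ j := by
      rw [← haa, Nat.mul_succ]
    omega
  exact Nat.mod_eq_of_lt hXM


/-- The second largest q-cyclotomic coset leader modulo n = (q^m-1)/2 is
δ₂ = (q^m - 1 - q^{m-1} - q^{⌊(m+1)/2⌋})/2, i.e. δ₂ is a coset leader, is less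
than δ₁, every coset leader s with δ₂ < s < n equals δ₁, and the q-cyclotomic
coset of δ₂ has size m. -/
theorem stmt_8 (q m n d1 d2 : ℕ) (hq : ∃ p k : ℕ, p.Prime ∧ 0 < k ∧ q = p ^ k)
    (hqodd : Odd q) (hm : 2 ≤ m)
    (hn : n = (q ^ m - 1) / 2)
    (hd1 : d1 = (q ^ m - 1 - q ^ (m - 1) - q ^ ((m - 1) / 2)) / 2)
    (hd2 : d2 = (q ^ m - 1 - q ^ (m - 1) - q ^ ((m + 1) / 2)) / 2) :
    (∀ j : ℕ, d2 ≤ d2 * q ^ j % n) ∧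
    d2 < d1 ∧
    (∀ s : ℕ, d2 < s → s < n → (∀ j : ℕ, s ≤ s * q ^ j % n) → s = d1) ∧
    IsLeast {l : ℕ | 0 < l ∧ d2 * q ^ l ≡ d2 [MOD n]} m := by
  obtain ⟨p, k, hpp, hk0, hqeq⟩ := hq
  have hq3 : 3 ≤ q := by
    have h2 := hpp.two_le
    have hp2 : p ≠ 2 := by
      rintro rfl
      rw [hqeq] at hqodd
      obtain ⟨c, hc⟩ := hqodd
      have h2k : (2:ℕ) ^ k = 2 * 2 ^ (k-1) := by
        rw [← pow_succ']; congr 1; omega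
      omega
    have hple : p ≤ p ^ k := Nat.le_self_pow (by omega) p
    omega
  have hq_le : ∀ {c d : ℕ}, c ≤ d → q ^ c ≤ q ^ d :=
    fun {c d} hcd => Nat.pow_le_pow_right (by omega) hcd
  have hq_lt : ∀ {c d : ℕ}, c < d → q ^ c < q ^ d :=
    fun {c d} hcd => Nat.pow_lt_pow_right (by omega) hcd
  -- odd decompositions
  obtain ⟨a1, ha1⟩ : Odd (q ^ m) := hqodd.pow
  obtain ⟨a2, ha2⟩ : Odd (q ^ (m-1)) := hqodd.pow
  obtain ⟨a3, ha3⟩ : Odd (q ^ ((m+1)/2)) := hqodd.pow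
  obtain ⟨a4, ha4⟩ : Odd (q ^ ((m-1)/2)) := hqodd.pow
  -- size facts
  have g1 : q ^ ((m+1)/2) ≤ q ^ (m-1) := hq_le (by omega)
  have g2 : q ^ ((m-1)/2) < q ^ ((m+1)/2) := hq_lt (by omega)
  have g3 : q ^ m = q ^ (m-1) * q := by rw [← pow_succ]; congr 1; omega
  have g4 : 3 ≤ q ^ (m-1) := by
    have : q ^ 1 ≤ q ^ (m-1) := hq_le (by omega); rw [pow_one] at this; omega
  have g5 : q ^ (m-1) * 3 ≤ q ^ (m-1) * q := Nat.mul_le_mul_left _ hq3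
  have h2n : 2 * n = q ^ m - 1 := by omega
  have hd2eq : 2 * d2 + (q ^ (m-1) + q ^ ((m+1)/2)) = q ^ m - 1 := by omega
  have hd1eq : 2 * d1 + (q ^ (m-1) + q ^ ((m-1)/2)) = q ^ m - 1 := by omega
  have hqmM : q ^ m = (q ^ m - 1) + 1 := by omega
  have hm0 : 0 < m := by omega
  have hqmn : q ^ m ≡ 1 [MOD n] := by
    show q ^ m % n = 1 % n
    rw [show q ^ m = 1 + n * 2 by omega, Nat.add_mul_mod_self_left]
  have hdouble : ∀ a j : ℕ, 2 * (a * q ^ j % n) = 2 * a * q ^ j % (q ^ m - 1) := by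
    intro a j
    have h1 : 2 * (a * q ^ j) % (2 * n) = 2 * (a * q ^ j % n) :=
      Nat.mul_mod_mul_left 2 (a * q ^ j) n
    rw [← h1, ← mul_assoc, h2n]
  have hd2pos : 0 < d2 := by omega
  have hd2n : d2 < n := by omega
  -- PART 1
  have part1 : ∀ j : ℕ, d2 ≤ d2 * q ^ j % n := by
    intro j
    have hred : d2 * q ^ j % n = d2 * q ^ (j % m) % n :=
      Nat.ModEq.mul_left d2 (pow_mod_aux hqmn hm0 j)
    have hj' : j % m < m := Nat.mod_lt _ hm0
    have hcompl := compl_mod (x := 2*d2) (y := q ^ (m-1) + q ^ ((m+1)/2)) hqmM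
      (by omega) (by omega) hd2eq (le_of_lt hj')
    have hAmod := two_pow_mul_mod hq3 hm (show m-1 < m by omega)
      (show (m+1)/2 < m by omega) (j % m)
    have hle : q ^ ((m-1 + j % m) % m) + q ^ (((m+1)/2 + j % m) % m)
        ≤ q ^ (m-1) + q ^ ((m+1)/2) := by
      obtain h0 | h0 := Nat.eq_zero_or_pos (j % m)
      · rw [h0, add_zero, add_zero, Nat.mod_eq_of_lt (show m-1 < m by omega),
          Nat.mod_eq_of_lt (show (m+1)/2 < m by omega)]
      · exact le_of_lt (sum_lt_aux hq3 hm h0 hj')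
    have hdd := hdouble d2 (j % m)
    omega
  -- PART 2
  have part2 : d2 < d1 := by omega
  refine ⟨part1, part2, ?_, ?_, ?_⟩
  -- PART 3
  · intro s hs1 hs2 hs3
    have hy_s : 2 * s + (2 * n - 2 * s) = q ^ m - 1 := by omega
    set y := 2 * n - 2 * s with hydef
    have hy0 : 0 < y := by omega
    have hyA : y < q ^ (m-1) + q ^ ((m+1)/2) := by omega
    have hyM : y < q ^ m - 1 := by omega
    have hrot : ∀ jj, jj ≤ m → y / q ^ (m-jj) + y % q ^ (m-jj) * q ^ jj ≤ y := by
      intro jj hjj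
      have h1 := hs3 jj
      have hdd := hdouble s jj
      have hcompl := compl_mod (x := 2*s) (y := y) hqmM (by omega) (by omega) hy_s hjj
      have hre := rot_eq (m := m) (by omega) hyM hjj
      omega
    -- Step A: y ≥ q^(m-1)
    have hy_ge : q ^ (m-1) ≤ y := by
      by_contra hlt
      push_neg at hlt
      have hL1 : q ^ (Nat.log q y) ≤ y := Nat.pow_log_le_self q (by omega)
      have hL2 : y < q ^ (Nat.log q y + 1) := Nat.lt_pow_succ_log_self (by omega) y
      set L := Nat.log q y with hLdef
      have hLm : L + 1 ≤ m - 1 := by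
        by_contra hc
        push_neg at hc
        have : q ^ (m-1) ≤ q ^ L := hq_le (by omega)
        omega
      have hst := hrot (m-1-L) (by omega)
      rw [show m - (m-1-L) = L + 1 by omega, Nat.div_eq_of_lt hL2,
        Nat.mod_eq_of_lt hL2] at hst
      have hmul : q ^ L * q ^ (m-1-L) = q ^ (m-1) := by rw [← pow_add]; congr 1; omega
      have : q ^ L * q ^ (m-1-L) ≤ y * q ^ (m-1-L) := Nat.mul_le_mul_right _ hL1
      omega
    -- Step B
    set z := y - q ^ (m-1) with hzdef
    have hz_eq : y = q ^ (m-1) + z := by omega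
    have hzt : z < q ^ ((m+1)/2) := by omega
    have hz0 : 0 < z := by omega
    have hK1 : q ^ (Nat.log q z) ≤ z := Nat.pow_log_le_self q (by omega)
    have hK2 : z < q ^ (Nat.log q z + 1) := Nat.lt_pow_succ_log_self (by omega) z
    set K := Nat.log q z with hKdef
    have hKh : K ≤ (m-1)/2 := by
      by_contra hc
      push_neg at hc
      have : q ^ ((m+1)/2) ≤ q ^ K := hq_le (by omega)
      omega
    have hst := hrot (m-1-K) (by omega)
    rw [show m - (m-1-K) = K + 1 by omega] at hst
    have hsplit : q ^ (K+1) * q ^ (m-K-2) = q ^ (m-1) := by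
      rw [← pow_add]; congr 1; omega
    have hyrepr : y = z + q ^ (K+1) * q ^ (m-K-2) := by omega
    rw [hyrepr, Nat.add_mul_mod_self_left, Nat.mod_eq_of_lt hK2,
      Nat.add_mul_div_left _ _ (pow_pos (show 0 < q by omega) _),
      Nat.div_eq_of_lt hK2, zero_add] at hst
    rw [← hyrepr] at hst
    -- hst : q^(m-K-2) + z * q^(m-1-K) ≤ y
    have hmul1 : q ^ K * q ^ (m-1-K) = q ^ (m-1) := by rw [← pow_add]; congr 1; omega
    have h1 : q ^ (m-1) ≤ z * q ^ (m-1-K) := by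
      have := Nat.mul_le_mul_right (q ^ (m-1-K)) hK1
      omega
    have h2 : q ^ (m-K-2) ≤ z := by omega
    have h3 : m - K - 2 < K + 1 := by
      by_contra hc
      push_neg at hc
      have : q ^ (K+1) ≤ q ^ (m-K-2) := hq_le (by omega)
      omega
    have hKeq : K = (m-1)/2 := by omega
    rw [hKeq] at hst hK1 hK2
    have hfin : z = q ^ ((m-1)/2) := by
      rcases Nat.even_or_odd m with hev | hod
      · -- m even : m = 2v+2 with v = (m-1)/2
        have hme : m % 2 = 0 := Nat.even_iff.mp hev
        rw [show m - (m-1)/2 - 2 = (m-1)/2 by omega,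
          show m - 1 - (m-1)/2 = (m-1)/2 + 1 by omega] at hst
        have hp1 : q ^ ((m-1)/2) * q ^ ((m-1)/2 + 1) = q ^ (m-1) := by
          rw [← pow_add]; congr 1; omega
        by_contra hne
        have h7 : q ^ ((m-1)/2) + 1 ≤ z := by omega
        have h8 : (q ^ ((m-1)/2) + 1) * q ^ ((m-1)/2 + 1) ≤ z * q ^ ((m-1)/2 + 1) :=
          Nat.mul_le_mul_right _ h7
        have h9 : (q ^ ((m-1)/2) + 1) * q ^ ((m-1)/2 + 1)
            = q ^ (m-1) + q ^ ((m-1)/2 + 1) := by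
          rw [add_mul, one_mul, hp1]
        omega
      · -- m odd : m = 2v+1
        have hmo : m % 2 = 1 := Nat.odd_iff.mp hod
        rw [show m - (m-1)/2 - 2 = (m-1)/2 - 1 by omega,
          show m - 1 - (m-1)/2 = (m-1)/2 by omega] at hst
        have hp1 : q ^ ((m-1)/2) * q ^ ((m-1)/2) = q ^ (m-1) := by
          rw [← pow_add]; congr 1; omega
        have hwz : z = q ^ ((m-1)/2) + (z - q ^ ((m-1)/2)) := by omega
        set w := z - q ^ ((m-1)/2) with hwdef
        have hz2 : z * q ^ ((m-1)/2) = q ^ (m-1) + w * q ^ ((m-1)/2) := by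
          calc z * q ^ ((m-1)/2) = (q ^ ((m-1)/2) + w) * q ^ ((m-1)/2) := by rw [← hwz]
          _ = q ^ ((m-1)/2) * q ^ ((m-1)/2) + w * q ^ ((m-1)/2) := by ring
          _ = q ^ (m-1) + w * q ^ ((m-1)/2) := by rw [hp1]
        have hq3v : 3 ≤ q ^ ((m-1)/2) := by
          have : q ^ 1 ≤ q ^ ((m-1)/2) := hq_le (by omega)
          rw [pow_one] at this; omega
        have hpos1 : 0 < q ^ ((m-1)/2 - 1) := pow_pos (by omega) _
        have hw1 : w ≤ 1 := by
          by_contra hcw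
          push_neg at hcw
          have c1 : 2 * q ^ ((m-1)/2) ≤ w * q ^ ((m-1)/2) :=
            Nat.mul_le_mul_right _ (by omega)
          have c2 : w * 3 ≤ w * q ^ ((m-1)/2) := Nat.mul_le_mul_left _ hq3v
          omega
        omega
    omega
  -- PART 4a : m is in the set
  · refine ⟨by omega, ?_⟩
    have := Nat.ModEq.mul_left d2 hqmn
    simpa using this
  -- PART 4b : lower bound
  · rintro l ⟨hl0, hlmod⟩
    by_contra hc
    push_neg at hc
    have hmodeq : d2 * q ^ l % n = d2 % n := hlmod
    have hd2m : d2 % n = d2 := Nat.mod_eq_of_lt hd2n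
    have hdd := hdouble d2 l
    have hcompl := compl_mod (x := 2*d2) (y := q ^ (m-1) + q ^ ((m+1)/2)) hqmM
      (by omega) (by omega) hd2eq (show l ≤ m by omega)
    have hAmod := two_pow_mul_mod hq3 hm (show m-1 < m by omega)
      (show (m+1)/2 < m by omega) l
    have hlt := sum_lt_aux hq3 hm hl0 (show l < m by omega)
    omega
end

section
/- Let q be an odd prime power, m ≥ 6, and n = (q^m-1)/2. The third largest q-cyclotomic coset leader modulo n is δ₃ = (q^m - 1 - q^{m-1} - q^{⌊(m+3)/2⌋})/2, and its q-cyclotomic coset has size m. -/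
private lemma ltAux (Qj Q1 Qm a b x : ℕ) (hQ : Q1 * Qj = Qm) (ha : a < Qj) (hb : b < Q1)
    (hab : Q1 * a + b = x) (hx : x < Qm - 1) (h1 : 1 ≤ Qj) (h2 : 1 ≤ Q1) :
    a + b * Qj < Qm - 1 := by
  rcases Nat.lt_or_ge (b + 1) Q1 with hb2 | hb1
  · -- b + 2 ≤ Q1
    have hmul : b * Qj ≤ (Q1 - 2) * Qj := Nat.mul_le_mul_right _ (by omega)
    have e : (Q1 - 2) * Qj = Qm - 2 * Qj := by rw [Nat.sub_mul, hQ]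
    have hQjm : 2 * Qj ≤ Qm := by
      calc 2 * Qj ≤ Q1 * Qj := Nat.mul_le_mul_right _ (by omega)
        _ = Qm := hQ
    omega
  · -- b = Q1 - 1
    have hbe : b = Q1 - 1 := by omega
    have hxe : Q1 * a + Q1 - 1 = x := by omega
    have hexp : Q1 * (a + 1) = Q1 * a + Q1 := by ring
    have hlt2 : Q1 * (a + 1) < Q1 * Qj := by rw [hQ]; omega
    have haQj : a + 1 < Qj := lt_of_mul_lt_mul_left hlt2 (Nat.zero_le _)
    have hbQj : b * Qj = Qm - Qj := by
      rw [hbe, Nat.sub_mul, one_mul, hQ]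
    have hQjQm : Qj ≤ Qm := by
      calc Qj = 1 * Qj := (one_mul _).symm
        _ ≤ Q1 * Qj := Nat.mul_le_mul_right _ h2
        _ = Qm := hQ
    omega

private lemma rotEq (q m j x : ℕ) (hq : 2 ≤ q) (hm : 0 < m) (hj : j ≤ m) (hx : x < q ^ m - 1) :
    x * q ^ j % (q ^ m - 1) = x / q ^ (m - j) + x % q ^ (m - j) * q ^ j := by
  have hQm : 1 ≤ q ^ m := Nat.one_le_pow _ _ (by omega)
  have hQ : q ^ (m - j) * q ^ j = q ^ m := by rw [← pow_add]; congr 1; omega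
  have hpos1 : 0 < q ^ (m - j) := Nat.pow_pos (by omega)
  have hqj : 1 ≤ q ^ j := Nat.one_le_pow _ _ (by omega)
  set a := x / q ^ (m - j) with ha_def
  set b := x % q ^ (m - j) with hb_def
  have hab : q ^ (m - j) * a + b = x := Nat.div_add_mod x _
  have hb : b < q ^ (m - j) := Nat.mod_lt x hpos1
  have ha : a < q ^ j := by
    rw [ha_def, Nat.div_lt_iff_lt_mul hpos1]
    calc x < q ^ m := by omega
      _ = q ^ j * q ^ (m - j) := by rw [mul_comm]; exact hQ.symm
  have key : x * q ^ j = (a + b * q ^ j) + (q ^ m - 1) * a := by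
    have hQ' : (q : ℤ) ^ (m - j) * q ^ j = q ^ m := by exact_mod_cast hQ
    have hab' : (q : ℤ) ^ (m - j) * a + b = x := by exact_mod_cast hab
    zify [hQm]
    linear_combination (q : ℤ) ^ j * hab'.symm + (a : ℤ) * hQ'
  have hlt : a + b * q ^ j < q ^ m - 1 :=
    ltAux (q ^ j) (q ^ (m - j)) (q ^ m) a b x hQ ha hb hab hx hqj (by omega)
  rw [key, Nat.add_mul_mod_self_left, Nat.mod_eq_of_lt hlt]

private lemma powModCycle (q m c : ℕ) (hq : 2 ≤ q) (hm : 0 < m) :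
    q ^ c ≡ q ^ (c % m) [MOD q ^ m - 1] := by
  have hQm : 1 ≤ q ^ m := Nat.one_le_pow _ _ (by omega)
  have h1 : (1 : ℕ) ≡ q ^ m [MOD q ^ m - 1] := (Nat.modEq_iff_dvd' hQm).mpr dvd_rfl
  calc q ^ c = (q ^ m) ^ (c / m) * q ^ (c % m) := by
        rw [← pow_mul, ← pow_add]
        congr 1
        exact (Nat.div_add_mod c m).symm
    _ ≡ 1 ^ (c / m) * q ^ (c % m) [MOD q ^ m - 1] :=
        Nat.ModEq.mul (h1.symm.pow _) (Nat.ModEq.refl _)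
    _ = q ^ (c % m) := by rw [one_pow, one_mul]

private lemma coprimePow (q m j : ℕ) (hq : 2 ≤ q) (hm : 0 < m) :
    Nat.Coprime (q ^ j) (q ^ m - 1) := by
  have hQm : 1 ≤ q ^ m := Nat.one_le_pow _ _ (by omega)
  have h : Nat.Coprime (q ^ m) (q ^ m - 1) := by
    have h2 : Nat.Coprime (1 + (q ^ m - 1)) (q ^ m - 1) :=
      Nat.coprime_add_self_left.mpr (Nat.coprime_one_left _)
    rwa [add_comm, Nat.sub_add_cancel hQm] at h2
  exact Nat.Coprime.pow_left _ (h.coprime_dvd_left (dvd_pow_self q (by omega)))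

private lemma sumRot (q m j x y : ℕ) (hq : 2 ≤ q) (hm : 0 < m)
    (hx : 0 < x) (hy : 0 < y) (hxy : x + y = q ^ m - 1) :
    x * q ^ j % (q ^ m - 1) + y * q ^ j % (q ^ m - 1) = q ^ m - 1 := by
  have hMpos : 0 < q ^ m - 1 := by omega
  have hdvd : (q ^ m - 1) ∣ (x * q ^ j % (q ^ m - 1) + y * q ^ j % (q ^ m - 1)) := by
    apply Nat.dvd_of_mod_eq_zero
    rw [← Nat.add_mod, ← add_mul, hxy, Nat.mul_mod_right]
  have hB : 0 < y * q ^ j % (q ^ m - 1) := by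
    rcases Nat.eq_zero_or_pos (y * q ^ j % (q ^ m - 1)) with h0 | h
    · exfalso
      have hd : (q ^ m - 1) ∣ y * q ^ j := Nat.dvd_of_mod_eq_zero h0
      have hcop : Nat.Coprime (q ^ m - 1) (q ^ j) := (coprimePow q m j hq hm).symm
      have hd2 : (q ^ m - 1) ∣ y := hcop.dvd_of_dvd_mul_right hd
      have := Nat.le_of_dvd hy hd2
      omega
    · exact h
  have hA' : x * q ^ j % (q ^ m - 1) < q ^ m - 1 := Nat.mod_lt _ hMpos
  have hB' : y * q ^ j % (q ^ m - 1) < q ^ m - 1 := Nat.mod_lt _ hMpos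
  obtain ⟨k, hk⟩ := hdvd
  have hk2 : k < 2 := by
    by_contra hcc
    push_neg at hcc
    have : (q ^ m - 1) * 2 ≤ (q ^ m - 1) * k := Nat.mul_le_mul_left _ hcc
    omega
  interval_cases k <;> omega

set_option maxHeartbeats 2000000

/-- For m ≥ 6, the third largest q-cyclotomic coset leader modulo n = (q^m-1)/2
is δ₃ = (q^m - 1 - q^{m-1} - q^{⌊(m+3)/2⌋})/2, i.e. δ₃ is a coset leader, is
less than δ₂, every coset leader s with δ₃ < s < n equals δ₁ or δ₂, and the
q-cyclotomic coset of δ₃ has size m. -/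
theorem stmt_9 (q m n d1 d2 d3 : ℕ) (hq : ∃ p k : ℕ, p.Prime ∧ 0 < k ∧ q = p ^ k)
    (hqodd : Odd q) (hm : 6 ≤ m)
    (hn : n = (q ^ m - 1) / 2)
    (hd1 : d1 = (q ^ m - 1 - q ^ (m - 1) - q ^ ((m - 1) / 2)) / 2)
    (hd2 : d2 = (q ^ m - 1 - q ^ (m - 1) - q ^ ((m + 1) / 2)) / 2)
    (hd3 : d3 = (q ^ m - 1 - q ^ (m - 1) - q ^ ((m + 3) / 2)) / 2) :
    (∀ j : ℕ, d3 ≤ d3 * q ^ j % n) ∧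
    d3 < d2 ∧
    (∀ s : ℕ, d3 < s → s < n → (∀ j : ℕ, s ≤ s * q ^ j % n) → s = d1 ∨ s = d2) ∧
    IsLeast {l : ℕ | 0 < l ∧ d3 * q ^ l ≡ d3 [MOD n]} m := by
  obtain ⟨p, k, hp, hk, hqpk⟩ := hq
  have hq3 : 3 ≤ q := by
    have hp2 : 2 ≤ p := hp.two_le
    have hpdvd : p ∣ q := hqpk ▸ dvd_pow_self p (by omega)
    have hqm2 : q % 2 = 1 := Nat.odd_iff.mp hqodd
    have hpne2 : p ≠ 2 := by
      rintro rfl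
      obtain ⟨c, hc⟩ := hpdvd
      omega
    have hp3 : 3 ≤ p := by
      rcases hp.eq_two_or_odd with h2 | hoddp <;> omega
    calc 3 ≤ p := hp3
      _ ≤ p ^ k := Nat.le_self_pow (by omega) p
      _ = q := hqpk.symm
  have hq2 : 2 ≤ q := by omega
  have hq1 : 1 < q := by omega
  have hm0 : 0 < m := by omega
  have hoddpow : ∀ i : ℕ, q ^ i % 2 = 1 := fun i => Nat.odd_iff.mp (hqodd.pow)
  set H : ℕ := (m + 3) / 2 with hHdef
  have hHa : m + 2 ≤ 2 * H ∧ 2 * H ≤ m + 3 := by omega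
  have hHm : H ≤ m - 2 := by omega
  have pw : ∀ i j : ℕ, i ≤ j → q ^ i ≤ q ^ j := fun i j hij => Nat.pow_le_pow_right (by omega) hij
  have hbig : ∀ e, e ≤ m - 2 → q ^ (m - 1) + q ^ e + 1 < q ^ m := by
    intro e he
    have h1 : q ^ e ≤ q ^ (m - 2) := pw _ _ he
    have h2 : 1 ≤ q ^ (m - 2) := Nat.one_le_pow _ _ (by omega)
    have h3 : q ^ (m - 2) * q = q ^ (m - 1) := by rw [← pow_succ]; congr 1; omega
    have h4 : q ^ (m - 1) * q = q ^ m := by rw [← pow_succ]; congr 1; omega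
    have h5 : q ^ (m - 2) * 3 ≤ q ^ (m - 2) * q := Nat.mul_le_mul_left _ hq3
    have h6 : q ^ (m - 1) * 3 ≤ q ^ (m - 1) * q := Nat.mul_le_mul_left _ hq3
    omega
  have hom := hoddpow m
  have ho1 := hoddpow (m - 1)
  have hoH := hoddpow H
  have hQm1 : 1 ≤ q ^ m := Nat.one_le_pow _ _ (by omega)
  have hMn : q ^ m - 1 = 2 * n := by omega
  have hbigH := hbig H hHm
  have ht3 : 2 * d3 = q ^ m - 1 - q ^ (m - 1) - q ^ H := by omega
  have he1m : (m - 1) / 2 ≤ m - 2 := by omega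
  have he2m : (m + 1) / 2 ≤ m - 2 := by omega
  have hbig1 := hbig ((m - 1) / 2) he1m
  have hbig2 := hbig ((m + 1) / 2) he2m
  have hoe1 := hoddpow ((m - 1) / 2)
  have hoe2 := hoddpow ((m + 1) / 2)
  have ht1 : 2 * d1 = q ^ m - 1 - q ^ (m - 1) - q ^ ((m - 1) / 2) := by omega
  have ht2 : 2 * d2 = q ^ m - 1 - q ^ (m - 1) - q ^ ((m + 1) / 2) := by omega
  have hQhm1 : q ^ H ≤ q ^ (m - 1) := pw _ _ (by omega)
  have hndvd : n ∣ q ^ m - 1 := ⟨2, by omega⟩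
  -- part (b)
  have partb : d3 < d2 := by
    have hlt : q ^ ((m + 1) / 2) < q ^ H := (Nat.pow_lt_pow_iff_right hq1).mpr (by omega)
    omega
  -- part (a)
  have parta : ∀ j : ℕ, d3 ≤ d3 * q ^ j % n := by
    intro j
    have hmodj : d3 * q ^ j % n = d3 * q ^ (j % m) % n :=
      Nat.ModEq.mul_left d3 (Nat.ModEq.of_dvd hndvd (powModCycle q m j hq2 hm0))
    rw [hmodj]
    set j' := j % m with hj'
    have hj'm : j' < m := by rw [hj']; exact Nat.mod_lt _ hm0
    have hd3n : d3 < n := by omega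
    rcases Nat.eq_zero_or_pos j' with h0 | hjpos
    · rw [h0, pow_zero, mul_one, Nat.mod_eq_of_lt hd3n]
    · have hx0pos : 0 < q ^ (m - 1) + q ^ H := by positivity
      have h2d3pos : 0 < 2 * d3 := by omega
      have hsum := sumRot q m j' (2 * d3) (q ^ (m - 1) + q ^ H) hq2 hm0 h2d3pos hx0pos (by omega)
      have ha' : (m - 1 + j') % m = j' - 1 := by
        rw [Nat.mod_eq_sub_mod (by omega), show m - 1 + j' - m = j' - 1 from by omega]
        exact Nat.mod_eq_of_lt (by omega)
      have hcong : (q ^ (m - 1) + q ^ H) * q ^ j' ≡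
          q ^ ((m - 1 + j') % m) + q ^ ((H + j') % m) [MOD q ^ m - 1] := by
        calc (q ^ (m - 1) + q ^ H) * q ^ j' = q ^ (m - 1 + j') + q ^ (H + j') := by
              rw [add_mul, ← pow_add, ← pow_add]
          _ ≡ _ [MOD q ^ m - 1] :=
              Nat.ModEq.add (powModCycle q m _ hq2 hm0) (powModCycle q m _ hq2 hm0)
      have hbound : q ^ ((m - 1 + j') % m) + q ^ ((H + j') % m) ≤ q ^ (m - 1) + q ^ H := by
        rw [ha']
        rcases eq_or_ne (H + j') (m - 1) with he | hne
        · have hb2 : (H + j') % m = m - 1 := by rw [he]; exact Nat.mod_eq_of_lt (by omega)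
          rw [hb2]
          have : q ^ (j' - 1) ≤ q ^ H := pw _ _ (by omega)
          omega
        · have hble : (H + j') % m ≤ m - 2 := by
            rcases Nat.lt_or_ge (H + j') m with hc | hc
            · rw [Nat.mod_eq_of_lt hc]; omega
            · rw [Nat.mod_eq_sub_mod hc, Nat.mod_eq_of_lt (by omega)]; omega
          have h1 : q ^ (j' - 1) ≤ q ^ (m - 2) := pw _ _ (by omega)
          have h2 : q ^ ((H + j') % m) ≤ q ^ (m - 2) := pw _ _ hble
          have h3 : q ^ (m - 2) * q = q ^ (m - 1) := by rw [← pow_succ]; congr 1; omega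
          have h5 : q ^ (m - 2) * 3 ≤ q ^ (m - 2) * q := Nat.mul_le_mul_left _ hq3
          have h6 : 0 < q ^ H := by positivity
          omega
      have hBval : (q ^ (m - 1) + q ^ H) * q ^ j' % (q ^ m - 1) =
          q ^ ((m - 1 + j') % m) + q ^ ((H + j') % m) := by
        calc (q ^ (m - 1) + q ^ H) * q ^ j' % (q ^ m - 1)
            = (q ^ ((m - 1 + j') % m) + q ^ ((H + j') % m)) % (q ^ m - 1) := hcong
          _ = _ := Nat.mod_eq_of_lt (by omega)
      have hA : 2 * d3 * q ^ j' % (q ^ m - 1) = 2 * (d3 * q ^ j' % n) := by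
        rw [mul_assoc, hMn]
        exact Nat.mul_mod_mul_left 2 _ n
      rw [hA, hBval] at hsum
      omega
  -- part (c)
  have partc : ∀ s : ℕ, d3 < s → s < n → (∀ j : ℕ, s ≤ s * q ^ j % n) → s = d1 ∨ s = d2 := by
    intro s hs3 hsn hmin
    set x := q ^ m - 1 - 2 * s with hxdef
    have hsM : 2 * s < q ^ m - 1 := by omega
    have hxeven : x % 2 = 0 := by omega
    have hxub : x < q ^ (m - 1) + q ^ H := by omega
    have hxpos : 0 < x := by omega
    have h2spos : 0 < 2 * s := by omega
    have hrot : ∀ j, j ≤ m → x * q ^ j % (q ^ m - 1) ≤ x := by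
      intro j hj
      have hs := hmin j
      have hsum := sumRot q m j (2 * s) x hq2 hm0 h2spos hxpos (by omega)
      have hA : 2 * s * q ^ j % (q ^ m - 1) = 2 * (s * q ^ j % n) := by
        rw [mul_assoc, hMn]
        exact Nat.mul_mod_mul_left 2 _ n
      rw [hA] at hsum
      omega
    have hxM : x < q ^ m - 1 := by omega
    have hxge : q ^ (m - 1) ≤ x := by
      by_contra hcon
      push_neg at hcon
      set p' := Nat.log q x with hpdef
      have h1 : q ^ p' ≤ x := Nat.pow_log_le_self q (by omega)
      have h2 : x < q ^ (p' + 1) := Nat.lt_pow_succ_log_self hq1 x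
      have hpm : p' < m - 1 := by
        have := (Nat.pow_lt_pow_iff_right hq1).mp (lt_of_le_of_lt h1 hcon)
        omega
      have hj : m - 1 - p' ≤ m := by omega
      have hr := hrot (m - 1 - p') hj
      rw [rotEq q m (m - 1 - p') x hq2 hm0 hj hxM,
        show m - (m - 1 - p') = p' + 1 from by omega,
        Nat.div_eq_of_lt h2, Nat.mod_eq_of_lt h2] at hr
      have hgt : q ^ (m - 1) ≤ x * q ^ (m - 1 - p') := by
        calc q ^ (m - 1) = q ^ p' * q ^ (m - 1 - p') := by rw [← pow_add]; congr 1; omega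
          _ ≤ x * q ^ (m - 1 - p') := Nat.mul_le_mul_right _ h1
      have hfin : x * q ^ (m - 1 - p') ≤ x := le_trans (Nat.le_add_left _ _) hr
      exact absurd (lt_of_lt_of_le hcon hgt) (not_lt.mpr hfin)
    set y := x - q ^ (m - 1) with hydef
    have hxy : x = q ^ (m - 1) + y := by omega
    have hyH : y < q ^ H := by omega
    have hy0 : 0 < y := by
      rcases Nat.eq_zero_or_pos y with h0 | hpos
      · omega
      · exact hpos
    set p2 := Nat.log q y with hp2def
    have h2a : q ^ p2 ≤ y := Nat.pow_log_le_self q (by omega)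
    have h2b : y < q ^ (p2 + 1) := Nat.lt_pow_succ_log_self hq1 y
    have hp2H : p2 < H := (Nat.pow_lt_pow_iff_right hq1).mp (lt_of_le_of_lt h2a hyH)
    have hp2m : p2 + 1 ≤ m - 1 := by omega
    have hsplit2 : x = y + q ^ (p2 + 1) * q ^ (m - 2 - p2) := by
      have e1 : q ^ (p2 + 1) * q ^ (m - 2 - p2) = q ^ (m - 1) := by
        rw [← pow_add]; congr 1; omega
      calc x = q ^ (m - 1) + y := hxy
        _ = q ^ (p2 + 1) * q ^ (m - 2 - p2) + y := by rw [e1]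
        _ = y + q ^ (p2 + 1) * q ^ (m - 2 - p2) := by ring
    have hmod2 : x % q ^ (p2 + 1) = y := by
      rw [hsplit2, Nat.add_mul_mod_self_left, Nat.mod_eq_of_lt h2b]
    have hdiv2 : x / q ^ (p2 + 1) = q ^ (m - 2 - p2) := by
      rw [hsplit2, Nat.add_mul_div_left _ _ (by positivity), Nat.div_eq_of_lt h2b, zero_add]
    have hj2 : m - 1 - p2 ≤ m := by omega
    have hmj2 : m - (m - 1 - p2) = p2 + 1 := by omega
    have hy2 : y < 2 * q ^ p2 := by
      by_contra hcon
      push_neg at hcon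
      have hr := hrot (m - 1 - p2) hj2
      rw [rotEq q m _ x hq2 hm0 hj2 hxM, hmj2, hmod2, hdiv2] at hr
      have hb1 : 2 * q ^ (m - 1) ≤ y * q ^ (m - 1 - p2) := by
        have e2 : q ^ p2 * q ^ (m - 1 - p2) = q ^ (m - 1) := by rw [← pow_add]; congr 1; omega
        calc 2 * q ^ (m - 1) = 2 * q ^ p2 * q ^ (m - 1 - p2) := by rw [mul_assoc, e2]
          _ ≤ y * q ^ (m - 1 - p2) := Nat.mul_le_mul_right _ hcon
      have hxlt2 : x < 2 * q ^ (m - 1) := by omega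
      have hfin : y * q ^ (m - 1 - p2) ≤ x := le_trans (Nat.le_add_left _ _) hr
      exact absurd (lt_of_lt_of_le hxlt2 hb1) (not_lt.mpr hfin)
    set z := y - q ^ p2 with hzdef
    have hyz : y = q ^ p2 + z := by omega
    have hzlt : z < q ^ p2 := by omega
    rcases Nat.eq_zero_or_pos z with hz0 | hzpos
    · -- x = q^(m-1) + q^p2
      have hr := hrot (m - 1 - p2) hj2
      rw [rotEq q m _ x hq2 hm0 hj2 hxM, hmj2, hmod2, hdiv2] at hr
      have e2 : q ^ p2 * q ^ (m - 1 - p2) = q ^ (m - 1) := by rw [← pow_add]; congr 1; omega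
      have hyq : y * q ^ (m - 1 - p2) = q ^ (m - 1) := by
        rw [show y = q ^ p2 from by omega, e2]
      rw [hyq] at hr
      have hle : q ^ (m - 2 - p2) ≤ q ^ p2 := by omega
      have hexp : m - 2 - p2 ≤ p2 := (Nat.pow_le_pow_iff_right hq1).mp hle
      have hp2cases : p2 = (m - 1) / 2 ∨ p2 = (m + 1) / 2 := by omega
      have h2s : 2 * s = q ^ m - 1 - q ^ (m - 1) - q ^ p2 := by omega
      rcases hp2cases with he | he
      · left; rw [he] at h2s; omega
      · right; rw [he] at h2s; omega
    · set p3 := Nat.log q z with hp3def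
      have h3a : q ^ p3 ≤ z := Nat.pow_log_le_self q (by omega)
      have h3b : z < q ^ (p3 + 1) := Nat.lt_pow_succ_log_self hq1 z
      have hp3p2 : p3 < p2 := (Nat.pow_lt_pow_iff_right hq1).mp (lt_of_le_of_lt h3a hzlt)
      have hsplit3 : x = z + q ^ (p3 + 1) * (q ^ (m - 2 - p3) + q ^ (p2 - 1 - p3)) := by
        have e1 : q ^ (p3 + 1) * q ^ (m - 2 - p3) = q ^ (m - 1) := by
          rw [← pow_add]; congr 1; omega
        have e2 : q ^ (p3 + 1) * q ^ (p2 - 1 - p3) = q ^ p2 := by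
          rw [← pow_add]; congr 1; omega
        calc x = q ^ (m - 1) + y := hxy
          _ = q ^ (m - 1) + (q ^ p2 + z) := by rw [← hyz]
          _ = z + (q ^ (p3 + 1) * q ^ (m - 2 - p3) + q ^ (p3 + 1) * q ^ (p2 - 1 - p3)) := by
              rw [e1, e2]; ring
          _ = z + q ^ (p3 + 1) * (q ^ (m - 2 - p3) + q ^ (p2 - 1 - p3)) := by ring
      have hmod3 : x % q ^ (p3 + 1) = z := by
        rw [hsplit3, Nat.add_mul_mod_self_left, Nat.mod_eq_of_lt h3b]
      have hj3 : m - 1 - p3 ≤ m := by omega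
      have hmj3 : m - (m - 1 - p3) = p3 + 1 := by omega
      have hz2 : z < 2 * q ^ p3 := by
        by_contra hcon
        push_neg at hcon
        have hr := hrot (m - 1 - p3) hj3
        rw [rotEq q m _ x hq2 hm0 hj3 hxM, hmj3, hmod3] at hr
        have hb1 : 2 * q ^ (m - 1) ≤ z * q ^ (m - 1 - p3) := by
          have e2 : q ^ p3 * q ^ (m - 1 - p3) = q ^ (m - 1) := by rw [← pow_add]; congr 1; omega
          calc 2 * q ^ (m - 1) = 2 * q ^ p3 * q ^ (m - 1 - p3) := by rw [mul_assoc, e2]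
            _ ≤ z * q ^ (m - 1 - p3) := Nat.mul_le_mul_right _ hcon
        have hxlt2 : x < 2 * q ^ (m - 1) := by omega
        have hfin : z * q ^ (m - 1 - p3) ≤ x := le_trans (Nat.le_add_left _ _) hr
        exact absurd (lt_of_lt_of_le hxlt2 hb1) (not_lt.mpr hfin)
      set u := z - q ^ p3 with hudef
      have hzu : z = q ^ p3 + u := by omega
      have hult : u < q ^ p3 := by omega
      rcases Nat.eq_zero_or_pos u with hu0 | hupos
      · exfalso
        have ho2 := hoddpow p2
        have ho3 := hoddpow p3
        omega
      · set p4 := Nat.log q u with hp4def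
        have h4a : q ^ p4 ≤ u := Nat.pow_log_le_self q (by omega)
        have h4b : u < q ^ (p4 + 1) := Nat.lt_pow_succ_log_self hq1 u
        have hp4p3 : p4 < p3 := (Nat.pow_lt_pow_iff_right hq1).mp (lt_of_le_of_lt h4a hult)
        exfalso
        have hgap : (p2 - p3 ≤ m - 2 - p2) ∨ (p3 - p4 ≤ m - 2 - p2) ∨ (p4 + 1 ≤ m - 2 - p2) := by
          omega
        rcases hgap with hg | hg | hg
        · have hr := hrot (m - 1 - p2) hj2
          rw [rotEq q m _ x hq2 hm0 hj2 hxM, hmj2, hmod2, hdiv2] at hr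
          have e2 : q ^ p2 * q ^ (m - 1 - p2) = q ^ (m - 1) := by rw [← pow_add]; congr 1; omega
          have e3 : q ^ (p2 + 1) ≤ q ^ p3 * q ^ (m - 1 - p2) := by
            rw [← pow_add]; exact pw _ _ (by omega)
          have hb1 : q ^ (m - 1) + q ^ (p2 + 1) ≤ y * q ^ (m - 1 - p2) := by
            calc q ^ (m - 1) + q ^ (p2 + 1)
                ≤ q ^ p2 * q ^ (m - 1 - p2) + q ^ p3 * q ^ (m - 1 - p2) := by omega
              _ = (q ^ p2 + q ^ p3) * q ^ (m - 1 - p2) := by ring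
              _ ≤ y * q ^ (m - 1 - p2) := Nat.mul_le_mul_right _ (by omega)
          have hxlt3 : x < q ^ (m - 1) + q ^ (p2 + 1) := by omega
          have hfin : y * q ^ (m - 1 - p2) ≤ x := le_trans (Nat.le_add_left _ _) hr
          exact absurd (lt_of_lt_of_le hxlt3 hb1) (not_lt.mpr hfin)
        · have hr := hrot (m - 1 - p3) hj3
          rw [rotEq q m _ x hq2 hm0 hj3 hxM, hmj3, hmod3] at hr
          have e2 : q ^ p3 * q ^ (m - 1 - p3) = q ^ (m - 1) := by rw [← pow_add]; congr 1; omega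
          have e3 : q ^ (p2 + 1) ≤ q ^ p4 * q ^ (m - 1 - p3) := by
            rw [← pow_add]; exact pw _ _ (by omega)
          have hb1 : q ^ (m - 1) + q ^ (p2 + 1) ≤ z * q ^ (m - 1 - p3) := by
            calc q ^ (m - 1) + q ^ (p2 + 1)
                ≤ q ^ p3 * q ^ (m - 1 - p3) + q ^ p4 * q ^ (m - 1 - p3) := by omega
              _ = (q ^ p3 + q ^ p4) * q ^ (m - 1 - p3) := by ring
              _ ≤ z * q ^ (m - 1 - p3) := Nat.mul_le_mul_right _ (by omega)
          have hxlt3 : x < q ^ (m - 1) + q ^ (p2 + 1) := by omega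
          have hfin : z * q ^ (m - 1 - p3) ≤ x := le_trans (Nat.le_add_left _ _) hr
          exact absurd (lt_of_lt_of_le hxlt3 hb1) (not_lt.mpr hfin)
        · have hj4 : m - 1 - p4 ≤ m := by omega
          have hmj4 : m - (m - 1 - p4) = p4 + 1 := by omega
          have hsplit4 : x = u + q ^ (p4 + 1) *
              (q ^ (m - 2 - p4) + q ^ (p2 - 1 - p4) + q ^ (p3 - 1 - p4)) := by
            have e1 : q ^ (p4 + 1) * q ^ (m - 2 - p4) = q ^ (m - 1) := by
              rw [← pow_add]; congr 1; omega
            have e2 : q ^ (p4 + 1) * q ^ (p2 - 1 - p4) = q ^ p2 := by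
              rw [← pow_add]; congr 1; omega
            have e3 : q ^ (p4 + 1) * q ^ (p3 - 1 - p4) = q ^ p3 := by
              rw [← pow_add]; congr 1; omega
            calc x = q ^ (m - 1) + (q ^ p2 + (q ^ p3 + u)) := by rw [hxy, hyz, hzu]
              _ = u + (q ^ (p4 + 1) * q ^ (m - 2 - p4) + q ^ (p4 + 1) * q ^ (p2 - 1 - p4)
                    + q ^ (p4 + 1) * q ^ (p3 - 1 - p4)) := by rw [e1, e2, e3]; ring
              _ = u + q ^ (p4 + 1) * (q ^ (m - 2 - p4) + q ^ (p2 - 1 - p4) + q ^ (p3 - 1 - p4)) := by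
                  ring
          have hmod4 : x % q ^ (p4 + 1) = u := by
            rw [hsplit4, Nat.add_mul_mod_self_left, Nat.mod_eq_of_lt h4b]
          have hdiv4 : q ^ (p2 + 1) ≤ x / q ^ (p4 + 1) := by
            rw [hsplit4, Nat.add_mul_div_left _ _ (by positivity), Nat.div_eq_of_lt h4b, zero_add]
            have h1 : q ^ (p2 + 1) ≤ q ^ (m - 2 - p4) := pw _ _ (by omega)
            omega
          have hr := hrot (m - 1 - p4) hj4
          rw [rotEq q m _ x hq2 hm0 hj4 hxM, hmj4, hmod4] at hr
          have hb2 : q ^ (m - 1) ≤ u * q ^ (m - 1 - p4) := by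
            have e2 : q ^ p4 * q ^ (m - 1 - p4) = q ^ (m - 1) := by rw [← pow_add]; congr 1; omega
            calc q ^ (m - 1) = q ^ p4 * q ^ (m - 1 - p4) := e2.symm
              _ ≤ u * q ^ (m - 1 - p4) := Nat.mul_le_mul_right _ h4a
          have hxlt3 : x < q ^ (m - 1) + q ^ (p2 + 1) := by omega
          have hsum2 : q ^ (p2 + 1) + q ^ (m - 1) ≤ x := le_trans (add_le_add hdiv4 hb2) hr
          have hsum3 : q ^ (m - 1) + q ^ (p2 + 1) ≤ x :=
            le_trans (le_of_eq (add_comm _ _)) hsum2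
          exact absurd (lt_of_lt_of_le hxlt3 hsum3) (lt_irrefl x)
  -- part (d)
  have hqmmod : q ^ m ≡ 1 [MOD n] := ((Nat.modEq_iff_dvd' (by omega)).mpr hndvd).symm
  have partd : IsLeast {l : ℕ | 0 < l ∧ d3 * q ^ l ≡ d3 [MOD n]} m := by
    constructor
    · exact ⟨hm0, by simpa using Nat.ModEq.mul_left d3 hqmmod⟩
    · intro l hl
      obtain ⟨hl0, hlmod⟩ := hl
      by_contra hcon
      push_neg at hcon
      have hx0pos : 0 < q ^ (m - 1) + q ^ H := by positivity
      have h2d3pos : 0 < 2 * d3 := by omega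
      have hsum := sumRot q m l (2 * d3) (q ^ (m - 1) + q ^ H) hq2 hm0 h2d3pos hx0pos (by omega)
      have hA : 2 * d3 * q ^ l % (q ^ m - 1) = 2 * d3 := by
        have h2 : 2 * (d3 * q ^ l) % (2 * n) = 2 * d3 % (2 * n) :=
          Nat.ModEq.mul_left' 2 hlmod
        rw [mul_assoc, hMn, h2]
        exact Nat.mod_eq_of_lt (by omega)
      have ha' : (m - 1 + l) % m = l - 1 := by
        rw [Nat.mod_eq_sub_mod (by omega), show m - 1 + l - m = l - 1 from by omega]
        exact Nat.mod_eq_of_lt (by omega)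
      have hcong : (q ^ (m - 1) + q ^ H) * q ^ l ≡
          q ^ ((m - 1 + l) % m) + q ^ ((H + l) % m) [MOD q ^ m - 1] := by
        calc (q ^ (m - 1) + q ^ H) * q ^ l = q ^ (m - 1 + l) + q ^ (H + l) := by
              rw [add_mul, ← pow_add, ← pow_add]
          _ ≡ _ [MOD q ^ m - 1] :=
              Nat.ModEq.add (powModCycle q m _ hq2 hm0) (powModCycle q m _ hq2 hm0)
      have hblem : (H + l) % m ≤ m - 1 := by
        have := Nat.mod_lt (H + l) hm0
        omega
      have hsmall : q ^ ((m - 1 + l) % m) + q ^ ((H + l) % m) ≤ q ^ (m - 1) + q ^ (m - 1) := by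
        have h1 : q ^ ((m - 1 + l) % m) ≤ q ^ (m - 1) := pw _ _ (by omega)
        have h2 : q ^ ((H + l) % m) ≤ q ^ (m - 1) := pw _ _ hblem
        omega
      have hBval : (q ^ (m - 1) + q ^ H) * q ^ l % (q ^ m - 1) =
          q ^ ((m - 1 + l) % m) + q ^ ((H + l) % m) := by
        have h4 : q ^ (m - 1) * q = q ^ m := by rw [← pow_succ]; congr 1; omega
        have h6 : q ^ (m - 1) * 3 ≤ q ^ (m - 1) * q := Nat.mul_le_mul_left _ hq3
        have h7 : 1 ≤ q ^ (m - 1) := Nat.one_le_pow _ _ (by omega)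
        calc (q ^ (m - 1) + q ^ H) * q ^ l % (q ^ m - 1)
            = (q ^ ((m - 1 + l) % m) + q ^ ((H + l) % m)) % (q ^ m - 1) := hcong
          _ = _ := Nat.mod_eq_of_lt (by omega)
      rw [hA, hBval] at hsum
      -- hsum : 2*d3 + (q^(l-1) + q^((H+l)%m)) = q^m - 1
      rw [ha'] at hsum
      have heq : q ^ (l - 1) + q ^ ((H + l) % m) = q ^ (m - 1) + q ^ H := by omega
      rcases eq_or_ne ((H + l) % m) (m - 1) with he | hne
      · rw [he] at heq
        have hql : q ^ (l - 1) = q ^ H := by omega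
        have hlH : l - 1 = H := Nat.pow_right_injective hq2 hql
        have hHl : H + l ≥ m := by omega
        rw [Nat.mod_eq_sub_mod hHl, Nat.mod_eq_of_lt (by omega)] at he
        omega
      · have hble : (H + l) % m ≤ m - 2 := by
          rcases Nat.lt_or_ge (H + l) m with hc | hc
          · rw [Nat.mod_eq_of_lt hc]
            rcases Nat.lt_or_ge (H + l) (m - 1) with hc2 | hc2
            · omega
            · exfalso; exact hne (by rw [Nat.mod_eq_of_lt hc]; omega)
          · rw [Nat.mod_eq_sub_mod hc, Nat.mod_eq_of_lt (by omega)]; omega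
        have h1 : q ^ (l - 1) ≤ q ^ (m - 2) := pw _ _ (by omega)
        have h2 : q ^ ((H + l) % m) ≤ q ^ (m - 2) := pw _ _ hble
        have h3 : q ^ (m - 2) * q = q ^ (m - 1) := by rw [← pow_succ]; congr 1; omega
        have h5 : q ^ (m - 2) * 3 ≤ q ^ (m - 2) * q := Nat.mul_le_mul_left _ hq3
        have h6 : 0 < q ^ H := by positivity
        omega
  exact ⟨parta, partb, partc, partd⟩
end

section
/- Let q be an odd prime power and m ≥ 3 odd. The number of pairs (x,y) ∈ F_{q^m}² with x^{q^{(m-1)/2}+1} + y^{q^{(m-1)/2}+1} = 0 and x^{q^{(m-3)/2}+1} + y^{q^{(m-3)/2}+1} = 0 equals 2q^m - 1 if q ≡ 1 (mod 4), and equals 1 if q ≡ 3 (mod 4). -/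
-- gcd divisibility lemma
lemma gcd_dvd_four (q b : ℕ) (hq : 1 ≤ q) :
    Nat.gcd (q ^ b * (q - 1)) (2 * (q ^ b + 1)) ∣ 4 := by
  set d := Nat.gcd (q ^ b * (q - 1)) (2 * (q ^ b + 1)) with hd
  have h1 : (d : ℤ) ∣ (q : ℤ) ^ b * ((q : ℤ) - 1) := by
    have := Nat.gcd_dvd_left (q ^ b * (q - 1)) (2 * (q ^ b + 1))
    have h := Int.natCast_dvd_natCast.mpr this
    push_cast [Nat.cast_sub hq] at h
    convert h using 2
  have h2 : (d : ℤ) ∣ 2 * ((q : ℤ) ^ b + 1) := by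
    have := Nat.gcd_dvd_right (q ^ b * (q - 1)) (2 * (q ^ b + 1))
    have h := Int.natCast_dvd_natCast.mpr this
    push_cast at h
    exact h
  have h3 : (d : ℤ) ∣ 2 * ((q : ℤ) - 1) := by
    have : 2 * ((q : ℤ) - 1) = 2 * ((q : ℤ) ^ b + 1) * ((q:ℤ) - 1) - 2 * ((q:ℤ) ^ b * ((q:ℤ) - 1)) := by ring
    rw [this]
    exact dvd_sub (Dvd.dvd.mul_right h2 _) (Dvd.dvd.mul_left h1 2)
  have h4 : (d : ℤ) ∣ 2 * ((q : ℤ) ^ b - 1) := by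
    have hdv : ((q:ℤ) - 1) ∣ ((q:ℤ) ^ b - 1) := by
      simpa using sub_dvd_pow_sub_pow (q : ℤ) 1 b
    obtain ⟨c, hc⟩ := hdv
    rw [hc, ← mul_assoc]
    exact Dvd.dvd.mul_right h3 c
  have h5 : (d : ℤ) ∣ 4 := by
    have : (4 : ℤ) = 2 * ((q : ℤ) ^ b + 1) - 2 * ((q:ℤ) ^ b - 1) := by ring
    rw [this]
    exact dvd_sub h2 h4
  exact_mod_cast h5

lemma key_usq (F : Type*) [Field F] (q b : ℕ) (hq : 1 ≤ q) (hodd : Odd q)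
    (u : F) (hu : u ≠ 0) (hne : (-1 : F) ≠ 1)
    (h1 : u ^ (q ^ (b + 1) + 1) = -1) (h2 : u ^ (q ^ b + 1) = -1) :
    u ^ 2 = -1 := by
  have hneg0 : (-1 : F) ≠ 0 := by simp
  have hexp : q ^ (b + 1) + 1 = (q ^ b + 1) + q ^ b * (q - 1) := by
    have e : q ^ (b + 1) = q ^ b * q := pow_succ q b
    have e2 : q ^ b * (q - 1) = q ^ b * q - q ^ b := by
      rw [Nat.mul_sub, mul_one]
    have e3 : q ^ b ≤ q ^ b * q := Nat.le_mul_of_pos_right _ (by omega)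
    omega
  have hn1 : u ^ (q ^ b * (q - 1)) = 1 := by
    have := h1
    rw [hexp, pow_add, h2] at this
    have := mul_left_cancel₀ hneg0 (this.trans (by ring : (-1 : F) = -1 * 1))
    exact this
  have hn2 : u ^ (2 * (q ^ b + 1)) = 1 := by
    rw [mul_comm, pow_mul, h2]
    ring
  set v : Fˣ := Units.mk0 u hu with hv
  have hv1 : v ^ (q ^ b * (q - 1)) = 1 := by
    ext
    simpa [hv] using hn1
  have hv2 : v ^ (2 * (q ^ b + 1)) = 1 := by
    ext
    simpa [hv] using hn2
  have hdvd : orderOf v ∣ 4 :=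
    dvd_trans (Nat.dvd_gcd (orderOf_dvd_of_pow_eq_one hv1) (orderOf_dvd_of_pow_eq_one hv2))
      (gcd_dvd_four q b hq)
  have hv4 : v ^ 4 = 1 := orderOf_dvd_iff_pow_eq_one.mp hdvd
  have hu4 : u ^ 4 = 1 := by
    have := congrArg (Units.val) hv4
    simpa [hv] using this
  have hfac : (u ^ 2 - 1) * (u ^ 2 + 1) = 0 := by
    have : u ^ 4 - 1 = 0 := by rw [hu4]; ring
    calc (u ^ 2 - 1) * (u ^ 2 + 1) = u ^ 4 - 1 := by ring
      _ = 0 := this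
  rcases mul_eq_zero.mp hfac with h | h
  · exfalso
    have hu2 : u ^ 2 = 1 := sub_eq_zero.mp h
    have hteven : q ^ b + 1 = 2 * ((q ^ b + 1) / 2) := by
      have : Odd (q ^ b) := Odd.pow hodd
      obtain ⟨e, he⟩ := this
      omega
    have : u ^ (q ^ b + 1) = 1 := by
      rw [hteven, pow_mul, hu2, one_pow]
    rw [h2] at this
    exact hne this
  · have := add_eq_zero_iff_eq_neg.mp h
    exact this

lemma count_sq (F : Type*) [Field F] [Fintype F] [DecidableEq F] (i : F)
    (hi : i ^ 2 = -1) (h2 : (2 : F) ≠ 0) :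
    (Finset.univ.filter (fun xy : F × F => xy.1 ^ 2 + xy.2 ^ 2 = 0)).card
      = 2 * Fintype.card F - 1 := by
  have hi0 : i ≠ 0 := by
    intro h; rw [h] at hi; norm_num at hi
  set f1 : F → F × F := fun y => (i * y, y) with hf1
  set f2 : F → F × F := fun y => (-(i * y), y) with hf2
  have hinj1 : Function.Injective f1 := fun a b h => (Prod.mk.injEq _ _ _ _ ▸ h : _ ∧ _).2
  have hinj2 : Function.Injective f2 := fun a b h => (Prod.mk.injEq _ _ _ _ ▸ h : _ ∧ _).2
  have hset : Finset.univ.filter (fun xy : F × F => xy.1 ^ 2 + xy.2 ^ 2 = 0)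
      = Finset.univ.image f1 ∪ Finset.univ.image f2 := by
    ext ⟨x, y⟩
    simp only [Finset.mem_filter, Finset.mem_union, Finset.mem_image, Finset.mem_univ,
      true_and, hf1, hf2, Prod.mk.injEq]
    constructor
    · intro h
      have hfac : (x - i * y) * (x + i * y) = 0 := by
        have : (x - i * y) * (x + i * y) = x ^ 2 + y ^ 2 := by
          linear_combination (-(y ^ 2)) * hi
        rw [this, h]
      rcases mul_eq_zero.mp hfac with h' | h'
      · exact Or.inl ⟨y, (sub_eq_zero.mp h').symm, rfl⟩
      · exact Or.inr ⟨y, (neg_eq_of_add_eq_zero_left h').symm ▸ rfl, rfl⟩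
    · rintro (⟨z, rfl, rfl⟩ | ⟨z, rfl, rfl⟩) <;> linear_combination (z ^ 2) * hi
  rw [hset]
  have hc1 : (Finset.univ.image f1).card = Fintype.card F := by
    rw [Finset.card_image_of_injective _ hinj1, Finset.card_univ]
  have hc2 : (Finset.univ.image f2).card = Fintype.card F := by
    rw [Finset.card_image_of_injective _ hinj2, Finset.card_univ]
  have hinter : (Finset.univ.image f1 ∩ Finset.univ.image f2) = {((0 : F), (0 : F))} := by
    ext ⟨x, y⟩
    simp only [Finset.mem_inter, Finset.mem_image, Finset.mem_univ, true_and,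
      Finset.mem_singleton, hf1, hf2, Prod.mk.injEq]
    constructor
    · rintro ⟨⟨z1, hx1, rfl⟩, ⟨z2, hx2, rfl⟩⟩
      have : 2 * (i * z2) = 0 := by linear_combination hx1 - hx2
      have hy0 : z2 = 0 := by
        rcases mul_eq_zero.mp this with h | h
        · exact absurd h h2
        · rcases mul_eq_zero.mp h with h' | h'
          · exact absurd h' hi0
          · exact h'
      constructor
      · rw [← hx1, hy0, mul_zero]
      · exact hy0
    · rintro ⟨rfl, rfl⟩
      exact ⟨⟨0, by simp⟩, ⟨0, by simp⟩⟩
  have hkey := Finset.card_union_add_card_inter (Finset.univ.image f1) (Finset.univ.image f2)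
  rw [hinter, hc1, hc2, Finset.card_singleton] at hkey
  have hpos : 1 ≤ Fintype.card F := Fintype.card_pos
  omega

lemma ratio_pow {F : Type*} [Field F] {x y : F} (hy : y ≠ 0) (n : ℕ)
    (h : x ^ n + y ^ n = 0) : (x * y⁻¹) ^ n = -1 := by
  have hyn : y ^ n ≠ 0 := pow_ne_zero _ hy
  rw [mul_pow, inv_pow, eq_neg_of_add_eq_zero_left h, neg_mul, mul_inv_cancel₀ hyn]

lemma ratio_pow_rev {F : Type*} [Field F] {x y : F} (hy : y ≠ 0) (n : ℕ)
    (h : (x * y⁻¹) ^ n = -1) : x ^ n + y ^ n = 0 := by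
  have hyn : y ^ n ≠ 0 := pow_ne_zero _ hy
  rw [mul_pow, inv_pow] at h
  have h2 : x ^ n = -y ^ n := by
    field_simp at h
    linear_combination h
  rw [h2]; ring

lemma pow_mod_four {q : ℕ} (r n : ℕ) (h : q % 4 = r) : q ^ n % 4 = r ^ n % 4 := by
  rw [Nat.pow_mod, h]

/-- The number of pairs (x,y) ∈ F_{q^m}² with
x^{q^{(m-1)/2}+1} + y^{q^{(m-1)/2}+1} = 0 and x^{q^{(m-3)/2}+1} + y^{q^{(m-3)/2}+1} = 0
equals 2q^m - 1 if q ≡ 1 (mod 4), and 1 if q ≡ 3 (mod 4). -/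
theorem stmt_12 (q m : ℕ) (hq : ∃ p k : ℕ, p.Prime ∧ 0 < k ∧ q = p ^ k)
    (hqodd : Odd q) (hm : 3 ≤ m) (hmodd : Odd m)
    (F : Type*) [Field F] [Fintype F] [DecidableEq F]
    (hF : Fintype.card F = q ^ m) :
    (Finset.univ.filter (fun xy : F × F =>
        xy.1 ^ (q ^ ((m - 1) / 2) + 1) + xy.2 ^ (q ^ ((m - 1) / 2) + 1) = 0 ∧
        xy.1 ^ (q ^ ((m - 3) / 2) + 1) + xy.2 ^ (q ^ ((m - 3) / 2) + 1) = 0)).card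
      = if q % 4 = 1 then 2 * q ^ m - 1 else 1 := by
  obtain ⟨p, k0, hp, hk0, hqp⟩ := hq
  have hq2 : 2 ≤ q := by
    have h1 : p ≤ p ^ k0 := Nat.le_self_pow (by omega) p
    have h2 := hp.two_le
    omega
  have hq1 : 1 ≤ q := by omega
  obtain ⟨kk, hkk⟩ := hmodd
  have hab0 : (m - 1) / 2 = (m - 3) / 2 + 1 := by omega
  set a := (m - 1) / 2 with ha
  set b := (m - 3) / 2 with hb
  have hab : a = b + 1 := hab0
  have hqmodd : Odd (q ^ m) := Odd.pow hqodd
  have hcardodd : Fintype.card F % 2 = 1 := by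
    rw [hF]
    obtain ⟨c, hc⟩ := hqmodd
    omega
  have hchar : ringChar F ≠ 2 := by
    intro h
    have := FiniteField.even_card_iff_char_two.mp h
    omega
  have hne : (-1 : F) ≠ 1 := Ring.neg_one_ne_one_of_char_ne_two hchar
  have h2F : (2 : F) ≠ 0 := Ring.two_ne_zero hchar
  have hsa0 : q ^ a + 1 ≠ 0 := by positivity
  have hsb0 : q ^ b + 1 ≠ 0 := by positivity
  have hq4 : q % 4 = 1 ∨ q % 4 = 3 := by
    obtain ⟨c, hc⟩ := hqodd
    omega
  rcases hq4 with hq4 | hq4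
  · -- q ≡ 1 mod 4
    rw [if_pos hq4]
    have hcard4 : Fintype.card F % 4 = 1 := by
      rw [hF, Nat.pow_mod, hq4, one_pow]
      norm_num
    obtain ⟨i, hi⟩ : ∃ i : F, i ^ 2 = -1 := by
      have hsq : IsSquare (-1 : F) :=
        (FiniteField.isSquare_neg_one_iff (F := F)).mpr (by omega)
      obtain ⟨r, hr⟩ := hsq
      exact ⟨r, by rw [sq]; exact hr.symm⟩
    -- oddness of half-exponents
    have hhalf : ∀ n : ℕ, Odd ((q ^ n + 1) / 2) := by
      intro n
      have h1 : q ^ n % 4 = 1 := by rw [Nat.pow_mod, hq4, one_pow]; norm_num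
      exact ⟨q ^ n / 4, by omega⟩
    have heven : ∀ n : ℕ, q ^ n + 1 = 2 * ((q ^ n + 1) / 2) := by
      intro n
      have h1 : q ^ n % 4 = 1 := by rw [Nat.pow_mod, hq4, one_pow]; norm_num
      omega
    have hset : Finset.univ.filter (fun xy : F × F =>
        xy.1 ^ (q ^ a + 1) + xy.2 ^ (q ^ a + 1) = 0 ∧
        xy.1 ^ (q ^ b + 1) + xy.2 ^ (q ^ b + 1) = 0)
        = Finset.univ.filter (fun xy : F × F => xy.1 ^ 2 + xy.2 ^ 2 = 0) := by
      ext ⟨x, y⟩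
      simp only [Finset.mem_filter, Finset.mem_univ, true_and]
      constructor
      · rintro ⟨h1, h2⟩
        by_cases hy : y = 0
        · subst hy
          rw [zero_pow hsa0, add_zero] at h1
          have hx : x = 0 := pow_eq_zero_iff hsa0 |>.mp h1
          simp [hx]
        · have hx : x ≠ 0 := by
            intro hx0
            subst hx0
            rw [zero_pow hsa0, zero_add] at h1
            exact hy (pow_eq_zero_iff hsa0 |>.mp h1)
          have hus : (x * y⁻¹) ^ (q ^ a + 1) = -1 := ratio_pow hy _ h1
          have hut : (x * y⁻¹) ^ (q ^ b + 1) = -1 := ratio_pow hy _ h2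
          have hu0 : x * y⁻¹ ≠ 0 := mul_ne_zero hx (inv_ne_zero hy)
          rw [hab] at hus
          have hu2 : (x * y⁻¹) ^ 2 = -1 := key_usq F q b hq1 hqodd _ hu0 hne hus hut
          exact ratio_pow_rev hy 2 hu2
      · intro h
        by_cases hy : y = 0
        · subst hy
          rw [zero_pow two_ne_zero, add_zero] at h
          have hx : x = 0 := pow_eq_zero_iff two_ne_zero |>.mp h
          rw [hx]
          refine ⟨?_, ?_⟩
          · rw [zero_pow hsa0]; exact add_zero 0
          · rw [zero_pow hsb0]; exact add_zero 0
        · have hu2 : (x * y⁻¹) ^ 2 = -1 := ratio_pow hy 2 h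
          have key : ∀ n : ℕ, (x * y⁻¹) ^ (q ^ n + 1) = -1 := by
            intro n
            rw [heven n, pow_mul, hu2]
            exact Odd.neg_one_pow (hhalf n)
          exact ⟨ratio_pow_rev hy _ (key a), ratio_pow_rev hy _ (key b)⟩
    rw [hset, count_sq F i hi h2F, hF]
  · -- q ≡ 3 mod 4
    rw [if_neg (by omega)]
    have hcard4 : Fintype.card F % 4 = 3 := by
      rw [hF, Nat.pow_mod, hq4, hkk]
      have h9 : 9 ^ kk % 4 = 1 := by
        rw [Nat.pow_mod]
        norm_num
      have h3 : (3 : ℕ) ^ (2 * kk + 1) = 9 ^ kk * 3 := by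
        rw [pow_add, pow_mul]
        norm_num
      rw [h3, Nat.mul_mod, h9]
    have hnosq : ¬ IsSquare (-1 : F) := by
      rw [FiniteField.isSquare_neg_one_iff]
      omega
    have hset : Finset.univ.filter (fun xy : F × F =>
        xy.1 ^ (q ^ a + 1) + xy.2 ^ (q ^ a + 1) = 0 ∧
        xy.1 ^ (q ^ b + 1) + xy.2 ^ (q ^ b + 1) = 0)
        = {((0 : F), (0 : F))} := by
      ext ⟨x, y⟩
      simp only [Finset.mem_filter, Finset.mem_univ, true_and, Finset.mem_singleton,
        Prod.mk.injEq]
      constructor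
      · rintro ⟨h1, _⟩
        by_cases hy : y = 0
        · subst hy
          rw [zero_pow hsa0, add_zero] at h1
          exact ⟨pow_eq_zero_iff hsa0 |>.mp h1, rfl⟩
        · exfalso
          have hus : (x * y⁻¹) ^ (q ^ a + 1) = -1 := ratio_pow hy _ h1
          have hodd_qa : Odd (q ^ a) := Odd.pow hqodd
          have heven : q ^ a + 1 = 2 * ((q ^ a + 1) / 2) := by
            obtain ⟨c, hc⟩ := hodd_qa
            omega
          rw [heven, two_mul, pow_add] at hus
          exact hnosq ⟨(x * y⁻¹) ^ ((q ^ a + 1) / 2), hus.symm⟩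
      · rintro ⟨rfl, rfl⟩
        refine ⟨?_, ?_⟩
        · rw [zero_pow hsa0]; exact add_zero 0
        · rw [zero_pow hsb0]; exact add_zero 0
    rw [hset, Finset.card_singleton]
end

section
/- Let q be an odd prime power and m ≥ 3 odd. If a nonzero element u ∈ F_{q^m} satisfies u^{q^{(m-1)/2}+1} = -1 and u^{q^{(m-3)/2}+1} = -1, then u has multiplicative order 4; consequently such u exists only if q ≡ 1 (mod 4), in which case the solutions are exactly the elements with u² = -1. -/
lemma gcd_aux (q b : ℕ) (hq : Odd q) :
    Nat.gcd (2 * (q ^ (b + 1) + 1)) (2 * (q ^ b + 1)) = 4 := by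
  have hq1 : 1 ≤ q := hq.pos
  set g := Nat.gcd (q ^ (b + 1) + 1) (q ^ b + 1) with hg
  have hd1 : g ∣ q ^ (b + 1) + 1 := Nat.gcd_dvd_left _ _
  have hd2 : g ∣ q ^ b + 1 := Nat.gcd_dvd_right _ _
  have hd3 : g ∣ q * (q ^ b + 1) := hd2.mul_left q
  have he : q * (q ^ b + 1) = q ^ (b + 1) + q := by ring
  have hd4 : g ∣ q - 1 := by
    have := Nat.dvd_sub (he ▸ hd3) hd1
    have h : q ^ (b + 1) + q - (q ^ (b + 1) + 1) = q - 1 := by omega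
    rwa [h] at this
  have hd5 : g ∣ q ^ b - 1 := hd4.trans (by
    have := Nat.sub_dvd_pow_sub_pow q 1 b
    simpa using this)
  have hd6 : g ∣ 2 := by
    have := Nat.dvd_sub hd2 hd5
    have hb : 1 ≤ q ^ b := Nat.one_le_pow _ _ hq1
    have h : q ^ b + 1 - (q ^ b - 1) = 2 := by omega
    rwa [h] at this
  have hodd1 : Odd (q ^ (b + 1)) := hq.pow
  have hodd2 : Odd (q ^ b) := hq.pow
  have h2d : 2 ∣ g := by
    refine Nat.dvd_gcd ?_ ?_
    · obtain ⟨t, ht⟩ := hodd1; omega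
    · obtain ⟨t, ht⟩ := hodd2; omega
  have hg2 : g = 2 := Nat.dvd_antisymm hd6 h2d
  rw [Nat.gcd_mul_left, ← hg, hg2]

/-- If a nonzero u ∈ F_{q^m} satisfies u^{q^{(m-1)/2}+1} = -1 and
u^{q^{(m-3)/2}+1} = -1, then u has multiplicative order 4, q ≡ 1 (mod 4),
u² = -1, and conversely every v with v² = -1 satisfies both equations. -/
theorem stmt_13 (q m : ℕ) (hq : ∃ p k : ℕ, p.Prime ∧ 0 < k ∧ q = p ^ k)
    (hqodd : Odd q) (hm : 3 ≤ m) (hmodd : Odd m)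
    (F : Type*) [Field F] [Fintype F] (hF : Fintype.card F = q ^ m)
    (u : F) (hu : u ≠ 0)
    (h1 : u ^ (q ^ ((m - 1) / 2) + 1) = -1)
    (h2 : u ^ (q ^ ((m - 3) / 2) + 1) = -1) :
    orderOf u = 4 ∧ q % 4 = 1 ∧ u ^ 2 = -1 ∧
    ∀ v : F, v ^ 2 = -1 →
      v ^ (q ^ ((m - 1) / 2) + 1) = -1 ∧ v ^ (q ^ ((m - 3) / 2) + 1) = -1 := by
  classical
  have hm2 : m % 2 = 1 := Nat.odd_iff.mp hmodd
  set b := (m - 3) / 2 with hb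
  have hab : (m - 1) / 2 = b + 1 := by omega
  rw [hab] at h1
  -- char ≠ 2, so -1 ≠ 1
  have hcardodd : Fintype.card F % 2 = 1 := by
    rw [hF]; exact Nat.odd_iff.mp hqodd.pow
  have hchar : ringChar F ≠ 2 := by
    intro h
    have := FiniteField.even_card_iff_char_two.mp h
    omega
  have hne : (-1 : F) ≠ 1 := Ring.neg_one_ne_one_of_char_ne_two hchar
  -- order divides 4
  have hdvd1 : orderOf u ∣ 2 * (q ^ (b + 1) + 1) := by
    apply orderOf_dvd_of_pow_eq_one
    rw [mul_comm, pow_mul, h1]; ring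
  have hdvd2 : orderOf u ∣ 2 * (q ^ b + 1) := by
    apply orderOf_dvd_of_pow_eq_one
    rw [mul_comm, pow_mul, h2]; ring
  have hdvd4 : orderOf u ∣ 4 := by
    have := Nat.dvd_gcd hdvd1 hdvd2
    rwa [gcd_aux q b hqodd] at this
  -- u^2 ≠ 1
  have hu2 : u ^ 2 ≠ 1 := by
    intro h
    obtain ⟨t, ht⟩ := hqodd.pow (n := b)
    have heq : u ^ (q ^ b + 1) = 1 := by
      rw [ht, show 2 * t + 1 + 1 = 2 * (t + 1) by ring, pow_mul, h, one_pow]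
    rw [h2] at heq
    exact hne heq
  have horder : orderOf u = 4 := by
    obtain ⟨i, hi, he⟩ := (Nat.dvd_prime_pow Nat.prime_two).mp
      (show orderOf u ∣ 2 ^ 2 by simpa using hdvd4)
    interval_cases i
    · exfalso
      apply hu2
      have : u = 1 := orderOf_eq_one_iff.mp (by simpa using he)
      rw [this, one_pow]
    · exfalso
      apply hu2
      have := pow_orderOf_eq_one u
      rwa [he, pow_one] at this
    · simpa using he
  have h4 : u ^ 4 = 1 := by
    have := pow_orderOf_eq_one u
    rwa [horder] at this
  have husq : u ^ 2 = -1 := by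
    have hz : (u ^ 2 - 1) * (u ^ 2 + 1) = 0 := by linear_combination h4
    rcases mul_eq_zero.mp hz with h | h
    · exact absurd (sub_eq_zero.mp h) hu2
    · exact eq_neg_of_add_eq_zero_left h
  -- q % 4 = 1
  have hcard4 : (4 : ℕ) ∣ q ^ m - 1 := by
    have hw : orderOf (Units.mk0 u hu) = 4 := by
      rw [← orderOf_units]; simpa using horder
    have := orderOf_dvd_card (x := Units.mk0 u hu)
    rwa [hw, Fintype.card_units, hF] at this
  have hq2 : q % 2 = 1 := Nat.odd_iff.mp hqodd
  have hq4 : q % 4 = 1 := by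
    by_contra hq4
    have h3 : q % 4 = 3 := by omega
    obtain ⟨t, ht⟩ := hmodd
    have h9 : (9 : ℕ) ^ t % 4 = 1 := by rw [Nat.pow_mod]; norm_num
    have hpm : q ^ m % 4 = 3 := by
      rw [Nat.pow_mod, h3, ht, pow_add, pow_mul, pow_one,
        show (3 : ℕ) ^ 2 = 9 by norm_num, Nat.mul_mod, Nat.pow_mod]
      norm_num
    have hq1 : 1 ≤ q ^ m := Nat.one_le_pow _ _ hqodd.pos
    omega
  -- converse
  have key : ∀ v : F, v ^ 2 = -1 → ∀ n : ℕ, v ^ (q ^ n + 1) = -1 := by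
    intro v hv n
    have hv4 : v ^ 4 = 1 := by
      rw [show (4 : ℕ) = 2 * 2 by rfl, pow_mul, hv]; ring
    have hmod : q ^ n % 4 = 1 := by rw [Nat.pow_mod, hq4, one_pow]; norm_num
    obtain ⟨t, ht⟩ : ∃ t, q ^ n + 1 = 4 * t + 2 := ⟨q ^ n / 4, by omega⟩
    rw [ht, pow_add, pow_mul, hv4, one_pow, one_mul, hv]
  refine ⟨horder, hq4, husq, fun v hv => ⟨?_, ?_⟩⟩
  · rw [hab]; exact key v hv (b + 1)
  · exact key v hv b
end

section
/- Let q > 3 be a prime power and m = a(q-1) + 1 with a ≥ 1, and n = (q^m-1)/(q-1). Then the largest q-cyclotomic coset leader modulo n is δ = (q^m - 1 - q^{m-1} - Σ_{ℓ=1}^{q-2} q^{aℓ})/(q-1), and its q-cyclotomic coset has size m. -/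
open Finset

lemma geo_lt {q : ℕ} (hq : 2 ≤ q) : ∀ w, ∑ e ∈ range w, q^e < q^w := by
  intro w
  induction w with
  | zero => simp
  | succ w ih =>
    rw [Finset.sum_range_succ, pow_succ]
    have : q^w * 2 ≤ q^w * q := Nat.mul_le_mul_left _ hq
    omega

/-- C1 : lexicographic strict comparison of sums of distinct powers -/
lemma sum_pow_lt {q : ℕ} (hq : 2 ≤ q) (A B : Finset ℕ) (w : ℕ)
    (hwB : w ∈ B) (hwA : w ∉ A) (hagree : ∀ e, w < e → (e ∈ A ↔ e ∈ B)) :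
    ∑ e ∈ A, q^e < ∑ e ∈ B, q^e := by
  classical
  have hsplitA := Finset.sum_filter_add_sum_filter_not A (fun e => w < e) (fun e => q^e)
  have hsplitB := Finset.sum_filter_add_sum_filter_not B (fun e => w < e) (fun e => q^e)
  have hAB : A.filter (fun e => w < e) = B.filter (fun e => w < e) := by
    ext e; simp only [Finset.mem_filter]
    exact ⟨fun ⟨h1, h2⟩ => ⟨(hagree e h2).1 h1, h2⟩, fun ⟨h1, h2⟩ => ⟨(hagree e h2).2 h1, h2⟩⟩
  have hlow : ∑ e ∈ A.filter (fun e => ¬ w < e), q^e < q^w := by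
    calc ∑ e ∈ A.filter (fun e => ¬ w < e), q^e
        ≤ ∑ e ∈ range w, q^e := by
          apply Finset.sum_le_sum_of_subset
          intro e he
          simp only [Finset.mem_filter, not_lt] at he
          rcases he with ⟨heA, hle⟩
          have : e ≠ w := fun h => hwA (h ▸ heA)
          exact Finset.mem_range.2 (by omega)
      _ < q^w := geo_lt hq w
  have hhigh : q^w ≤ ∑ e ∈ B.filter (fun e => ¬ w < e), q^e := by
    apply Finset.single_le_sum (f := fun e => q^e) (fun i _ => Nat.zero_le _)
    simp [Finset.mem_filter, hwB]
  rw [hAB] at hsplitA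
  omega

/-- C2 : if sums differ, the max of the symmetric difference is on the big side -/
lemma exists_maxdiff {q : ℕ} (hq : 2 ≤ q) (A B : Finset ℕ)
    (h : ∑ e ∈ A, q^e < ∑ e ∈ B, q^e) :
    ∃ w ∈ B, w ∉ A ∧ ∀ e, w < e → (e ∈ A ↔ e ∈ B) := by
  classical
  set Δ : Finset ℕ := (A \ B) ∪ (B \ A) with hΔ
  have hne : Δ.Nonempty := by
    rcases Finset.eq_empty_or_nonempty Δ with he | hne
    · exfalso
      have : A = B := by
        ext e
        have h1 : e ∉ A \ B := by rw [hΔ] at he; intro hc; exact (Finset.eq_empty_iff_forall_notMem.1 he e) (Finset.mem_union_left _ hc)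
        have h2 : e ∉ B \ A := by rw [hΔ] at he; intro hc; exact (Finset.eq_empty_iff_forall_notMem.1 he e) (Finset.mem_union_right _ hc)
        simp only [Finset.mem_sdiff, not_and, not_not] at h1 h2
        exact ⟨fun ha => by_contra fun hb => hb (h1 ha), fun hb => by_contra fun ha => ha (h2 hb)⟩
      rw [this] at h; exact lt_irrefl _ h
    · exact hne
  set w := Δ.max' hne with hw
  have hwΔ : w ∈ Δ := Finset.max'_mem _ _
  have hagree : ∀ e, w < e → (e ∈ A ↔ e ∈ B) := by
    intro e hlt
    have : e ∉ Δ := fun hc => absurd (Finset.le_max' _ _ hc) (not_le.2 hlt)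
    rw [hΔ] at this
    simp only [Finset.mem_union, Finset.mem_sdiff, not_or, not_and, not_not] at this
    exact ⟨fun ha => this.1 ha, fun hb => this.2 hb⟩
  rw [hΔ] at hwΔ
  rcases Finset.mem_union.1 hwΔ with hc | hc
  · exfalso
    rcases Finset.mem_sdiff.1 hc with ⟨hwA, hwB⟩
    have := sum_pow_lt hq B A w hwA hwB (fun e he => (hagree e he).symm)
    omega
  · rcases Finset.mem_sdiff.1 hc with ⟨hwB, hwA⟩
    exact ⟨w, hwB, hwA, hagree⟩


lemma int_sum_modEq {N : ℤ} {s : Finset ℕ} {f g : ℕ → ℤ}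
    (h : ∀ i ∈ s, f i ≡ g i [ZMOD N]) : ∑ i ∈ s, f i ≡ ∑ i ∈ s, g i [ZMOD N] := by
  classical
  induction s using Finset.induction_on with
  | empty => rfl
  | @insert x s' hx ih =>
    rw [Finset.sum_insert hx, Finset.sum_insert hx]
    exact (h x (Finset.mem_insert_self _ _)).add (ih (fun i hi => h i (Finset.mem_insert_of_mem hi)))

lemma natmod_of_int {N x y : ℕ} (h : (x:ℤ) ≡ (y:ℤ) [ZMOD (N:ℤ)]) : x % N = y % N := by
  have h1 : ((x % N : ℕ) : ℤ) = ((y % N : ℕ) : ℤ) := by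
    rw [Int.natCast_mod, Int.natCast_mod]; exact h
  exact_mod_cast h1

lemma pow_mod_cycle {q m : ℕ} (hq : 1 ≤ q) (hm : 0 < m) (e : ℕ) :
    (q:ℤ)^e ≡ (q:ℤ)^(e % m) [ZMOD ((q^m - 1 : ℕ) : ℤ)] := by
  have hq1 : 1 ≤ q^m := Nat.one_le_pow _ _ hq
  have hcast : ((q^m - 1 : ℕ) : ℤ) = (q:ℤ)^m - 1 := by push_cast [hq1]; ring
  have hbase : (q:ℤ)^m ≡ 1 [ZMOD ((q^m - 1 : ℕ) : ℤ)] :=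
    (Int.modEq_iff_dvd.2 (by rw [hcast])).symm
  calc (q:ℤ)^e = ((q:ℤ)^m)^(e/m) * (q:ℤ)^(e % m) := by
        rw [← pow_mul, ← pow_add, Nat.div_add_mod]
    _ ≡ 1^(e/m) * (q:ℤ)^(e % m) [ZMOD ((q^m - 1 : ℕ) : ℤ)] := (hbase.pow _).mul_right _
    _ = (q:ℤ)^(e % m) := by ring



/-- injectivity of rotation map on range m -/
lemma rot_injOn {m j : ℕ} (hm : 0 < m) :
    Set.InjOn (fun p => (p + j) % m) (Finset.range m : Set ℕ) := by
  intro p hp p' hp' h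
  simp only [Finset.coe_range, Set.mem_Iio] at hp hp'
  simp only at h
  have h1 : p % m = p' % m := Nat.ModEq.add_right_cancel' j h
  rwa [Nat.mod_eq_of_lt hp, Nat.mod_eq_of_lt hp'] at h1

/-- sum over range m of q^e is < T = q^m - 1, for q ≥ 3, m ≥ 1 -/
lemma sum_range_lt_T {q m : ℕ} (hq : 3 ≤ q) (hm : 1 ≤ m) :
    ∑ e ∈ range m, q^e < q^m - 1 := by
  obtain ⟨m', rfl⟩ : ∃ m', m = m' + 1 := ⟨m - 1, by omega⟩
  rw [Finset.sum_range_succ]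
  have h1 : ∑ e ∈ range m', q^e < q^m' := geo_lt (by omega) m'
  have h2 : q^(m'+1) = q^m' * q := pow_succ q m'
  have h3 : 1 ≤ q^m' := Nat.one_le_pow _ _ (by omega)
  have h4 : q^m' * 3 ≤ q^m' * q := Nat.mul_le_mul_left _ hq
  omega

/-- Lemma A : rotation of T - ∑_P q^p -/
lemma rot_sum {q m : ℕ} (hq : 3 ≤ q) (hm : 1 ≤ m) (P : Finset ℕ)
    (hP : P ⊆ range m) (hne : P.Nonempty) (j : ℕ) :
    (q^m - 1 - ∑ p ∈ P, q^p) * q^j % (q^m - 1)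
      = q^m - 1 - ∑ p ∈ P, q^((p+j)%m) := by
  classical
  set T := q^m - 1 with hT
  set U := ∑ p ∈ P, q^p with hU
  set V := ∑ p ∈ P, q^((p+j)%m) with hV
  have hTpos : 1 ≤ q^m := Nat.one_le_pow _ _ (by omega)
  -- bounds on U
  have hU1 : 1 ≤ U := by
    obtain ⟨p, hp⟩ := hne
    calc 1 ≤ q^p := Nat.one_le_pow _ _ (by omega)
      _ ≤ U := Finset.single_le_sum (f := fun p => q^p) (fun i _ => Nat.zero_le _) hp
  have hUT : U < T := lt_of_le_of_lt (Finset.sum_le_sum_of_subset hP) (sum_range_lt_T hq hm)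
  -- V as sum over image
  have hVQ : V = ∑ e ∈ P.image (fun p => (p + j) % m), q^e := by
    rw [Finset.sum_image]
    intro x hx y hy hxy
    exact rot_injOn (by omega) (by simpa using hP hx) (by simpa using hP hy) hxy
  have hQsub : P.image (fun p => (p + j) % m) ⊆ range m := by
    intro e he
    obtain ⟨p, _, rfl⟩ := Finset.mem_image.1 he
    exact Finset.mem_range.2 (Nat.mod_lt _ (by omega))
  have hV1 : 1 ≤ V := by
    obtain ⟨p, hp⟩ := hne
    calc 1 ≤ q^((p+j)%m) := Nat.one_le_pow _ _ (by omega)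
      _ ≤ V := Finset.single_le_sum (f := fun p => q^((p+j)%m)) (fun i _ => Nat.zero_le _) hp
  have hVT : V < T := by
    rw [hVQ]
    exact lt_of_le_of_lt (Finset.sum_le_sum_of_subset hQsub) (sum_range_lt_T hq hm)
  -- integer congruence
  have hcong : (((T - U) * q^j : ℕ) : ℤ) ≡ ((T - V : ℕ) : ℤ) [ZMOD (T:ℤ)] := by
    have hcastU : ((T - U : ℕ) : ℤ) = (T:ℤ) - (U:ℤ) := by push_cast [le_of_lt hUT]; ring
    have hcastV : ((T - V : ℕ) : ℤ) = (T:ℤ) - (V:ℤ) := by push_cast [le_of_lt hVT]; ring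
    have hUV : ((U:ℤ)) * (q:ℤ)^j ≡ (V:ℤ) [ZMOD (T:ℤ)] := by
      have : ((U:ℤ)) * (q:ℤ)^j = ∑ p ∈ P, (q:ℤ)^(p+j) := by
        rw [hU]; push_cast; rw [Finset.sum_mul]
        exact Finset.sum_congr rfl (fun p _ => by rw [← pow_add])
      rw [this]
      have : ((V:ℤ)) = ∑ p ∈ P, (q:ℤ)^((p+j)%m) := by rw [hV]; push_cast; ring
      rw [this]
      exact int_sum_modEq (fun p _ => by rw [hT]; exact pow_mod_cycle (by omega) (by omega) (p+j))
    have hTz : (T:ℤ) ≡ 0 [ZMOD (T:ℤ)] := Int.modEq_iff_dvd.2 (by simp)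
    push_cast [le_of_lt hUT, le_of_lt hVT]
    calc ((T:ℤ) - U) * (q:ℤ)^j ≡ (0 - U) * (q:ℤ)^j [ZMOD (T:ℤ)] := (hTz.sub_right _).mul_right _
      _ = -(((U:ℤ)) * (q:ℤ)^j) := by ring
      _ ≡ -(V:ℤ) [ZMOD (T:ℤ)] := hUV.neg
      _ = 0 - (V:ℤ) := by ring
      _ ≡ (T:ℤ) - (V:ℤ) [ZMOD (T:ℤ)] := (hTz.symm.sub_right _)
  have := natmod_of_int hcong
  rwa [Nat.mod_eq_of_lt (by omega : T - V < T)] at this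

/-- Lemma R' : division form of rotation -/
lemma rot_formula {q m T S : ℕ} (hq : 1 ≤ q) (hT : T = q^m - 1) (hTpos : 1 ≤ q^m)
    (j : ℕ) (hj : j ≤ m) :
    S * q^j % T = (S / q^(m-j) + (S % q^(m-j)) * q^j) % T := by
  have hS : S = q^(m-j) * (S / q^(m-j)) + S % q^(m-j) := (Nat.div_add_mod _ _).symm
  have hqm : q^(m-j) * q^j = q^m := by rw [← pow_add]; congr 1; omega
  have : S * q^j = (S / q^(m-j)) * (q^m) + (S % q^(m-j)) * q^j := by
    conv_lhs => rw [hS]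
    rw [add_mul, mul_comm (q^(m-j)) (S / q^(m-j)), mul_assoc, hqm]
  rw [this]
  have hqm1 : q^m = T + 1 := by omega
  rw [hqm1]
  have : S / q^(m-j) * (T + 1) + S % q^(m-j) * q^j
       = (S / q^(m-j) + S % q^(m-j) * q^j) + (S / q^(m-j)) * T := by ring
  rw [this, Nat.add_mul_mod_self_right]


/-- digit expansion: ∑_{p<M} (x/q^p % q) q^p = x % q^M -/
lemma digit_sum (q x : ℕ) : ∀ M, ∑ p ∈ range M, (x / q^p % q) * q^p = x % q^M := by
  intro M
  induction M with
  | zero => simp [Nat.mod_one]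
  | succ M ih =>
    rw [Finset.sum_range_succ, ih, Nat.mod_pow_succ]
    ring

/-- cyclic distance rotation: (p + (m-1-v)) % m = m-1 - (m+v-p)%m for p,v < m -/
lemma rotdist {m p v : ℕ} (hp : p < m) (hv : v < m) :
    (p + (m - 1 - v)) % m = m - 1 - (m + v - p) % m := by
  rcases le_or_gt p v with h | h
  · have h1 : (m + v - p) % m = v - p := by
      rw [show m + v - p = (v - p) + m by omega, Nat.add_mod_right]
      exact Nat.mod_eq_of_lt (by omega)
    have h2 : (p + (m - 1 - v)) % m = p + (m - 1 - v) := Nat.mod_eq_of_lt (by omega)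
    omega
  · have h1 : (m + v - p) % m = m + v - p := Nat.mod_eq_of_lt (by omega)
    have h2 : (p + (m - 1 - v)) % m = p - v - 1 := by
      rw [show p + (m - 1 - v) = (p - v - 1) + m by omega, Nat.add_mod_right]
      exact Nat.mod_eq_of_lt (by omega)
    omega

/-- separated sets: strict mono injection bound -/
lemma sep_card {g : ℕ} (hg : 1 ≤ g) (X : Finset ℕ) (lo hi : ℕ)
    (hbd : ∀ x ∈ X, lo ≤ x ∧ x ≤ hi)
    (hsep : ∀ x ∈ X, ∀ y ∈ X, x < y → x + g ≤ y) :
    X.card ≤ (hi - lo)/g + 1 := by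
  classical
  have := Finset.card_le_card_of_injOn (f := fun x => (x - lo)/g)
    (s := X) (t := range ((hi-lo)/g + 1))
    (fun x hx => Finset.mem_range.2 (by
      show (x - lo)/g < (hi-lo)/g + 1
      have h1 := hbd x hx
      have h2 : (x - lo)/g ≤ (hi - lo)/g := Nat.div_le_div_right (by omega)
      omega))
    (by
      intro x hx y hy hxy
      simp only at hxy
      by_contra hne
      rcases Nat.lt_or_ge x y with h | h
      · have hs := hsep x hx y hy h
        have hlo := (hbd x hx).1
        have : (x - lo)/g + 1 ≤ (y - lo)/g := by
          rw [← Nat.add_div_right _ (by omega : 0 < g)]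
          exact Nat.div_le_div_right (by omega)
        omega
      · have h' : y < x := by omega
        have hs := hsep y hy x hx h'
        have hlo := (hbd y hy).1
        have : (y - lo)/g + 1 ≤ (x - lo)/g := by
          rw [← Nat.add_div_right _ (by omega : 0 < g)]
          exact Nat.div_le_div_right (by omega)
        omega)
  simpa using this

/-- exact structure: c elements in [a-1, a*c-1] pairwise a-separated must be {a*(e+1)-1} -/
lemma sep_exact {a : ℕ} (ha : 1 ≤ a) :
    ∀ (c : ℕ) (X : Finset ℕ), X.card = c →
    (∀ x ∈ X, a - 1 ≤ x ∧ x ≤ a * c - 1) →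
    (∀ x ∈ X, ∀ y ∈ X, x < y → x + a ≤ y) →
    X = (range c).image (fun e => a*(e+1) - 1) := by
  intro c
  induction c with
  | zero => intro X hcard _ _; simp_all [Finset.card_eq_zero]
  | succ c ih =>
    intro X hcard hbd hsep
    have hne : X.Nonempty := Finset.card_pos.1 (by omega)
    obtain ⟨M, hMmem, hMmax⟩ : ∃ M ∈ X, ∀ x ∈ X, x ≤ M :=
      ⟨X.max' hne, Finset.max'_mem _ _, fun x hx => Finset.le_max' _ _ hx⟩
    have hMle : M ≤ a * (c+1) - 1 := (hbd M hMmem).2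
    have herase : ∀ x ∈ X.erase M, a - 1 ≤ x ∧ x ≤ M - a := by
      intro x hx
      have hxX := Finset.mem_of_mem_erase hx
      have hxM : x ≠ M := Finset.ne_of_mem_erase hx
      have hxle : x ≤ M := hMmax x hxX
      have := hsep x hxX M hMmem (by omega)
      exact ⟨(hbd x hxX).1, by omega⟩
    have hcard' : (X.erase M).card = c := by
      rw [Finset.card_erase_of_mem hMmem]; omega
    -- lower bound on M
    have hMge : a * (c+1) - 1 ≤ M := by
      rcases Nat.eq_zero_or_pos c with hc | hc
      · subst hc; have := (hbd M hMmem).1; omega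
      · obtain ⟨c', rfl⟩ : ∃ c', c = c' + 1 := ⟨c - 1, by omega⟩
        have hne' : (X.erase M).Nonempty := Finset.card_pos.1 (by omega)
        obtain ⟨y, hy⟩ := hne'
        have h1 := herase y hy
        have hyM : y ≠ M := Finset.ne_of_mem_erase hy
        have hyle : y ≤ M := hMmax y (Finset.mem_of_mem_erase hy)
        have hMbig : a - 1 + a ≤ M := by omega
        have hsc := sep_card (g := a) ha (X.erase M) (a-1) (M - a) herase
          (fun u hu w hw h => hsep u (Finset.mem_of_mem_erase hu) w (Finset.mem_of_mem_erase hw) h)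
        rw [hcard'] at hsc
        have hdiv : c' ≤ (M - a - (a-1))/a := by omega
        have hmul : c' * a ≤ M - a - (a-1) := by
          calc c'*a ≤ (M - a - (a-1))/a * a := Nat.mul_le_mul_right _ hdiv
            _ ≤ M - a - (a-1) := Nat.div_mul_le_self _ _
        have hr : a*(c'+1+1) = c'*a + 2*a := by ring
        omega
    have hMeq : M = a * (c+1) - 1 := by omega
    have hIH := ih (X.erase M) hcard'
      (fun x hx => ⟨(herase x hx).1, by
        have h2 := (herase x hx).2
        have hr2 : a*(c+1) = a*c + a := by ring
        omega⟩)
      (fun x hx y hy h => hsep x (Finset.mem_of_mem_erase hx) y (Finset.mem_of_mem_erase hy) h)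
    have hX : X = insert M (X.erase M) := (Finset.insert_erase hMmem).symm
    rw [hX, hIH, Finset.range_add_one, Finset.image_insert, hMeq]



lemma lemB {q a m : ℕ} (hq : 4 ≤ q) (ha : 1 ≤ a) (hm : m = a*(q-1)+1)
    (P : Finset ℕ) (hP : P ⊆ range m) (htop : m-1 ∈ P)
    (hdvd : (q-1) ∣ P.card)
    (hmin : ∀ j, ∑ p ∈ P, q^((p+j)%m) ≤ ∑ p ∈ P, q^p) :
    ∑ ℓ ∈ Icc 1 (q-1), q^(a*ℓ) ≤ ∑ p ∈ P, q^p := by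
  classical
  have hq2 : 2 ≤ q := by omega
  have hm1 : 1 ≤ m := by omega
  have hm0 : 0 < m := by omega
  have hmtop : m - 1 = a * (q-1) := by omega
  have hPlt : ∀ p ∈ P, p < m := fun p hp => Finset.mem_range.1 (hP hp)
  have hmul_lt : ∀ x y : ℕ, x < y → a*x < a*y := by
    intro x y h
    have h1 : a*(x+1) ≤ a*y := Nat.mul_le_mul_left _ h
    have h2 : a*(x+1) = a*x + a := by ring
    omega
  by_contra hcon
  push_neg at hcon
  set A : Finset ℕ := (Icc 1 (q-1)).image (fun ℓ => a*ℓ) with hA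
  have hAinj : ∀ x ∈ Icc 1 (q-1), ∀ y ∈ Icc 1 (q-1), a*x = a*y → x = y :=
    fun x _ y _ h => Nat.eq_of_mul_eq_mul_left (by omega) h
  have hAsum : ∑ e ∈ A, q^e = ∑ ℓ ∈ Icc 1 (q-1), q^(a*ℓ) := Finset.sum_image hAinj
  have hAcard : A.card = q-1 := by
    rw [hA, Finset.card_image_of_injOn (fun x hx y hy h => hAinj x hx y hy h), Nat.card_Icc]
    omega
  have hAsub : A ⊆ range m := by
    intro e he
    obtain ⟨ℓ, hℓ, rfl⟩ := Finset.mem_image.1 he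
    simp only [Finset.mem_Icc] at hℓ
    have : a*ℓ ≤ a*(q-1) := Nat.mul_le_mul_left _ hℓ.2
    exact Finset.mem_range.2 (by omega)
  have hlt' : ∑ p ∈ P, q^p < ∑ e ∈ A, q^e := by rw [hAsum]; exact hcon
  -- C2
  obtain ⟨w, hwA, hwP, hagree⟩ := exists_maxdiff hq2 P A hlt'
  obtain ⟨ℓ0, hℓ0mem, rfl⟩ := Finset.mem_image.1 hwA
  simp only [Finset.mem_Icc] at hℓ0mem
  have hℓ0q : ℓ0 ≤ q-2 := by
    rcases Nat.lt_or_ge ℓ0 (q-1) with h | h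
    · omega
    · exfalso; have : ℓ0 = q-1 := by omega
      rw [this, ← hmtop] at hwP; exact hwP htop
  have hw_lt_top : a*ℓ0 < m-1 := by
    rw [hmtop]; exact hmul_lt _ _ (by omega)
  -- structure above w
  have hup : ∀ p ∈ P, a*ℓ0 < p → ∃ ℓ, ℓ0 < ℓ ∧ ℓ ≤ q-1 ∧ p = a*ℓ := by
    intro p hp hlt
    have hpA : p ∈ A := (hagree p hlt).1 hp
    obtain ⟨ℓ, hℓ, rfl⟩ := Finset.mem_image.1 hpA
    simp only [Finset.mem_Icc] at hℓ
    refine ⟨ℓ, ?_, hℓ.2, rfl⟩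
    by_contra hc
    have : a*ℓ ≤ a*ℓ0 := Nat.mul_le_mul_left _ (by omega)
    omega
  have hdown : ∀ ℓ, ℓ0 < ℓ → ℓ ≤ q-1 → a*ℓ ∈ P := by
    intro ℓ h1 h2
    have hmem : a*ℓ ∈ A := Finset.mem_image.2 ⟨ℓ, Finset.mem_Icc.2 ⟨by omega, h2⟩, rfl⟩
    have hgt : a*ℓ0 < a*ℓ := hmul_lt _ _ h1
    exact (hagree _ hgt).2 hmem
  have hsecond : ∀ p ∈ P, p ≠ m-1 → p + a ≤ m-1 := by
    intro p hp hne
    have hq2' : a*(q-2) + a = a*(q-1) := by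
      have : q - 1 = (q-2) + 1 := by omega
      rw [this]; ring
    rcases Nat.lt_or_ge (a*ℓ0) p with h | h
    · obtain ⟨ℓ, h1, h2, rfl⟩ := hup p hp h
      have hℓ2 : ℓ ≤ q-2 := by
        by_contra hc
        have : ℓ = q-1 := by omega
        rw [this, ← hmtop] at hne; exact hne rfl
      have : a*ℓ ≤ a*(q-2) := Nat.mul_le_mul_left _ hℓ2
      omega
    · have : a*ℓ0 ≤ a*(q-2) := Nat.mul_le_mul_left _ hℓ0q
      omega
  -- cardinality
  have ht1 : 1 ≤ P.card := Finset.card_pos.2 ⟨m-1, htop⟩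
  have htq : q-1 ≤ P.card := Nat.le_of_dvd (by omega) hdvd
  -- gap machinery
  set dd : ℕ → ℕ → ℕ := fun v p => (m + v - p) % m with hdd
  have hddlt : ∀ x y : ℕ, x < m → y ≤ x → dd x y = x - y := by
    intro x y hx hyx
    show (m + x - y) % m = x - y
    rw [show m + x - y = (x - y) + m by omega, Nat.add_mod_right]
    exact Nat.mod_eq_of_lt (by omega)
  have hddgt : ∀ x y : ℕ, y < m → x < y → dd x y = m + x - y := by
    intro x y hy hxy
    show (m + x - y) % m = m + x - y
    exact Nat.mod_eq_of_lt (by omega)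
  have hP2 : 1 < P.card := by omega
  obtain ⟨v0, hv0, u0, hu0, hvu0⟩ := Finset.one_lt_card.1 hP2
  have hpairs_ne : ((P ×ˢ P).filter (fun pp => pp.1 ≠ pp.2)).Nonempty :=
    ⟨⟨v0, u0⟩, Finset.mem_filter.2 ⟨Finset.mem_product.2 ⟨hv0, hu0⟩, hvu0⟩⟩
  obtain ⟨⟨v, u⟩, hpairmem, hminpair⟩ :=
    Finset.exists_min_image _ (fun pp => dd pp.1 pp.2) hpairs_ne
  obtain ⟨hprod, hvu⟩ := Finset.mem_filter.1 hpairmem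
  obtain ⟨hv, hu⟩ := Finset.mem_product.1 hprod
  simp only at hvu
  set γ := dd v u with hγval
  have hγlb : ∀ x ∈ P, ∀ y ∈ P, x ≠ y → γ ≤ dd x y := by
    intro x hx y hy hxy
    exact hminpair ⟨x, y⟩ (Finset.mem_filter.2 ⟨Finset.mem_product.2 ⟨hx, hy⟩, hxy⟩)
  have hγm : γ < m := by
    rw [hγval]; exact Nat.mod_lt _ hm0
  have hγ1 : 1 ≤ γ := by
    rcases Nat.eq_zero_or_pos γ with h0 | h; swap; · exact h
    exfalso
    rw [hγval] at h0
    rcases Nat.lt_or_ge v u with hlt2 | hge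
    · rw [hddgt v u (hPlt u hu) hlt2] at h0
      have h1 := hPlt v hv; have h2 := hPlt u hu; omega
    · rcases Nat.lt_or_ge u v with h' | h'
      · rw [hddlt v u (hPlt v hv) (by omega)] at h0; omega
      · exact hvu (by omega)
  -- claim γ ≤ a
  have hγa : γ ≤ a := by
    by_contra hbig
    push_neg at hbig
    have hsep1 : ∀ x ∈ P, ∀ y ∈ P, x < y → x + (a+1) ≤ y := by
      intro x hx y hy hxy
      have := hγlb y hy x hx (by omega)
      rw [hddlt y x (hPlt y hy) (by omega)] at this
      omega
    have hminelt : ∀ p ∈ P, a ≤ p := by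
      intro p hp
      rcases eq_or_ne p (m-1) with rfl | hne
      · rw [hmtop]; calc a = a*1 := (mul_one a).symm
          _ ≤ a*(q-1) := Nat.mul_le_mul_left _ (by omega)
      · have h1 := hγlb p hp (m-1) htop (by intro h; exact hne h)
        have h2 : dd p (m-1) = p + 1 := by
          rw [hddgt p (m-1) (by omega) (by have := hPlt p hp; omega)]
          omega
        omega
    have hcard := Finset.card_le_card_of_injOn (f := fun p => (p - a)/(a+1))
      (s := P) (t := range (q-2))
      (fun p hp => Finset.mem_range.2 (by
        show (p - a)/(a+1) < q-2
        have h1 : p ≤ m-1 := by have := hPlt p hp; omega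
        have h2 : (p-a)/(a+1) ≤ (m-1-a)/(a+1) := Nat.div_le_div_right (by omega)
        have h3 : m-1-a = a*(q-2) := by
          have : a*(q-2) + a = a*(q-1) := by
            have hqq : q - 1 = (q-2) + 1 := by omega
            rw [hqq]; ring
          omega
        have h4 : a*(q-2)/(a+1) < q-2 := by
          rw [Nat.div_lt_iff_lt_mul (by omega)]
          have h5 : (q-2)*(a+1) = a*(q-2) + (q-2) := by ring
          have h6 : (a+1)*(q-2) = a*(q-2) + (q-2) := by ring
          omega
        rw [h3] at h2
        omega))
      (by
        intro x hx y hy hxy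
        simp only at hxy
        by_contra hne
        have key : ∀ x' y', x' ∈ P → y' ∈ P → x' < y' → (x'-a)/(a+1) < (y'-a)/(a+1) := by
          intro x' y' hx' hy' h
          have hs := hsep1 x' hx' y' hy' h
          have hax : a ≤ x' := hminelt x' hx'
          have : (x'-a)/(a+1) + 1 = (x'-a+(a+1))/(a+1) := by
            rw [Nat.add_div_right _ (by omega)]
          have h2 : (x'-a+(a+1))/(a+1) ≤ (y'-a)/(a+1) := Nat.div_le_div_right (by omega)
          omega
        rcases Nat.lt_or_ge x y with h | h
        · have := key x y (by simpa using hx) (by simpa using hy) h; omega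
        · have := key y x (by simpa using hy) (by simpa using hx) (by omega); omega)
    rw [Finset.card_range] at hcard
    omega
  have haa : a ≤ m-1 := by
    rw [hmtop]
    calc a = a*1 := (mul_one a).symm
      _ ≤ a*(q-1) := Nat.mul_le_mul_left _ (by omega)
  have hinjP : ∀ (j' : ℕ), ∀ x ∈ P, ∀ y ∈ P, (x + j')%m = (y + j')%m → x = y := by
    intro j' x hx y hy h
    exact rot_injOn (j := j') hm0 (Finset.mem_coe.2 (hP hx)) (Finset.mem_coe.2 (hP hy)) h
  rcases Nat.lt_or_ge γ a with hcase | hcase_eq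
  -- CASE γ < a
  · have hj := hmin (m-1-v)
    have key : ∀ p ∈ P, (p + (m-1-v)) % m = m-1 - dd v p := by
      intro p hp
      exact rotdist (hPlt p hp) (hPlt v hv)
    have hQsum : ∑ e ∈ P.image (fun p => (p + (m-1-v))%m), q^e
        = ∑ p ∈ P, q^((p + (m-1-v))%m) :=
      Finset.sum_image (hinjP (m-1-v))
    have hddvv : dd v v = 0 := by
      show (m + v - v)%m = 0
      rw [show m + v - v = m by omega]
      exact Nat.mod_self m
    have htopQ : m-1 ∈ P.image (fun p => (p + (m-1-v))%m) :=
      Finset.mem_image.2 ⟨v, hv, by rw [key v hv, hddvv]; omega⟩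
    have hwQ : m-1-γ ∈ P.image (fun p => (p + (m-1-v))%m) :=
      Finset.mem_image.2 ⟨u, hu, by rw [key u hu, ← hγval]⟩
    have hwnotP : m-1-γ ∉ P := by
      intro hc
      have hne : m-1-γ ≠ m-1 := by omega
      have := hsecond _ hc hne
      omega
    have hagree2 : ∀ e, m-1-γ < e → (e ∈ P ↔ e ∈ P.image (fun p => (p + (m-1-v))%m)) := by
      intro e he
      constructor
      · intro heP
        have heq : e = m-1 := by
          by_contra hne
          have := hsecond e heP hne
          omega
        rw [heq]; exact htopQ
      · intro heQ
        obtain ⟨p, hp, rfl⟩ := Finset.mem_image.1 heQ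
        rw [key p hp] at he ⊢
        have hddm : dd v p < m := Nat.mod_lt _ hm0
        have hdp : dd v p < γ := by omega
        have hpv : p = v := by
          by_contra hne
          have := hγlb v hv p hp (fun h => hne h.symm)
          omega
        rw [hpv, hddvv]
        simpa using htop
    have hsum := sum_pow_lt hq2 P (P.image (fun p => (p + (m-1-v))%m)) (m-1-γ) hwQ hwnotP hagree2
    rw [hQsum] at hsum
    omega
  -- CASE γ = a
  · have hγeq : γ = a := le_antisymm hγa hcase_eq
    have hsep : ∀ x ∈ P, ∀ y ∈ P, x < y → x + a ≤ y := by
      intro x hx y hy hxy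
      have h1 := hγlb y hy x hx (by omega)
      rw [hddlt y x (hPlt y hy) (by omega)] at h1
      omega
    have hlow : ∀ p ∈ P, a-1 ≤ p := by
      intro p hp
      rcases eq_or_ne p (m-1) with rfl | hne
      · omega
      · have h1 := hγlb p hp (m-1) htop hne
        rw [hddgt p (m-1) (by omega) (by have := hPlt p hp; omega)] at h1
        omega
    have hcardle : P.card ≤ q := by
      have hc := Finset.card_le_card_of_injOn (f := fun p => (p-(a-1))/a)
        (s := P) (t := range q)
        (fun p hp => Finset.mem_range.2 (by
          show (p - (a-1))/a < q
          rw [Nat.div_lt_iff_lt_mul (by omega)]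
          have h1 := hPlt p hp
          have h7 : a*q = a*(q-1) + a := by
            conv_lhs => rw [show q = (q-1)+1 by omega]
            ring
          have h8 : q*a = a*q := Nat.mul_comm _ _
          omega))
        (by
          intro x hx y hy hxy
          simp only at hxy
          by_contra hne
          have key2 : ∀ x' y', x' ∈ P → y' ∈ P → x' < y' → (x'-(a-1))/a < (y'-(a-1))/a := by
            intro x' y' hx' hy' h
            have hs := hsep x' hx' y' hy' h
            have hax : a-1 ≤ x' := hlow x' hx'
            have he1 : (x'-(a-1))/a + 1 = (x'-(a-1)+a)/a := by
              rw [Nat.add_div_right _ (by omega)]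
            have he2 : (x'-(a-1)+a)/a ≤ (y'-(a-1))/a := Nat.div_le_div_right (by omega)
            omega
          rcases Nat.lt_or_ge x y with h | h
          · have := key2 x y (by simpa using hx) (by simpa using hy) h; omega
          · have := key2 y x (by simpa using hy) (by simpa using hx) (by omega); omega)
      rw [Finset.card_range] at hc
      exact hc
    obtain ⟨k, hk⟩ := hdvd
    have ht : P.card = q-1 := by
      rcases Nat.lt_or_ge k 2 with h | h
      · interval_cases k
        · omega
        · omega
      · exfalso
        have h9 : (q-1)*2 ≤ (q-1)*k := Nat.mul_le_mul_left _ h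
        omega
    -- bottom / top structure
    have htopeq : P.filter (fun p => ¬ p < a*ℓ0) = (Icc (ℓ0+1) (q-1)).image (fun ℓ => a*ℓ) := by
      ext p
      simp only [Finset.mem_filter, Finset.mem_image, Finset.mem_Icc, not_lt]
      constructor
      · rintro ⟨hpP, hge⟩
        have hne : a*ℓ0 ≠ p := fun hh => hwP (by rw [hh]; exact hpP)
        obtain ⟨ℓ, h1, h2, rfl⟩ := hup p hpP (by omega)
        exact ⟨ℓ, ⟨by omega, h2⟩, rfl⟩
      · rintro ⟨ℓ, ⟨h1, h2⟩, rfl⟩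
        have := Nat.mul_le_mul_left a (show ℓ0 ≤ ℓ by omega)
        exact ⟨hdown ℓ (by omega) h2, by omega⟩
    have htopcard : (P.filter (fun p => ¬ p < a*ℓ0)).card = q-1-ℓ0 := by
      rw [htopeq, Finset.card_image_of_injOn
        (fun x hx y hy h => Nat.eq_of_mul_eq_mul_left (by omega) h), Nat.card_Icc]
      omega
    have hsplitcard : (P.filter (fun p => p < a*ℓ0)).card
        + (P.filter (fun p => ¬ p < a*ℓ0)).card = P.card :=
      Finset.card_filter_add_card_filter_not _
    have hbotcard : (P.filter (fun p => p < a*ℓ0)).card = ℓ0 := by omega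
    have hbotbd : ∀ x ∈ P.filter (fun p => p < a*ℓ0), a-1 ≤ x ∧ x ≤ a*ℓ0 - 1 := by
      intro x hx
      obtain ⟨hxP, hxlt⟩ := Finset.mem_filter.1 hx
      exact ⟨hlow x hxP, by omega⟩
    have hbotsep : ∀ x ∈ P.filter (fun p => p < a*ℓ0), ∀ y ∈ P.filter (fun p => p < a*ℓ0),
        x < y → x + a ≤ y :=
      fun x hx y hy h => hsep x (Finset.mem_filter.1 hx).1 y (Finset.mem_filter.1 hy).1 h
    have hboteq := sep_exact ha ℓ0 (P.filter (fun p => p < a*ℓ0)) hbotcard hbotbd hbotsep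
    have hv1bot : a*ℓ0 - 1 ∈ P.filter (fun p => p < a*ℓ0) := by
      rw [hboteq]
      exact Finset.mem_image.2 ⟨ℓ0 - 1, Finset.mem_range.2 (by omega), by
        rw [show ℓ0 - 1 + 1 = ℓ0 from by omega]⟩
    have hv1P : a*ℓ0 - 1 ∈ P := (Finset.mem_filter.1 hv1bot).1
    have haℓ0pos : 1 ≤ a*ℓ0 := by
      calc 1 = 1*1 := by ring
        _ ≤ a*ℓ0 := Nat.mul_le_mul ha (by omega)
    have himg : ∀ p ∈ P, (p + (m-1 - (a*ℓ0 - 1)))%m ∈ A := by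
      intro p hp
      rcases Nat.lt_or_ge p (a*ℓ0) with hc | hc
      · have hpbot : p ∈ P.filter (fun p => p < a*ℓ0) := Finset.mem_filter.2 ⟨hp, hc⟩
        rw [hboteq] at hpbot
        obtain ⟨e, he, rfl⟩ := Finset.mem_image.1 hpbot
        have he' : e < ℓ0 := Finset.mem_range.1 he
        have hE : e+1+(q-1)-ℓ0 + ℓ0 = (e+1) + (q-1) := by omega
        have hP1 : a*(e+1+(q-1)-ℓ0) + a*ℓ0 = a*(e+1) + a*(q-1) := by
          rw [← Nat.mul_add, ← Nat.mul_add, hE]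
        have hP2 : a*(e+1) ≤ a*ℓ0 := Nat.mul_le_mul_left _ (by omega)
        have hP3 : 1 ≤ a*(e+1) := by
          calc 1 = 1*1 := by ring
            _ ≤ a*(e+1) := Nat.mul_le_mul ha (by omega)
        have hP4 : a*ℓ0 ≤ a*(q-1) := Nat.mul_le_mul_left _ (by omega)
        have hval : a*(e+1) - 1 + (m-1 - (a*ℓ0 - 1)) = a*(e+1+(q-1)-ℓ0) := by
          rw [hmtop] at *
          omega
        rw [hval]
        have hE2 : e+1+(q-1)-ℓ0 ≤ q-1 := by omega
        have hlt : a*(e+1+(q-1)-ℓ0) < m := by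
          have := Nat.mul_le_mul_left a hE2
          omega
        rw [Nat.mod_eq_of_lt hlt]
        exact Finset.mem_image.2 ⟨_, Finset.mem_Icc.2 ⟨by omega, hE2⟩, rfl⟩
      · have hne : a*ℓ0 ≠ p := fun hh => hwP (by rw [hh]; exact hp)
        obtain ⟨ℓ, h1, h2, rfl⟩ := hup p hp (by omega)
        have hP1 : a*(ℓ-ℓ0) + a*ℓ0 = a*ℓ := by
          rw [← Nat.mul_add]
          congr 1
          omega
        have hP2 : a*ℓ ≤ a*(q-1) := Nat.mul_le_mul_left _ h2
        have hval : a*ℓ + (m-1 - (a*ℓ0 - 1)) = a*(ℓ-ℓ0) + m := by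
          rw [hmtop] at *
          omega
        rw [hval, Nat.add_mod_right, Nat.mod_eq_of_lt (by omega)]
        exact Finset.mem_image.2 ⟨ℓ-ℓ0, Finset.mem_Icc.2 ⟨by omega, by omega⟩, rfl⟩
    have hQcard : (P.image (fun p => (p + (m-1 - (a*ℓ0 - 1)))%m)).card = P.card :=
      Finset.card_image_of_injOn (fun x hx y hy h =>
        hinjP _ x (by simpa using hx) y (by simpa using hy) h)
    have hQA : P.image (fun p => (p + (m-1 - (a*ℓ0 - 1)))%m) = A :=
      Finset.eq_of_subset_of_card_le
        (fun e he => by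
          obtain ⟨p, hp, rfl⟩ := Finset.mem_image.1 he
          exact himg p hp)
        (by rw [hQcard, ht, hAcard])
    have hj2 := hmin (m-1 - (a*ℓ0 - 1))
    have hQsum2 : ∑ p ∈ P, q^((p + (m-1 - (a*ℓ0 - 1)))%m) = ∑ e ∈ A, q^e := by
      rw [← hQA]
      exact (Finset.sum_image (hinjP _)).symm
    omega



lemma part1core {q a m : ℕ} (hq : 4 ≤ q) (ha : 1 ≤ a) (hm : m = a*(q-1)+1)
    (j : ℕ) (hj1 : 1 ≤ j) (hjm : j < m) :
    ∑ ℓ ∈ Icc 1 (q-1), q^((a*ℓ+j)%m) < ∑ ℓ ∈ Icc 1 (q-1), q^(a*ℓ) := by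
  classical
  have hq2 : 2 ≤ q := by omega
  have hm0 : 0 < m := by omega
  have hmtop : m - 1 = a*(q-1) := by omega
  have hmul_le : ∀ x y : ℕ, x ≤ y → a*x ≤ a*y := fun x y h => Nat.mul_le_mul_left _ h
  have hexp_lt : ∀ ℓ, ℓ ≤ q-1 → a*ℓ < m := by
    intro ℓ h
    have := hmul_le ℓ (q-1) h
    omega
  by_cases hex : ∃ k, 1 ≤ k ∧ k ≤ q-2 ∧ j = a*k
  · obtain ⟨k, hk1, hk2, rfl⟩ := hex
    -- explicit computation of rotated exponents
    have hcomp1 : ∀ ℓ, 1 ≤ ℓ → ℓ + k ≤ q-1 → (a*ℓ + a*k) % m = a*(ℓ+k) := by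
      intro ℓ h1 h2
      rw [← Nat.mul_add]
      exact Nat.mod_eq_of_lt (hexp_lt _ h2)
    have hcomp2 : ∀ ℓ, ℓ ≤ q-1 → q-1 < ℓ + k → (a*ℓ + a*k) % m = a*(ℓ+k-(q-1)) - 1 := by
      intro ℓ h1 h2
      have hx1 : 1 ≤ ℓ+k-(q-1) := by omega
      have hx2 : ℓ+k-(q-1) ≤ k := by omega
      have hsum : (ℓ+k-(q-1)) + (q-1) = ℓ + k := by omega
      have hP1 : a*(ℓ+k-(q-1)) + a*(q-1) = a*(ℓ+k) := by rw [← Nat.mul_add, hsum]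
      have hP2 : 1 ≤ a*(ℓ+k-(q-1)) := by
        calc 1 = 1*1 := by ring
          _ ≤ a*(ℓ+k-(q-1)) := Nat.mul_le_mul ha hx1
      have hP3 : a*(ℓ+k-(q-1)) ≤ a*k := hmul_le _ _ hx2
      have hval : a*ℓ + a*k = (a*(ℓ+k-(q-1)) - 1) + m := by
        rw [← Nat.mul_add]
        omega
      rw [hval, Nat.add_mod_right]
      apply Nat.mod_eq_of_lt
      have := hmul_le k (q-1) (by omega)
      omega
    -- Qset
    set Qset := (Icc 1 (q-1)).image (fun ℓ => (a*ℓ + a*k)%m) with hQset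
    have hinj : ∀ x ∈ Icc 1 (q-1), ∀ y ∈ Icc 1 (q-1), (a*x + a*k)%m = (a*y + a*k)%m → x = y := by
      intro x hx y hy h
      simp only [Finset.mem_Icc] at hx hy
      have h1 : (a*x) % m = (a*y) % m := Nat.ModEq.add_right_cancel' (a*k) h
      rw [Nat.mod_eq_of_lt (hexp_lt _ hx.2), Nat.mod_eq_of_lt (hexp_lt _ hy.2)] at h1
      exact Nat.eq_of_mul_eq_mul_left (by omega) h1
    have hQsum : ∑ e ∈ Qset, q^e = ∑ ℓ ∈ Icc 1 (q-1), q^((a*ℓ+a*k)%m) :=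
      Finset.sum_image hinj
    set Aset := (Icc 1 (q-1)).image (fun ℓ => a*ℓ) with hAset
    have hAinj : ∀ x ∈ Icc 1 (q-1), ∀ y ∈ Icc 1 (q-1), a*x = a*y → x = y :=
      fun x _ y _ h => Nat.eq_of_mul_eq_mul_left (by omega) h
    have hAsum : ∑ e ∈ Aset, q^e = ∑ ℓ ∈ Icc 1 (q-1), q^(a*ℓ) := Finset.sum_image hAinj
    -- witness a*k
    have hwA : a*k ∈ Aset := Finset.mem_image.2 ⟨k, Finset.mem_Icc.2 ⟨hk1, by omega⟩, rfl⟩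
    have hwQ : a*k ∉ Qset := by
      intro hc
      obtain ⟨ℓ, hℓ, hval⟩ := Finset.mem_image.1 hc
      simp only [Finset.mem_Icc] at hℓ
      rcases le_or_gt (ℓ+k) (q-1) with h | h
      · rw [hcomp1 ℓ hℓ.1 h] at hval
        have := hAinj (ℓ+k) (Finset.mem_Icc.2 ⟨by omega, h⟩) k
          (Finset.mem_Icc.2 ⟨hk1, by omega⟩) hval
        omega
      · rw [hcomp2 ℓ hℓ.2 h] at hval
        -- a*(x) - 1 = a*k with x ∈ [1,k]
        have hx1 : 1 ≤ ℓ+k-(q-1) := by omega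
        have hx2 : ℓ+k-(q-1) ≤ k := by omega
        have hP2 : 1 ≤ a*(ℓ+k-(q-1)) := by
          calc 1 = 1*1 := by ring
            _ ≤ a*(ℓ+k-(q-1)) := Nat.mul_le_mul ha hx1
        have hP3 : a*(ℓ+k-(q-1)) ≤ a*k := hmul_le _ _ hx2
        -- so a*x = a*k + 1 with a*x ≤ a*k : contradiction
        omega
    have hagree : ∀ e, a*k < e → (e ∈ Qset ↔ e ∈ Aset) := by
      intro e he
      constructor
      · intro hc
        obtain ⟨ℓ, hℓ, hval⟩ := Finset.mem_image.1 hc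
        simp only [Finset.mem_Icc] at hℓ
        rcases le_or_gt (ℓ+k) (q-1) with h | h
        · rw [hcomp1 ℓ hℓ.1 h] at hval
          rw [← hval]
          exact Finset.mem_image.2 ⟨ℓ+k, Finset.mem_Icc.2 ⟨by omega, h⟩, rfl⟩
        · exfalso
          rw [hcomp2 ℓ hℓ.2 h] at hval
          have hP3 : a*(ℓ+k-(q-1)) ≤ a*k := hmul_le _ _ (by omega)
          omega
      · intro hc
        obtain ⟨ℓ', hℓ', hval⟩ := Finset.mem_image.1 hc
        simp only [Finset.mem_Icc] at hℓ'
        have hgt : k < ℓ' := by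
          by_contra hle
          have := hmul_le ℓ' k (by omega)
          omega
        rw [← hval]
        refine Finset.mem_image.2 ⟨ℓ' - k, Finset.mem_Icc.2 ⟨by omega, by omega⟩, ?_⟩
        rw [hcomp1 (ℓ'-k) (by omega) (by omega)]
        congr 1
        omega
    have := sum_pow_lt hq2 Qset Aset (a*k) hwA hwQ hagree
    rw [hQsum, hAsum] at this
    exact this
  · -- no exponent hits m-1
    push_neg at hex
    have hnotop : ∀ ℓ, 1 ≤ ℓ → ℓ ≤ q-1 → (a*ℓ+j)%m ≠ m-1 := by
      intro ℓ h1 h2 hc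
      have hub : a*ℓ + j ≤ 2*m - 2 := by
        have := hmul_le ℓ (q-1) h2
        omega
      have : a*ℓ + j = m-1 ∨ a*ℓ + j = 2*m - 1 := by
        rcases Nat.lt_or_ge (a*ℓ+j) m with h | h
        · left; rw [Nat.mod_eq_of_lt h] at hc; omega
        · right
          have h3 : (a*ℓ+j) - m < m := by omega
          have h4 : (a*ℓ+j) % m = (a*ℓ+j) - m := by
            rw [Nat.mod_eq_sub_mod (by omega : m ≤ a*ℓ+j)]
            exact Nat.mod_eq_of_lt h3
          omega
      rcases this with h | h
      · -- j = a*(q-1-ℓ)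
        have hℓq : ℓ ≤ q-2 := by
          by_contra hcc
          have hℓeq : ℓ = q-1 := by omega
          rw [hℓeq] at h
          omega
        have hk : j = a*(q-1-ℓ) := by
          have : a*(q-1-ℓ) + a*ℓ = a*(q-1) := by
            rw [← Nat.mul_add]
            congr 1
            omega
          omega
        exact hex (q-1-ℓ) (by omega) (by omega) hk
      · omega
    -- all exponents ≤ m-2
    have hub : ∀ ℓ ∈ Icc 1 (q-1), q^((a*ℓ+j)%m) ≤ q^(m-2) := by
      intro ℓ hℓ
      simp only [Finset.mem_Icc] at hℓ
      apply Nat.pow_le_pow_right (by omega)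
      have h1 : (a*ℓ+j)%m < m := Nat.mod_lt _ hm0
      have h2 := hnotop ℓ hℓ.1 hℓ.2
      omega
    calc ∑ ℓ ∈ Icc 1 (q-1), q^((a*ℓ+j)%m)
        ≤ (Icc 1 (q-1)).card * q^(m-2) := Finset.sum_le_card_nsmul _ _ _ hub
      _ = (q-1) * q^(m-2) := by rw [Nat.card_Icc]; congr 1
      _ < q^(m-1) := by
          have h1 : q^(m-1) = q^(m-2) * q := by rw [← pow_succ]; congr 1; omega
          have h2 : 1 ≤ q^(m-2) := Nat.one_le_pow _ _ (by omega)
          have h3 : (q-1)*q^(m-2) = q^(m-2)*(q-1) := Nat.mul_comm _ _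
          have h4 : q^(m-2)*(q-1) + q^(m-2)*1 = q^(m-2)*q := by
            rw [← Nat.mul_add]
            congr 1
            omega
          have h5 : q^(m-2)*1 = q^(m-2) := mul_one _
          omega
      _ = q^(a*(q-1)) := by rw [← hmtop]
      _ ≤ ∑ ℓ ∈ Icc 1 (q-1), q^(a*ℓ) :=
          Finset.single_le_sum (f := fun ℓ => q^(a*ℓ)) (fun i _ => Nat.zero_le _)
            (Finset.mem_Icc.2 ⟨by omega, le_refl _⟩)



lemma geo_eq {q : ℕ} (hq : 1 ≤ q) : ∀ M, ∑ p ∈ range M, (q-1) * q^p = q^M - 1 := by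
  intro M
  induction M with
  | zero => simp
  | succ M ih =>
    rw [Finset.sum_range_succ, ih]
    have h1 : 1 ≤ q^M := Nat.one_le_pow _ _ (by omega)
    have h2 : (q-1)*q^M + 1*q^M = q*q^M := by
      rw [← Nat.add_mul]
      congr 1
      omega
    have h3 : q^(M+1) = q^M * q := pow_succ q M
    have h5 : 1*q^M = q^M := one_mul _
    have h6 : q*q^M = q^M*q := Nat.mul_comm _ _
    omega

lemma digit_repr {q m S : ℕ} (hq : 2 ≤ q) (hS : S < q^m)
    (hdig : ∀ p, p < m → q-2 ≤ S / q^p % q) :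
    q^m - 1 - S = ∑ p ∈ (range m).filter (fun p => S / q^p % q = q-2), q^p := by
  classical
  have h1 : S = ∑ p ∈ range m, (S / q^p % q) * q^p := by
    rw [digit_sum q S m, Nat.mod_eq_of_lt hS]
  have hT : q^m - 1 = ∑ p ∈ range m, (q-1) * q^p := (geo_eq (by omega) m).symm
  have hd_le : ∀ p, S / q^p % q ≤ q-1 := by
    intro p
    have := Nat.mod_lt (S / q^p) (show 0 < q by omega)
    omega
  have h2 : ∀ p ∈ range m, (S / q^p % q) * q^p + ((q-1) - (S / q^p % q)) * q^p = (q-1)*q^p := by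
    intro p _
    rw [← Nat.add_mul]
    congr 1
    have := hd_le p
    omega
  have h3 : (∑ p ∈ range m, (S / q^p % q) * q^p)
      + (∑ p ∈ range m, ((q-1) - (S / q^p % q)) * q^p) = ∑ p ∈ range m, (q-1)*q^p := by
    rw [← Finset.sum_add_distrib]
    exact Finset.sum_congr rfl h2
  have h4 : ∑ p ∈ range m, ((q-1) - (S / q^p % q)) * q^p
      = ∑ p ∈ (range m).filter (fun p => S / q^p % q = q-2), q^p := by
    rw [← Finset.sum_filter_add_sum_filter_not (range m) (fun p => S / q^p % q = q-2)]
    have hfa : ∑ p ∈ (range m).filter (fun p => S / q^p % q = q-2), ((q-1) - (S / q^p % q)) * q^p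
        = ∑ p ∈ (range m).filter (fun p => S / q^p % q = q-2), q^p := by
      apply Finset.sum_congr rfl
      intro p hp
      obtain ⟨hpr, hpe⟩ := Finset.mem_filter.1 hp
      rw [hpe, show q - 1 - (q-2) = 1 by omega, one_mul]
    have hfb : ∑ p ∈ (range m).filter (fun p => ¬ S / q^p % q = q-2), ((q-1) - (S / q^p % q)) * q^p
        = 0 := by
      apply Finset.sum_eq_zero
      intro p hp
      obtain ⟨hpr, hpe⟩ := Finset.mem_filter.1 hp
      have hge := hdig p (Finset.mem_range.1 hpr)
      have hle := hd_le p
      have : S / q^p % q = q-1 := by omega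
      rw [this, Nat.sub_self, zero_mul]
    rw [hfa, hfb, add_zero]
  omega

/-- For q > 3 a prime power, m = a(q-1)+1 with a ≥ 1, n = (q^m-1)/(q-1):
the largest q-cyclotomic coset leader modulo n is
δ = (q^m - 1 - q^{m-1} - Σ_{ℓ=1}^{q-2} q^{aℓ})/(q-1), and its q-cyclotomic
coset has size m. -/
theorem stmt_16 (q a m n d : ℕ) (hq : ∃ p k : ℕ, p.Prime ∧ 0 < k ∧ q = p ^ k)
    (hq3 : 3 < q) (ha : 1 ≤ a) (hm : m = a * (q - 1) + 1)
    (hn : n = (q ^ m - 1) / (q - 1))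
    (hd : d = (q ^ m - 1 - q ^ (m - 1) - ∑ ℓ ∈ Finset.Icc 1 (q - 2), q ^ (a * ℓ)) / (q - 1)) :
    (∀ j : ℕ, d ≤ d * q ^ j % n) ∧
    (∀ s : ℕ, d < s → s < n → ¬ (∀ j : ℕ, s ≤ s * q ^ j % n)) ∧
    IsLeast {l : ℕ | 0 < l ∧ d * q ^ l ≡ d [MOD n]} m := by
  classical
  clear hq
  have hq4 : 4 ≤ q := by omega
  have hq1 : 1 ≤ q := by omega
  have hm2 : 2 ≤ m := by
    have := Nat.mul_le_mul ha (show 1 ≤ q-1 by omega)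
    omega
  have hm1 : 1 ≤ m := by omega
  have hmtop : m - 1 = a*(q-1) := by omega
  have hqm1 : 1 ≤ q^m := Nat.one_le_pow _ _ (by omega)
  have hqm1' : 1 ≤ q^(m-1) := Nat.one_le_pow _ _ (by omega)
  have hdvdT : (q-1) ∣ q^m - 1 := by simpa using Nat.sub_dvd_pow_sub_pow q 1 m
  have hnT : (q-1) * n = q^m - 1 := by rw [hn]; exact Nat.mul_div_cancel' hdvdT
  have hsplitA : q^(m-1) + ∑ ℓ ∈ Icc 1 (q-2), q^(a*ℓ) = ∑ ℓ ∈ Icc 1 (q-1), q^(a*ℓ) := by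
    rw [show q-1 = (q-2)+1 by omega, Finset.sum_Icc_succ_top (by omega),
        show (q-2)+1 = q-1 by omega, ← hmtop]
    omega
  have haq2 : a*(q-2) + a*1 = a*(q-1) := by rw [← Nat.mul_add]; congr 1; omega
  have ha1 : a*1 = a := mul_one a
  have hSig2ub : ∑ ℓ ∈ Icc 1 (q-2), q^(a*ℓ) < q^(m-1) := by
    have hub : ∀ ℓ ∈ Icc 1 (q-2), q^(a*ℓ) ≤ q^(m-2) := by
      intro ℓ hℓ
      simp only [Finset.mem_Icc] at hℓ
      apply Nat.pow_le_pow_right (by omega)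
      have h1 : a*ℓ ≤ a*(q-2) := Nat.mul_le_mul_left _ hℓ.2
      omega
    calc ∑ ℓ ∈ Icc 1 (q-2), q^(a*ℓ)
        ≤ (Icc 1 (q-2)).card * q^(m-2) := Finset.sum_le_card_nsmul _ _ _ hub
      _ = (q-2) * q^(m-2) := by rw [Nat.card_Icc]; congr 1
      _ < q^(m-1) := by
          have h1 : q^(m-1) = q^(m-2) * q := by rw [← pow_succ]; congr 1; omega
          have h2 : 1 ≤ q^(m-2) := Nat.one_le_pow _ _ (by omega)
          have h3 : (q-2)*q^(m-2) = q^(m-2)*(q-2) := Nat.mul_comm _ _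
          have h4 : q^(m-2)*(q-2) + q^(m-2)*2 = q^(m-2)*q := by
            rw [← Nat.mul_add]; congr 1; omega
          omega
  have hSigfull_lb : q^(m-1) ≤ ∑ ℓ ∈ Icc 1 (q-1), q^(a*ℓ) := by omega
  have hSigfull_ub : ∑ ℓ ∈ Icc 1 (q-1), q^(a*ℓ) < 2*q^(m-1) := by omega
  have hT2 : 2*q^(m-1) ≤ q^m - 1 := by
    have h1 : q^m = q^(m-1)*q := by rw [← pow_succ]; congr 1; omega
    have h2 : q^(m-1)*4 ≤ q^(m-1)*q := Nat.mul_le_mul_left _ hq4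
    have h3 : q^(m-1)*4 = 4*q^(m-1) := Nat.mul_comm _ _
    omega
  have hSigT : ∑ ℓ ∈ Icc 1 (q-1), q^(a*ℓ) ≤ q^m - 1 := by omega
  have hdvdSigfull : (q-1) ∣ ∑ ℓ ∈ Icc 1 (q-1), q^(a*ℓ) := by
    have h1 : ∀ ℓ ∈ Icc 1 (q-1), q^(a*ℓ) = (q^(a*ℓ) - 1) + 1 := by
      intro ℓ _
      have : 1 ≤ q^(a*ℓ) := Nat.one_le_pow _ _ (by omega)
      omega
    rw [Finset.sum_congr rfl h1, Finset.sum_add_distrib, Finset.sum_const, Nat.card_Icc,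
      smul_eq_mul, mul_one]
    apply Nat.dvd_add
    · exact Finset.dvd_sum (fun ℓ _ => by simpa using Nat.sub_dvd_pow_sub_pow q 1 (a*ℓ))
    · rw [show q - 1 + 1 - 1 = q - 1 by omega]
  have hD : (q-1) * d = q^m - 1 - ∑ ℓ ∈ Icc 1 (q-1), q^(a*ℓ) := by
    have heq : q^m - 1 - q^(m-1) - ∑ ℓ ∈ Icc 1 (q-2), q^(a*ℓ)
        = q^m - 1 - ∑ ℓ ∈ Icc 1 (q-1), q^(a*ℓ) := by omega
    rw [hd, heq]
    exact Nat.mul_div_cancel' (Nat.dvd_sub hdvdT hdvdSigfull)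
  have hSigfull_pos : 1 ≤ ∑ ℓ ∈ Icc 1 (q-1), q^(a*ℓ) := by omega
  have hdn : d < n := by
    by_contra hc
    push_neg at hc
    have := Nat.mul_le_mul_left (q-1) hc
    omega
  have hDlb : (q-2)*q^(m-1) ≤ (q-1)*d := by
    have h1 : q^m = q^(m-1)*q := by rw [← pow_succ]; congr 1; omega
    have h2 : q^(m-1)*q = q^(m-1)*(q-2) + q^(m-1)*2 := by
      rw [← Nat.mul_add]; congr 1; omega
    have h3 : (q-2)*q^(m-1) = q^(m-1)*(q-2) := Nat.mul_comm _ _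
    omega
  have hAinj : ∀ x ∈ Icc 1 (q-1), ∀ y ∈ Icc 1 (q-1), a*x = a*y → x = y :=
    fun x _ y _ h => Nat.eq_of_mul_eq_mul_left (by omega) h
  have hAsub : (Icc 1 (q-1)).image (fun ℓ => a*ℓ) ⊆ range m := by
    intro e he
    obtain ⟨ℓ, hℓ, rfl⟩ := Finset.mem_image.1 he
    simp only [Finset.mem_Icc] at hℓ
    have : a*ℓ ≤ a*(q-1) := Nat.mul_le_mul_left _ hℓ.2
    exact Finset.mem_range.2 (by omega)
  have hAne : ((Icc 1 (q-1)).image (fun ℓ => a*ℓ)).Nonempty :=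
    ⟨a*1, Finset.mem_image.2 ⟨1, Finset.mem_Icc.2 ⟨le_refl _, by omega⟩, rfl⟩⟩
  have hrotD : ∀ j, ((q^m - 1 - ∑ ℓ ∈ Icc 1 (q-1), q^(a*ℓ)) * q^j) % (q^m-1)
      = q^m - 1 - ∑ ℓ ∈ Icc 1 (q-1), q^((a*ℓ+j)%m) := by
    intro j
    have h0 : ∑ p ∈ (Icc 1 (q-1)).image (fun ℓ => a*ℓ), q^p
        = ∑ ℓ ∈ Icc 1 (q-1), q^(a*ℓ) := Finset.sum_image hAinj
    have h1 := rot_sum (show 3 ≤ q by omega) hm1 _ hAsub hAne j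
    rw [h0] at h1
    rw [h1]
    congr 1
    exact Finset.sum_image hAinj
  have hexplt : ∀ ℓ, ℓ ≤ q-1 → a*ℓ < m := by
    intro ℓ h
    have := Nat.mul_le_mul_left a h
    omega
  have hrot_le : ∀ j, ∑ ℓ ∈ Icc 1 (q-1), q^((a*ℓ+j)%m) ≤ ∑ ℓ ∈ Icc 1 (q-1), q^(a*ℓ) := by
    intro j
    have hmodm : ∀ ℓ : ℕ, (a*ℓ + j)%m = (a*ℓ + j%m)%m :=
      fun ℓ => (Nat.add_mod_mod _ _ _).symm
    rcases Nat.eq_zero_or_pos (j % m) with h0 | hpos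
    · have heach : ∀ ℓ ∈ Icc 1 (q-1), q^((a*ℓ+j)%m) = q^(a*ℓ) := by
        intro ℓ hℓ
        simp only [Finset.mem_Icc] at hℓ
        rw [hmodm ℓ, h0, add_zero, Nat.mod_eq_of_lt (hexplt ℓ hℓ.2)]
      rw [Finset.sum_congr rfl heach]
    · have hcore := part1core hq4 ha hm (j%m) hpos (Nat.mod_lt _ (by omega))
      have heq : ∑ ℓ ∈ Icc 1 (q-1), q^((a*ℓ+j)%m)
          = ∑ ℓ ∈ Icc 1 (q-1), q^((a*ℓ+j%m)%m) :=
        Finset.sum_congr rfl (fun ℓ _ => by rw [hmodm ℓ])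
      omega
  have hmodmul : ∀ x j : ℕ, (q-1) * ((x * q^j) % n) = (((q-1)*x) * q^j) % (q^m - 1) := by
    intro x j
    rw [← hnT, show ((q-1)*x)*q^j = (q-1)*(x*q^j) by ring, Nat.mul_mod_mul_left]
  refine ⟨?_, ?_, ⟨⟨by omega, ?_⟩, ?_⟩⟩
  -- Part 1 : d is a coset leader
  · intro j
    have h1 : (q-1)*(d * q^j % n) = q^m - 1 - ∑ ℓ ∈ Icc 1 (q-1), q^((a*ℓ+j)%m) := by
      rw [hmodmul d j, hD, hrotD j]
    refine Nat.le_of_mul_le_mul_left ?_ (show 0 < q-1 by omega)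
    rw [h1, hD]
    have h2 := hrot_le j
    omega
  -- Part 2 : d is the largest coset leader
  · intro s hds hsn H
    have hS_lt : (q-1)*s < q^m - 1 := by
      have h1 : (q-1)*(s+1) ≤ (q-1)*n := Nat.mul_le_mul_left _ hsn
      have h2 : (q-1)*(s+1) = (q-1)*s + (q-1)*1 := by ring
      have h3 : (q-1)*1 = q-1 := mul_one _
      omega
    have hds' : (q-1)*d + 1 ≤ (q-1)*s := by
      have h1 : (q-1)*(d+1) ≤ (q-1)*s := Nat.mul_le_mul_left _ hds
      have h2 : (q-1)*(d+1) = (q-1)*d + (q-1)*1 := by ring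
      have h3 : (q-1)*1 = q-1 := mul_one _
      omega
    have hH' : ∀ j, (q-1)*s ≤ ((q-1)*s * q^j) % (q^m-1) := by
      intro j
      have h1 := Nat.mul_le_mul_left (q-1) (H j)
      rwa [hmodmul s j] at h1
    have hS_qm : (q-1)*s < q^m := by omega
    have hrotbound : ∀ p, p < m →
        ((q-1)*s * q^(m-1-p)) % (q^m-1) ≤ ((q-1)*s / q^p % q + 1) * q^(m-1) - 1 := by
      intro p hp
      have h2 := rot_formula (S := (q-1)*s) hq1 rfl hqm1 (m-1-p) (show m-1-p ≤ m by omega)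
      rw [show m - (m-1-p) = p+1 by omega] at h2
      rw [h2]
      have hmodb : (q-1)*s % q^(p+1) ≤ ((q-1)*s / q^p % q + 1)*q^p - 1 := by
        rw [Nat.mod_pow_succ]
        have h3 : (q-1)*s % q^p < q^p := Nat.mod_lt _ (by positivity)
        have h4 : ((q-1)*s / q^p % q + 1)*q^p = q^p*((q-1)*s / q^p % q) + q^p := by ring
        omega
      have hdivb : (q-1)*s / q^(p+1) < q^(m-1-p) := by
        rw [Nat.div_lt_iff_lt_mul (by positivity)]
        have h5 : q^(m-1-p) * q^(p+1) = q^m := by rw [← pow_add]; congr 1; omega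
        omega
      have e1 : q^p * q^(m-1-p) = q^(m-1) := by rw [← pow_add]; congr 1; omega
      have e2 : ((q-1)*s % q^(p+1)) * q^(m-1-p)
          ≤ (((q-1)*s / q^p % q + 1)*q^p - 1) * q^(m-1-p) :=
        Nat.mul_le_mul_right _ hmodb
      have e3 : (((q-1)*s / q^p % q + 1)*q^p - 1) * q^(m-1-p)
          = ((q-1)*s / q^p % q + 1)*q^(m-1) - q^(m-1-p) := by
        rw [Nat.sub_mul, one_mul, mul_assoc, e1]
      have e5 : 1 ≤ q^(m-1-p) := Nat.one_le_pow _ _ (by omega)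
      have e6 : q^(m-1-p) ≤ q^(m-1) := Nat.pow_le_pow_right (by omega) (by omega)
      have e8 : q^(m-1) ≤ ((q-1)*s / q^p % q + 1) * q^(m-1) :=
        Nat.le_mul_of_pos_left _ (by omega)
      refine le_trans (Nat.mod_le _ _) ?_
      omega
    have hdig : ∀ p, p < m → q-2 ≤ (q-1)*s / q^p % q := by
      intro p hp
      by_contra hcon
      push_neg at hcon
      have h1 := hH' (m-1-p)
      have h2 := hrotbound p hp
      have h3 : ((q-1)*s / q^p % q + 1) * q^(m-1) ≤ (q-2)*q^(m-1) :=
        Nat.mul_le_mul_right _ (by omega)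
      omega
    have hrepr : q^m - 1 - (q-1)*s
        = ∑ p ∈ (range m).filter (fun p => (q-1)*s / q^p % q = q-2), q^p :=
      digit_repr (by omega) hS_qm hdig
    have hPsub : (range m).filter (fun p => (q-1)*s / q^p % q = q-2) ⊆ range m :=
      Finset.filter_subset _ _
    have hPne : ((range m).filter (fun p => (q-1)*s / q^p % q = q-2)).Nonempty := by
      rcases Finset.eq_empty_or_nonempty ((range m).filter (fun p => (q-1)*s / q^p % q = q-2))
        with he | hne
      · exfalso; rw [he, Finset.sum_empty] at hrepr; omega
      · exact hne
    have hSrepr : (q-1)*s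
        = q^m - 1 - ∑ p ∈ (range m).filter (fun p => (q-1)*s / q^p % q = q-2), q^p := by
      omega
    have hminP : ∀ j, ∑ p ∈ (range m).filter (fun p => (q-1)*s / q^p % q = q-2), q^((p+j)%m)
        ≤ ∑ p ∈ (range m).filter (fun p => (q-1)*s / q^p % q = q-2), q^p := by
      intro j
      have h1 := hH' j
      have h2 := rot_sum (show 3 ≤ q by omega) hm1 _ hPsub hPne j
      rw [← hSrepr] at h2
      rw [h2] at h1
      have hspos : 1 ≤ (q-1)*s := by omega
      omega
    have htopP : m-1 ∈ (range m).filter (fun p => (q-1)*s / q^p % q = q-2) := by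
      by_contra hc
      have hd1 : (q-1)*s / q^(m-1) % q = q-1 := by
        have h1 := hdig (m-1) (by omega)
        have h2 : (q-1)*s / q^(m-1) % q < q := Nat.mod_lt _ (by omega)
        have h3 : (q-1)*s / q^(m-1) % q ≠ q-2 := by
          intro he
          exact hc (Finset.mem_filter.2 ⟨Finset.mem_range.2 (by omega), he⟩)
        omega
      have hSlb : (q-1)*q^(m-1) ≤ (q-1)*s := by
        have h1 : (q-1)*s / q^(m-1) % q ≤ (q-1)*s / q^(m-1) := Nat.mod_le _ _
        have h2 : ((q-1)*s / q^(m-1)) * q^(m-1) ≤ (q-1)*s := Nat.div_mul_le_self _ _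
        have h3 : (q-1) * q^(m-1) ≤ ((q-1)*s / q^(m-1)) * q^(m-1) :=
          Nat.mul_le_mul_right _ (by omega)
        omega
      obtain ⟨p0, hp0⟩ := hPne
      have hp0m : p0 < m := Finset.mem_range.1 (hPsub hp0)
      have hd0 : (q-1)*s / q^p0 % q = q-2 := (Finset.mem_filter.1 hp0).2
      have h1 := hH' (m-1-p0)
      have h2 := hrotbound p0 hp0m
      rw [hd0] at h2
      have h3 : (q-2+1) * q^(m-1) = (q-1)*q^(m-1) := by congr 1; omega
      omega
    have hdvdcard : (q-1) ∣ ((range m).filter (fun p => (q-1)*s / q^p % q = q-2)).card := by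
      have hSigP_eq : ∑ p ∈ (range m).filter (fun p => (q-1)*s / q^p % q = q-2), q^p
          = (∑ p ∈ (range m).filter (fun p => (q-1)*s / q^p % q = q-2), (q^p - 1))
            + ((range m).filter (fun p => (q-1)*s / q^p % q = q-2)).card := by
        have h1 : ∀ p ∈ (range m).filter (fun p => (q-1)*s / q^p % q = q-2),
            q^p = (q^p - 1) + 1 := by
          intro p _
          have : 1 ≤ q^p := Nat.one_le_pow _ _ (by omega)
          omega
        rw [Finset.sum_congr rfl h1, Finset.sum_add_distrib, Finset.sum_const,
          smul_eq_mul, mul_one]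
      have h2 : (q-1) ∣ ∑ p ∈ (range m).filter (fun p => (q-1)*s / q^p % q = q-2), (q^p - 1) :=
        Finset.dvd_sum (fun p _ => by simpa using Nat.sub_dvd_pow_sub_pow q 1 p)
      have h3 : (q-1) ∣ ∑ p ∈ (range m).filter (fun p => (q-1)*s / q^p % q = q-2), q^p := by
        rw [← hrepr]
        exact Nat.dvd_sub hdvdT ⟨s, rfl⟩
      rw [show ((range m).filter (fun p => (q-1)*s / q^p % q = q-2)).card
          = (∑ p ∈ (range m).filter (fun p => (q-1)*s / q^p % q = q-2), q^p)
            - ∑ p ∈ (range m).filter (fun p => (q-1)*s / q^p % q = q-2), (q^p - 1) from by omega]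
      exact Nat.dvd_sub h3 h2
    have hfinal := lemB hq4 ha hm _ hPsub htopP hdvdcard hminP
    omega
  -- Part 3a : m is in the set
  · have h1 : q^m ≡ 1 [MOD n] :=
      ((Nat.modEq_iff_dvd' hqm1).2 ⟨q-1, by rw [← hnT]; ring⟩).symm
    calc d * q^m ≡ d * 1 [MOD n] := h1.mul_left d
      _ = d := mul_one d
  -- Part 3b : m is a lower bound
  · intro l hl
    obtain ⟨hl0, hlmod⟩ := hl
    by_contra hc
    push_neg at hc
    have heq : d * q^l % n = d := by
      have h0 : d * q^l % n = d % n := hlmod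
      rw [h0, Nat.mod_eq_of_lt hdn]
    have h1 : (q-1)*(d * q^l % n) = q^m - 1 - ∑ ℓ ∈ Icc 1 (q-1), q^((a*ℓ+l)%m) := by
      rw [hmodmul d l, hD, hrotD l]
    rw [heq] at h1
    have h2 := part1core hq4 ha hm l hl0 (by omega)
    have h3 := hrot_le l
    omega
end
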